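/- arXiv:2209.00085 — 3 statements merged into one kernel-verified Lean document; each statement's English description precedes it below -/
import Mathlib

section
/- Let (a_n)_{n≥1}, (b_n)_{n≥1}, (c_n)_{n≥1} be sequences of nonzero complex numbers such that a_n = b_n·c_n for all n ≥ 1. Assume: (1) (a_n) satisfies a linear recurrence, i.e. there exist d ≥ 1 and complex numbers β_0, …, β_{d−1} such that a_{n+d} = β_{d−1}a_{n+d−1} + ⋯ + β_0 a_n for all sufficiently large n; (2) (b_n) is holonomic; (3) there exist an integer ϖ ≥ 1 and a finite set S of prime numbers such that c_m = c_n whenever m ≡ n (mod ϖ) and |m|_p = |n|_p for every p ∈ S; (4) there is a subring R of ℂ that is finitely generated as a ℤ-algebra and contains c_n for every n ≥ 1. Then the sequence (c_n)_{n≥1} takes on only finitely many values. -/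
open scoped BigOperators
open Filter

/-- The `p`-adic absolute value of the natural number `n`, normalised by `|p|ₚ = 1/p`. -/
noncomputable def padicAbs (p n : ℕ) : ℝ := ((p : ℝ) ^ padicValNat p n)⁻¹

/-- A gcd sequence: `x n = x (gcd n d)` for some `d ≥ 1` and all `n ≥ 1`. -/
def IsGcdSeq {α : Type*} (x : ℕ → α) : Prop :=
  ∃ d : ℕ, 1 ≤ d ∧ ∀ n : ℕ, 1 ≤ n → x n = x (Nat.gcd n d)

/-- A gcd sequence with a period coprime to `p`. -/
def IsGcdSeqCoprime {α : Type*} (x : ℕ → α) (p : ℕ) : Prop :=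
  ∃ d : ℕ, 1 ≤ d ∧ Nat.Coprime d p ∧ ∀ n : ℕ, 1 ≤ n → x n = x (Nat.gcd n d)

/-- No complex eigenvalue of the integer matrix `A` is a root of unity. -/
def NoRootOfUnityEigenvalue {k : ℕ} (A : Matrix (Fin k) (Fin k) ℤ) : Prop :=
  ∀ ξ : ℂ, ((A.map (Int.cast : ℤ → ℂ)).charpoly).IsRoot ξ → ∀ m : ℕ, 1 ≤ m → ξ ^ m ≠ 1

/-- The non-linear-recurrent factor `r n * ∏_{p ∈ S} |n|ₚ^{s p n} p^{-t p n · |n|ₚ⁻¹}`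
of a FAD-sequence. -/
noncomputable def fadFactor (S : Finset ℕ) (r : ℕ → ℝ) (s t : ℕ → ℕ → ℝ) (n : ℕ) : ℝ :=
  r n * ∏ p ∈ S, (padicAbs p n ^ s p n * (p : ℝ) ^ (-(t p n) * (padicAbs p n)⁻¹))

/-- `a` is a FAD-sequence with data `(A, S, c, r, s, t)`. -/
def IsFADWith (a : ℕ → ℤ) {k : ℕ} (A : Matrix (Fin k) (Fin k) ℤ)
    (S : Finset ℕ) (c : ℝ) (r : ℕ → ℝ) (s t : ℕ → ℕ → ℝ) : Prop :=
  NoRootOfUnityEigenvalue A ∧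
  (∀ p ∈ S, Nat.Prime p) ∧
  0 < c ∧
  IsGcdSeq r ∧ (∀ n : ℕ, 1 ≤ n → 0 < r n) ∧
  (∀ p ∈ S, IsGcdSeqCoprime (s p) p ∧ ∀ n : ℕ, 1 ≤ n → 0 ≤ s p n) ∧
  (∀ p ∈ S, IsGcdSeqCoprime (t p) p ∧ ∀ n : ℕ, 1 ≤ n → 0 ≤ t p n) ∧
  ∀ n : ℕ, 1 ≤ n →
    (a n : ℝ) = |((A ^ n - 1).det : ℝ)| * c ^ n * fadFactor S r s t n

/-- The number of fixed points of the `n`-th iterate of `f`, as an integer. -/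
noncomputable def fixCount {X : Type*} (f : X → X) (n : ℕ) : ℤ :=
  (Nat.card (Function.fixedPoints (f^[n])) : ℤ)

/-- The exponential entropy `Λ = c · ∏_{|ξᵢ| > 1} |ξᵢ|` of a FAD-system with data `(A, …, c, …)`,
the product running over the complex eigenvalues of `A` with multiplicity. -/
noncomputable def expEntropy {k : ℕ} (A : Matrix (Fin k) (Fin k) ℤ) (c : ℝ) : ℝ :=
  c * (((A.map (Int.cast : ℤ → ℂ)).charpoly.roots).map fun ξ => max 1 (‖ξ‖)).prod

/-- Hyperbolicity: no complex eigenvalue of `A` has modulus `1`. -/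
def Hyperbolic {k : ℕ} (A : Matrix (Fin k) (Fin k) ℤ) : Prop :=
  ∀ ξ ∈ ((A.map (Int.cast : ℤ → ℂ)).charpoly).roots, ‖ξ‖ ≠ 1

/-- The number `P_ℓ` of periodic orbits of `f` of length `ℓ`
(the set of points of minimal period `ℓ` decomposes into orbits of size `ℓ`). -/
noncomputable def orbitCount {X : Type*} (f : X → X) (l : ℕ) : ℕ :=
  Nat.card {x : X // Function.minimalPeriod f x = l} / l

/-- The orbit-counting function `π_f(N) = ∑_{ℓ ≤ N} P_ℓ`. -/
noncomputable def orbitCountBelow {X : Type*} (f : X → X) (N : ℕ) : ℕ :=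
  ∑ l ∈ Finset.Icc 1 N, orbitCount f l

/-- The set of accumulation points of a real sequence: limits of subsequences. -/
def accPoints (g : ℕ → ℝ) : Set ℝ :=
  {x : ℝ | ∃ φ : ℕ → ℕ, StrictMono φ ∧ Filter.Tendsto (fun i => g (φ i)) Filter.atTop (nhds x)}

/-- `(a n)_{n ≥ 1}` satisfies a linear recurrence for all sufficiently large `n`. -/
def SatisfiesLinearRecurrence (a : ℕ → ℂ) : Prop :=
  ∃ d : ℕ, 1 ≤ d ∧ ∃ β : Fin d → ℂ, ∃ N : ℕ, ∀ n : ℕ, N ≤ n →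
    a (n + d) = ∑ i : Fin d, β i * a (n + (i : ℕ))

/-- `(a n)_{n ≥ 1}` is holonomic: it satisfies a nontrivial recurrence with
polynomial coefficients. -/
def Holonomic (a : ℕ → ℂ) : Prop :=
  ∃ d : ℕ, ∃ q : Fin (d + 1) → Polynomial ℂ, (∃ i, q i ≠ 0) ∧
    ∀ n : ℕ, 1 ≤ n → ∑ i : Fin (d + 1), (q i).eval (n : ℂ) * a (n + (i : ℕ)) = 0

/-- The Taylor coefficients of `ζ(z) = exp (∑_{n ≥ 1} a n zⁿ / n)`, defined via the
logarithmic-derivative recursion `(n+1)·c_{n+1} = ∑_{k=0}^{n} a_{k+1} c_{n-k}`, `c₀ = 1`. -/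
noncomputable def zetaCoeff (a : ℕ → ℂ) : ℕ → ℂ
  | 0 => 1
  | n + 1 =>
    ((n : ℂ) + 1)⁻¹ * ∑ k ∈ Finset.range (n + 1), a (k + 1) * zetaCoeff a (n - k)
  termination_by n => n
  decreasing_by omega

/-- The zeta function `ζ(z) = exp (∑_{n ≥ 1} a n zⁿ / n)` of a sequence,
as a formal power series. -/
noncomputable def zetaPS (a : ℕ → ℂ) : PowerSeries ℂ := PowerSeries.mk (zetaCoeff a)

/-- A formal power series over `ℂ` is the expansion of a rational function of `ℂ(z)`. -/
def IsExpansionOfRationalC (F : PowerSeries ℂ) : Prop :=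
  ∃ P Q : Polynomial ℂ, Q ≠ 0 ∧ F * (Q : PowerSeries ℂ) = (P : PowerSeries ℂ)

/-- A formal power series over `ℂ` is the expansion of a rational function of `ℚ(z)`. -/
def IsExpansionOfRationalOverQ (F : PowerSeries ℂ) : Prop :=
  ∃ P Q : Polynomial ℚ, Q ≠ 0 ∧
    F * ((Q.map (algebraMap ℚ ℂ) : Polynomial ℂ) : PowerSeries ℂ) =
      ((P.map (algebraMap ℚ ℂ) : Polynomial ℂ) : PowerSeries ℂ)

/-- A formal power series is algebraic over `ℂ(z)` (equivalently over `ℂ[z]`):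
it satisfies a nonzero polynomial equation with coefficients in `ℂ[z]`. -/
def AlgebraicOverRatFuncs (F : PowerSeries ℂ) : Prop :=
  ∃ q : Polynomial (Polynomial ℂ), q ≠ 0 ∧
    Polynomial.eval₂ Polynomial.coeToPowerSeries.ringHom F q = 0

/-- An integer sequence is realisable if it is the fixed point count of some
set-theoretic dynamical system. -/
def Realisable (a : ℕ → ℤ) : Prop :=
  ∃ (X : Type) (f : X → X), ∀ n : ℕ, 1 ≤ n →
    (Function.fixedPoints (f^[n])).Finite ∧
    a n = (Nat.card (Function.fixedPoints (f^[n])) : ℤ)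

/-- The oscillating factor `u_n = ∏_{|ξᵢ| = 1} (ξᵢⁿ − 1)` over the eigenvalues of `A`
of modulus one. -/
noncomputable def uSeq {k : ℕ} (A : Matrix (Fin k) (Fin k) ℤ) (n : ℕ) : ℂ :=
  ((((A.map (Int.cast : ℤ → ℂ)).charpoly.roots).filter fun ξ => ‖ξ‖ = 1).map
    fun ξ => ξ ^ n - 1).prod



open Polynomial

noncomputable section HQA

namespace HQA

/-- shift operator on sequences -/
def shiftE : Module.End ℂ (ℕ → ℂ) :=
  { toFun := fun a n => a (n + 1)
    map_add' := by intros; rfl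
    map_smul' := by intros; rfl }

lemma shiftE_pow (k : ℕ) (a : ℕ → ℂ) (n : ℕ) : (shiftE ^ k) a n = a (n + k) := by
  induction k generalizing a n with
  | zero => rfl
  | succ k ih =>
    rw [pow_succ]
    show (shiftE ^ k) (shiftE a) n = a (n + (k+1))
    rw [ih]
    show a (n + k + 1) = _
    ring_nf

/-- apply a polynomial in the shift to a sequence -/
def appP (P : ℂ[X]) (a : ℕ → ℂ) : ℕ → ℂ := aeval shiftE P a

lemma appP_mul (P Q : ℂ[X]) (a : ℕ → ℂ) : appP (P * Q) a = appP P (appP Q a) := by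
  unfold appP
  rw [map_mul]
  rfl

lemma appP_monomial (i : ℕ) (c : ℂ) (a : ℕ → ℂ) (n : ℕ) :
    appP (monomial i c) a n = c * a (n + i) := by
  unfold appP
  rw [aeval_monomial]
  show (((algebraMap ℂ _) c) * shiftE ^ i) a n = _
  show (c • ((shiftE ^ i) a)) n = _
  rw [Pi.smul_apply, shiftE_pow, smul_eq_mul]

lemma appP_add (P Q : ℂ[X]) (a : ℕ → ℂ) (n : ℕ) :
    appP (P + Q) a n = appP P a n + appP Q a n := by
  unfold appP; rw [map_add]; rfl

lemma appP_sub (P Q : ℂ[X]) (a : ℕ → ℂ) (n : ℕ) :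
    appP (P - Q) a n = appP P a n - appP Q a n := by
  unfold appP; rw [map_sub]; rfl

lemma appP_C (c : ℂ) (a : ℕ → ℂ) (n : ℕ) : appP (C c) a n = c * a n := by
  have := appP_monomial 0 c a n
  simpa using this

lemma appP_X (a : ℕ → ℂ) (n : ℕ) : appP X a n = a (n + 1) := by
  have := appP_monomial 1 1 a n
  rw [← monomial_one_one_eq_X]
  simpa using this

lemma appP_X_sub_C (l : ℂ) (a : ℕ → ℂ) (n : ℕ) :
    appP (X - C l) a n = a (n + 1) - l * a n := by
  rw [appP_sub, appP_X, appP_C]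

lemma appP_X_pow (k : ℕ) (a : ℕ → ℂ) (n : ℕ) : appP (X ^ k) a n = a (n + k) := by
  have := appP_monomial k 1 a n
  rw [← monomial_one_right_eq_X_pow]
  simpa using this

lemma appP_C_mul_X_pow (k : ℕ) (c : ℂ) (a : ℕ → ℂ) (n : ℕ) :
    appP (C c * X ^ k) a n = c * a (n + k) := by
  have := appP_monomial k c a n
  rw [← this]
  congr 1
  rw [C_mul_X_pow_eq_monomial]

lemma appP_sum {ι : Type*} (s : Finset ι) (f : ι → ℂ[X]) (a : ℕ → ℂ) (n : ℕ) :
    appP (∑ i ∈ s, f i) a n = ∑ i ∈ s, appP (f i) a n := by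
  unfold appP
  rw [map_sum, LinearMap.sum_apply, Finset.sum_apply]

end HQA
open Polynomial

namespace HQA

/-- discrete "resolvent": solve u • r(X+1) - v • r = p when u ≠ v -/
lemma solve_ne (u v : ℂ) (huv : u ≠ v) :
    ∀ (k : ℕ) (p : ℂ[X]), p.natDegree ≤ k →
      ∃ r : ℂ[X], u • r.comp (X + C 1) - v • r = p := by
  have hbasic : ∀ p : ℂ[X],
      (u • ((C (p.coeff p.natDegree / (u - v)) * X ^ p.natDegree).comp (X + C 1))
        - v • (C (p.coeff p.natDegree / (u - v)) * X ^ p.natDegree)).natDegree ≤ p.natDegree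
      ∧ (u • ((C (p.coeff p.natDegree / (u - v)) * X ^ p.natDegree).comp (X + C 1))
        - v • (C (p.coeff p.natDegree / (u - v)) * X ^ p.natDegree)).coeff p.natDegree
          = p.coeff p.natDegree := by
    intro p
    set nn := p.natDegree
    set cc := p.coeff nn / (u - v) with hcc
    have hcomp : (C cc * X ^ nn).comp (X + C 1) = C cc * (X + C 1) ^ nn := by
      simp [mul_comp, pow_comp]
    constructor
    · rw [hcomp]
      refine (natDegree_sub_le _ _).trans ?_
      simp only [max_le_iff]
      constructor
      · refine (natDegree_smul_le _ _).trans ?_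
        refine (natDegree_mul_le).trans ?_
        have hx1 : (X + (1:ℂ[X])).natDegree = 1 := by
          simpa using natDegree_X_add_C (1:ℂ)
        simp [natDegree_pow, hx1]
      · refine (natDegree_smul_le _ _).trans ?_
        refine (natDegree_mul_le).trans ?_
        simp [natDegree_pow]
    · rw [hcomp]
      rw [coeff_sub, coeff_smul, coeff_smul, coeff_C_mul, coeff_C_mul]
      have hca : (C (1:ℂ)) = 1 := map_one C
      rw [hca, coeff_X_add_one_pow, coeff_X_pow]
      simp only [Nat.choose_self, Nat.cast_one, if_pos rfl, mul_one, smul_eq_mul]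
      have hne : u - v ≠ 0 := sub_ne_zero.mpr huv
      rw [hcc, div_eq_mul_inv]
      simp only [if_true, mul_one]
      have hx : u * (p.coeff nn * (u - v)⁻¹) - v * (p.coeff nn * (u - v)⁻¹)
          = p.coeff nn * ((u - v) * (u - v)⁻¹) := by ring
      rw [hx, mul_inv_cancel₀ hne, mul_one]
  intro k
  induction k with
  | zero =>
    intro p hp
    refine ⟨C (p.coeff p.natDegree / (u - v)) * X ^ p.natDegree, ?_⟩
    obtain ⟨h1, h2⟩ := hbasic p
    set L := u • ((C (p.coeff p.natDegree / (u - v)) * X ^ p.natDegree).comp (X + C 1))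
        - v • (C (p.coeff p.natDegree / (u - v)) * X ^ p.natDegree) with hL
    have hnn : p.natDegree = 0 := Nat.le_zero.mp hp
    have : L = p := by
      apply Polynomial.ext
      intro m
      rcases Nat.eq_zero_or_pos m with rfl | hm
      · rw [hnn] at h2; exact h2
      · have hLm : L.coeff m = 0 := coeff_eq_zero_of_natDegree_lt
          (lt_of_le_of_lt (h1.trans hnn.le) hm)
        have hpm : p.coeff m = 0 := coeff_eq_zero_of_natDegree_lt
          (lt_of_le_of_lt hp hm)
        rw [hLm, hpm]
    exact this
  | succ k ih =>
    intro p hp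
    set nn := p.natDegree with hnn
    set r₀ := C (p.coeff nn / (u - v)) * X ^ nn with hr₀
    set L := u • (r₀.comp (X + C 1)) - v • r₀ with hL
    obtain ⟨h1, h2⟩ := hbasic p
    set q := p - L with hq
    have hqdeg : q.natDegree ≤ k := by
      rcases le_or_gt nn k with h | h
      · refine (natDegree_sub_le _ _).trans ?_
        simp only [max_le_iff]
        exact ⟨h, h1.trans h⟩
      · have hnk : nn = k + 1 := le_antisymm hp h
        rw [natDegree_le_iff_coeff_eq_zero]
        intro m hm
        rcases Nat.lt_or_ge m (k+2) with hm2 | hm2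
        · have : m = k + 1 := by omega
          subst this
          rw [coeff_sub, ← hnk, h2, sub_self]
        · have hpm : p.coeff m = 0 := coeff_eq_zero_of_natDegree_lt (by omega)
          have hLm : L.coeff m = 0 := coeff_eq_zero_of_natDegree_lt
            (lt_of_le_of_lt h1 (by omega))
          rw [coeff_sub, hpm, hLm, sub_self]
    obtain ⟨r₁, hr₁⟩ := ih q hqdeg
    refine ⟨r₀ + r₁, ?_⟩
    rw [add_comp, smul_add, smul_add]
    have : u • r₀.comp (X + C 1) + u • r₁.comp (X + C 1) - (v • r₀ + v • r₁)
        = (u • r₀.comp (X + C 1) - v • r₀) + (u • r₁.comp (X + C 1) - v • r₁) := by ring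
    rw [this, ← hL, hr₁, hq]
    ring

end HQA

namespace HQA

/-- discrete antiderivative: solve r(X+1) - r = p -/
lemma solve_shift :
    ∀ (k : ℕ) (p : ℂ[X]), p.natDegree ≤ k →
      ∃ r : ℂ[X], r.comp (X + C 1) - r = p := by
  have hbasic : ∀ p : ℂ[X],
      ((C (p.coeff p.natDegree / ((p.natDegree : ℂ) + 1)) * X ^ (p.natDegree + 1)).comp (X + C 1)
        - C (p.coeff p.natDegree / ((p.natDegree : ℂ) + 1)) * X ^ (p.natDegree + 1)).natDegree
          ≤ p.natDegree
      ∧ ((C (p.coeff p.natDegree / ((p.natDegree : ℂ) + 1)) * X ^ (p.natDegree + 1)).comp (X + C 1)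
        - C (p.coeff p.natDegree / ((p.natDegree : ℂ) + 1)) * X ^ (p.natDegree + 1)).coeff p.natDegree
          = p.coeff p.natDegree := by
    intro p
    set nn := p.natDegree
    set cc := p.coeff nn / ((nn : ℂ) + 1) with hcc
    have hcomp : (C cc * X ^ (nn+1)).comp (X + C 1) = C cc * (X + C 1) ^ (nn+1) := by
      simp [mul_comp, pow_comp]
    have hca : (C (1:ℂ)) = 1 := map_one C
    have hcoeff : ∀ m : ℕ,
        ((C cc * X ^ (nn+1)).comp (X + C 1) - C cc * X ^ (nn+1)).coeff m
          = cc * ((nn+1).choose m : ℂ) - cc * (if nn + 1 = m then 1 else 0) := by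
      intro m
      rw [hcomp, coeff_sub, coeff_C_mul, coeff_C_mul, hca, coeff_X_add_one_pow, coeff_X_pow]
      congr 1
      congr 1
      simp [eq_comm]
    constructor
    · rw [natDegree_le_iff_coeff_eq_zero]
      intro m hm
      rw [hcoeff m]
      rcases eq_or_lt_of_le (Nat.succ_le_of_lt hm) with h | h
      · have h' : nn + 1 = m := h
        rw [if_pos h', ← h']
        simp
      · rw [if_neg (by omega)]
        rw [Nat.choose_eq_zero_of_lt (by omega)]
        simp
    · rw [hcoeff nn]
      rw [if_neg (by omega), Nat.choose_succ_self_right]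
      have hne : ((nn : ℂ) + 1) ≠ 0 := Nat.cast_add_one_ne_zero nn
      rw [hcc]
      push_cast
      field_simp
      ring
  intro k
  induction k with
  | zero =>
    intro p hp
    refine ⟨C (p.coeff p.natDegree / ((p.natDegree : ℂ) + 1)) * X ^ (p.natDegree + 1), ?_⟩
    obtain ⟨h1, h2⟩ := hbasic p
    have hnn : p.natDegree = 0 := Nat.le_zero.mp hp
    apply Polynomial.ext
    intro m
    rcases Nat.eq_zero_or_pos m with rfl | hm
    · convert h2 using 3 <;> rw [hnn]
    · rw [coeff_eq_zero_of_natDegree_lt (lt_of_le_of_lt (h1.trans hnn.le) hm),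
        coeff_eq_zero_of_natDegree_lt (lt_of_le_of_lt hp hm)]
  | succ k ih =>
    intro p hp
    obtain ⟨h1, h2⟩ := hbasic p
    set nn := p.natDegree with hnn
    set r₀ := C (p.coeff nn / ((nn : ℂ) + 1)) * X ^ (nn + 1) with hr₀
    set L := r₀.comp (X + C 1) - r₀ with hL
    set q := p - L with hq
    have hqdeg : q.natDegree ≤ k := by
      rcases le_or_gt nn k with h | h
      · exact (natDegree_sub_le _ _).trans (by simp only [max_le_iff]; exact ⟨h, h1.trans h⟩)
      · have hnk : nn = k + 1 := le_antisymm hp h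
        rw [natDegree_le_iff_coeff_eq_zero]
        intro m hm
        rcases Nat.lt_or_ge m (k+2) with hm2 | hm2
        · have : m = k + 1 := by omega
          subst this
          rw [coeff_sub, ← hnk, h2, sub_self]
        · rw [coeff_sub, coeff_eq_zero_of_natDegree_lt (by omega),
            coeff_eq_zero_of_natDegree_lt (lt_of_le_of_lt h1 (by omega)), sub_self]
    obtain ⟨r₁, hr₁⟩ := ih q hqdeg
    refine ⟨r₀ + r₁, ?_⟩
    rw [add_comp]
    have : r₀.comp (X + C 1) + r₁.comp (X + C 1) - (r₀ + r₁)
        = (r₀.comp (X + C 1) - r₀) + (r₁.comp (X + C 1) - r₁) := by ring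
    rw [this, ← hL, hr₁, hq]
    ring

end HQA

namespace HQA
open Polynomial

def HasExpPoly (a : ℕ → ℂ) (L : Finset ℂ) (p : ℂ → ℂ[X]) (N : ℕ) : Prop :=
  ∀ n : ℕ, N ≤ n → a n = ∑ l ∈ L, (p l).eval (n : ℂ) * l ^ n

lemma rep_const (P : ℂ[X]) (hdeg : P.natDegree = 0) (hP : P ≠ 0) (a : ℕ → ℂ) (N : ℕ)
    (hann : ∀ n, N ≤ n → appP P a n = 0) :
    ∃ (L : Finset ℂ) (p : ℂ → ℂ[X]) (N' : ℕ), (0:ℂ) ∉ L ∧ HasExpPoly a L p N' := by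
  refine ⟨∅, 0, N, by simp, ?_⟩
  intro n hn
  have hPC : P = C (P.coeff 0) := eq_C_of_natDegree_eq_zero hdeg
  have hc : P.coeff 0 ≠ 0 := by
    intro h
    apply hP
    rw [hPC, h, map_zero]
  have := hann n hn
  rw [hPC, appP_C] at this
  have : a n = 0 := (mul_eq_zero.mp this).resolve_left hc
  simpa using this

theorem rep_of_ann :
    ∀ (k : ℕ) (P : ℂ[X]), P ≠ 0 → P.natDegree ≤ k → ∀ (a : ℕ → ℂ) (N : ℕ),
      (∀ n, N ≤ n → appP P a n = 0) →
      ∃ (L : Finset ℂ) (p : ℂ → ℂ[X]) (N' : ℕ), (0:ℂ) ∉ L ∧ HasExpPoly a L p N' := by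
  intro k
  induction k with
  | zero =>
    intro P hP hdeg a N hann
    exact rep_const P (Nat.le_zero.mp hdeg) hP a N hann
  | succ k ih =>
    intro P hP hdeg a N hann
    rcases Nat.eq_zero_or_pos P.natDegree with h0 | hpos
    · exact rep_const P h0 hP a N hann
    · obtain ⟨l, hl⟩ := Complex.exists_root (natDegree_pos_iff_degree_pos.mp hpos)
      obtain ⟨Q, hPQ⟩ := (dvd_iff_isRoot.mpr hl)
      have hXl : (X - C l) ≠ 0 := X_sub_C_ne_zero l
      have hQ : Q ≠ 0 := by
        intro h; apply hP; rw [hPQ, h, mul_zero]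
      have hdegQ : Q.natDegree ≤ k := by
        have := natDegree_mul hXl hQ
        rw [← hPQ, natDegree_X_sub_C] at this
        omega
      set g := appP (X - C l) a with hg
      have hgann : ∀ n, N ≤ n → appP Q g n = 0 := by
        intro n hn
        rw [hg, ← appP_mul, mul_comm, ← hPQ]
        exact hann n hn
      obtain ⟨Lg, pg, Ng, h0g, hrepg⟩ := ih Q hQ hdegQ g N hgann
      have hgdef : ∀ n : ℕ, g n = a (n+1) - l * a n := fun n => appP_X_sub_C l a n
      rcases eq_or_ne l 0 with rfl | hl0
      · -- a (n+1) = g n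
        refine ⟨Lg, fun m => m⁻¹ • (pg m).comp (X - C 1), Ng + 1, h0g, ?_⟩
        intro n hn
        have h1n : 1 ≤ n := le_trans (Nat.le_add_left 1 Ng) hn
        have han : a n = g (n - 1) := by
          have := hgdef (n - 1)
          rw [Nat.sub_add_cancel h1n] at this
          rw [this]; ring
        rw [han, hrepg (n-1) (by omega)]
        apply Finset.sum_congr rfl
        intro m hm
        have hm0 : m ≠ 0 := fun h => h0g (h ▸ hm)
        rw [eval_smul, eval_comp]
        simp only [eval_sub, eval_X, eval_C, smul_eq_mul]
        have hcast : ((n:ℂ) - 1) = ((n - 1 : ℕ) : ℂ) := by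
          rw [Nat.cast_sub h1n]; simp
        rw [hcast]
        have hpow : m ^ n = m ^ (n - 1) * m := by
          conv_lhs => rw [show n = (n-1) + 1 by omega]
          rw [pow_succ]
        rw [hpow]
        field_simp
      · -- particular solution
        have Hsol : ∀ m ∈ Lg, ∃ r : ℂ[X], ∀ n : ℕ,
            r.eval ((n:ℂ)+1) * m^(n+1) - l * (r.eval (n:ℂ) * m^n) = (pg m).eval (n:ℂ) * m^n := by
          intro m hm
          have hm0 : m ≠ 0 := fun h => h0g (h ▸ hm)
          rcases eq_or_ne m l with hml | hml
          · subst hml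
            obtain ⟨r, hr⟩ := solve_shift (m⁻¹ • pg m).natDegree (m⁻¹ • pg m) le_rfl
            refine ⟨r, fun n => ?_⟩
            have := congrArg (fun q : ℂ[X] => q.eval ((n:ℂ))) hr
            simp only [eval_sub, eval_comp, eval_add, eval_X, eval_C, eval_smul,
              smul_eq_mul] at this
            have hrn : r.eval ((n:ℂ)+1) - r.eval (n:ℂ) = m⁻¹ * (pg m).eval (n:ℂ) := this
            have hinv : m⁻¹ * m = 1 := inv_mul_cancel₀ hm0
            linear_combination (m:ℂ)^(n+1) * hrn + ((pg m).eval (n:ℂ) * m^n) * hinv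
          · obtain ⟨r, hr⟩ := solve_ne m l hml (pg m).natDegree (pg m) le_rfl
            refine ⟨r, fun n => ?_⟩
            have := congrArg (fun q : ℂ[X] => q.eval ((n:ℂ))) hr
            simp only [eval_sub, eval_comp, eval_add, eval_X, eval_C, eval_smul,
              smul_eq_mul] at this
            have : (m * r.eval ((n:ℂ)+1) - l * r.eval (n:ℂ)) * m^n = (pg m).eval (n:ℂ) * m^n := by
              rw [this]
            rw [pow_succ]
            linear_combination this
        classical
        set r : ℂ → ℂ[X] := fun m => if h : m ∈ Lg then Classical.choose (Hsol m h) else 0 with hrdef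
        have hrprop : ∀ m ∈ Lg, ∀ n : ℕ,
            (r m).eval ((n:ℂ)+1) * m^(n+1) - l * ((r m).eval (n:ℂ) * m^n) = (pg m).eval (n:ℂ) * m^n := by
          intro m hm n
          rw [hrdef]
          simp only [dif_pos hm]
          exact Classical.choose_spec (Hsol m hm) n
        set x : ℕ → ℂ := fun n => ∑ m ∈ Lg, (r m).eval (n:ℂ) * m^n with hxdef
        have hx : ∀ n, Ng ≤ n → x (n+1) - l * x n = g n := by
          intro n hn
          rw [hrepg n hn, hxdef]
          simp only
          rw [Finset.mul_sum, ← Finset.sum_sub_distrib]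
          apply Finset.sum_congr rfl
          intro m hm
          have := hrprop m hm n
          push_cast
          push_cast at this
          linear_combination this
        set c₀ := (a Ng - x Ng) * (l ^ Ng)⁻¹ with hc₀
        have hh : ∀ n, Ng ≤ n → a n - x n = c₀ * l ^ n := by
          intro n hn
          induction n, hn using Nat.le_induction with
          | base =>
            rw [hc₀]
            field_simp
          | succ n hn ihn =>
            have ha' : a (n+1) = l * a n + g n := by
              have := hgdef n; linear_combination -this
            have hx' : x (n+1) = l * x n + g n := by
              have := hx n hn; linear_combination this
            rw [ha', hx', pow_succ]
            linear_combination l * ihn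
        refine ⟨insert l Lg, fun m => (if m ∈ Lg then r m else 0) + (if m = l then C c₀ else 0),
          Ng, by simp [hl0, Ne.symm]; exact fun h => h0g h, ?_⟩
        intro n hn
        have hsum : ∑ m ∈ insert l Lg,
            (((if m ∈ Lg then r m else 0) + (if m = l then C c₀ else 0)).eval (n:ℂ)) * m ^ n
            = (∑ m ∈ insert l Lg, (if m ∈ Lg then r m else 0).eval (n:ℂ) * m^n)
              + (∑ m ∈ insert l Lg, (if m = l then C c₀ else 0).eval (n:ℂ) * m^n) := by
          rw [← Finset.sum_add_distrib]
          apply Finset.sum_congr rfl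
          intro m hm
          rw [eval_add]
          ring
        rw [hsum]
        have hsum1 : (∑ m ∈ insert l Lg, (if m ∈ Lg then r m else 0).eval (n:ℂ) * m^n) = x n := by
          rcases Finset.mem_insert.mp (Finset.mem_insert_self l Lg) with _ | _
          all_goals {
            by_cases hlin : l ∈ Lg
            · rw [Finset.insert_eq_self.mpr hlin]
              apply Finset.sum_congr rfl
              intro m hm
              rw [if_pos hm]
            · rw [Finset.sum_insert hlin, if_neg hlin]
              simp only [eval_zero, zero_mul, zero_add]
              apply Finset.sum_congr rfl
              intro m hm
              rw [if_pos hm]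
          }
        have hsum2 : (∑ m ∈ insert l Lg, (if m = l then C c₀ else 0).eval (n:ℂ) * m^n) = c₀ * l^n := by
          rw [Finset.sum_eq_single_of_mem l (Finset.mem_insert_self l Lg)]
          · rw [if_pos rfl, eval_C]
          · intro m _ hml
            rw [if_neg hml, eval_zero, zero_mul]
        rw [hsum1, hsum2]
        have := hh n hn
        linear_combination this

end HQA

namespace HQA
open Polynomial

def Tm (mu : ℂ) (p : ℂ → ℂ[X]) : ℂ → ℂ[X] :=
  fun l => l • (p l).comp (X + C 1) - mu • p l

lemma Tm_sum_vanish (s : Finset ℂ) (mu : ℂ) (p : ℂ → ℂ[X]) (N : ℕ)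
    (hvan : ∀ t : ℕ, N ≤ t → ∑ l ∈ s, (p l).eval (t:ℂ) * l ^ t = 0) :
    ∀ t : ℕ, N ≤ t → ∑ l ∈ s, ((Tm mu p l).eval (t:ℂ)) * l ^ t = 0 := by
  intro t ht
  have h1 := hvan t ht
  have h2 := hvan (t+1) (le_trans ht (Nat.le_succ t))
  have hterm : ∀ l ∈ s, (Tm mu p l).eval (t:ℂ) * l ^ t
      = (p l).eval ((t+1:ℕ):ℂ) * l ^ (t+1) - mu * ((p l).eval (t:ℂ) * l ^ t) := by
    intro l _
    unfold Tm
    rw [eval_sub, eval_smul, eval_smul, eval_comp]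
    simp only [eval_add, eval_X, eval_C, smul_eq_mul]
    push_cast
    ring
  rw [Finset.sum_congr rfl hterm, Finset.sum_sub_distrib]
  rw [h2]
  rw [← Finset.mul_sum, h1]
  ring

lemma Tm_zero_slot (mu : ℂ) (p : ℂ → ℂ[X]) (l : ℂ) (h : p l = 0) : Tm mu p l = 0 := by
  unfold Tm; rw [h]; simp

lemma comp_X_add_one_natDegree (q : ℂ[X]) : (q.comp (X + C 1)).natDegree = q.natDegree := by
  rw [natDegree_comp, natDegree_X_add_C, mul_one]

lemma comp_X_add_one_leadingCoeff (q : ℂ[X]) :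
    (q.comp (X + C 1)).leadingCoeff = q.leadingCoeff := by
  rcases eq_or_ne q 0 with rfl | hq
  · simp
  · rw [leadingCoeff_comp (by rw [natDegree_X_add_C]; norm_num)]
    rw [leadingCoeff_X_add_C]
    simp

lemma Tm_ne_slot (mu : ℂ) (p : ℂ → ℂ[X]) (l : ℂ) (hml : l ≠ mu) :
    Tm mu p l = 0 ↔ p l = 0 := by
  constructor
  · intro h
    by_contra hp
    have hco : (Tm mu p l).coeff (p l).natDegree = (l - mu) * (p l).leadingCoeff := by
      unfold Tm
      rw [coeff_sub, coeff_smul, coeff_smul]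
      have h1 : ((p l).comp (X + C 1)).coeff (p l).natDegree = (p l).leadingCoeff := by
        have := comp_X_add_one_leadingCoeff (p l)
        rw [leadingCoeff, comp_X_add_one_natDegree] at this
        exact this
      rw [h1]
      rw [leadingCoeff]
      simp only [smul_eq_mul]
      ring
    rw [h] at hco
    simp only [coeff_zero] at hco
    have : (l - mu) * (p l).leadingCoeff ≠ 0 :=
      mul_ne_zero (sub_ne_zero.mpr hml) (leadingCoeff_ne_zero.mpr hp)
    exact this hco.symm
  · intro h; exact Tm_zero_slot mu p l h

lemma Tm_self_slot (mu : ℂ) (p : ℂ → ℂ[X]) (h : p mu ≠ 0) :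
    Tm mu p mu = 0 ∨ (Tm mu p mu).natDegree < (p mu).natDegree := by
  have hTm : Tm mu p mu = mu • ((p mu).comp (X + C 1) - p mu) := by
    unfold Tm; rw [smul_sub]
  rcases eq_or_ne ((p mu).comp (X + C 1) - p mu) 0 with hD | hD
  · left; rw [hTm, hD, smul_zero]
  · right
    have hcomp_ne : (p mu).comp (X + C 1) ≠ 0 := by
      intro hc
      apply h
      have := comp_X_add_one_leadingCoeff (p mu)
      rw [hc] at this
      simp only [leadingCoeff_zero] at this
      exact leadingCoeff_eq_zero.mp this.symm
    have hdeg : ((p mu).comp (X + C 1)).degree = (p mu).degree := by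
      rw [degree_eq_natDegree hcomp_ne, degree_eq_natDegree h, comp_X_add_one_natDegree]
    have hlt : ((p mu).comp (X + C 1) - p mu).degree < (p mu).degree := by
      have := degree_sub_lt hdeg hcomp_ne (comp_X_add_one_leadingCoeff (p mu))
      rw [hdeg] at this
      exact this
    have hlt' : ((p mu).comp (X + C 1) - p mu).natDegree < (p mu).natDegree :=
      natDegree_lt_natDegree hD hlt
    calc (Tm mu p mu).natDegree ≤ ((p mu).comp (X + C 1) - p mu).natDegree := by
          rw [hTm]; exact natDegree_smul_le _ _
      _ < (p mu).natDegree := hlt'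

lemma kill_one (s : Finset ℂ) (mu : ℂ) :
    ∀ (D : ℕ) (p : ℂ → ℂ[X]), (p mu).natDegree ≤ D → ∀ (N : ℕ),
      (∀ t : ℕ, N ≤ t → ∑ l ∈ s, (p l).eval (t:ℂ) * l ^ t = 0) →
      ∃ (p' : ℂ → ℂ[X]) (N' : ℕ),
        (∀ t : ℕ, N' ≤ t → ∑ l ∈ s, (p' l).eval (t:ℂ) * l ^ t = 0) ∧ p' mu = 0 ∧
        ∀ l, l ≠ mu → (p' l = 0 ↔ p l = 0) := by
  intro D
  induction D with
  | zero =>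
    intro p hdeg N hvan
    rcases eq_or_ne (p mu) 0 with h | h
    · exact ⟨p, N, hvan, h, fun l _ => Iff.rfl⟩
    · rcases Tm_self_slot mu p h with h0 | hlt
      · exact ⟨Tm mu p, N, Tm_sum_vanish s mu p N hvan, h0,
          fun l hl => Tm_ne_slot mu p l hl⟩
      · omega
  | succ D ih =>
    intro p hdeg N hvan
    rcases eq_or_ne (p mu) 0 with h | h
    · exact ⟨p, N, hvan, h, fun l _ => Iff.rfl⟩
    · rcases Tm_self_slot mu p h with h0 | hlt
      · exact ⟨Tm mu p, N, Tm_sum_vanish s mu p N hvan, h0,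
          fun l hl => Tm_ne_slot mu p l hl⟩
      · obtain ⟨p', N', hvan', hz', hiff'⟩ := ih (Tm mu p) (by omega) N
          (Tm_sum_vanish s mu p N hvan)
        exact ⟨p', N', hvan', hz',
          fun l hl => (hiff' l hl).trans (Tm_ne_slot mu p l hl)⟩

lemma kill_many (s : Finset ℂ) :
    ∀ (K : Finset ℂ) (p : ℂ → ℂ[X]) (N : ℕ),
      (∀ t : ℕ, N ≤ t → ∑ l ∈ s, (p l).eval (t:ℂ) * l ^ t = 0) →
      ∃ (p' : ℂ → ℂ[X]) (N' : ℕ),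
        (∀ t : ℕ, N' ≤ t → ∑ l ∈ s, (p' l).eval (t:ℂ) * l ^ t = 0) ∧
        (∀ mu ∈ K, p' mu = 0) ∧ ∀ l, l ∉ K → (p' l = 0 ↔ p l = 0) := by
  intro K
  induction K using Finset.induction_on with
  | empty =>
    intro p N hvan
    exact ⟨p, N, hvan, fun mu hmu => absurd hmu (Finset.notMem_empty mu),
      fun l _ => Iff.rfl⟩
  | @insert mu K hmu ihK =>
    intro p N hvan
    obtain ⟨p₁, N₁, hvan₁, hz₁, hiff₁⟩ := ihK p N hvan
    obtain ⟨p₂, N₂, hvan₂, hz₂, hiff₂⟩ := kill_one s mu (p₁ mu).natDegree p₁ le_rfl N₁ hvan₁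
    refine ⟨p₂, N₂, hvan₂, ?_, ?_⟩
    · intro m hm
      rcases Finset.mem_insert.mp hm with rfl | hm'
      · exact hz₂
      · have hne : m ≠ mu := fun h => hmu (h ▸ hm')
        exact (hiff₂ m hne).mpr (hz₁ m hm')
    · intro l hl
      have h1 : l ≠ mu := fun h => hl (h ▸ Finset.mem_insert_self mu K)
      have h2 : l ∉ K := fun h => hl (Finset.mem_insert_of_mem h)
      exact (hiff₂ l h1).trans (hiff₁ l h2)

theorem uniq_exp (s : Finset ℂ) (h0 : (0:ℂ) ∉ s) (p : ℂ → ℂ[X]) (N : ℕ)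
    (hvan : ∀ t : ℕ, N ≤ t → ∑ l ∈ s, (p l).eval (t:ℂ) * l ^ t = 0) :
    ∀ l ∈ s, p l = 0 := by
  intro l0 hl0
  obtain ⟨p', N', hvan', hz', hiff'⟩ := kill_many s (s.erase l0) p N hvan
  have hsingle : ∀ t : ℕ, N' ≤ t → (p' l0).eval (t:ℂ) * l0 ^ t = 0 := by
    intro t ht
    have := hvan' t ht
    rwa [Finset.sum_eq_single_of_mem l0 hl0] at this
    intro l hl hne
    rw [hz' l (Finset.mem_erase.mpr ⟨hne, hl⟩), eval_zero, zero_mul]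
  have hl0ne : l0 ≠ 0 := fun h => h0 (h ▸ hl0)
  have heval : ∀ t : ℕ, N' ≤ t → (p' l0).eval (t:ℂ) = 0 := by
    intro t ht
    have := hsingle t ht
    exact (mul_eq_zero.mp this).resolve_right (pow_ne_zero t hl0ne)
  have hzero : p' l0 = 0 := by
    apply Polynomial.eq_zero_of_infinite_isRoot
    apply Set.infinite_of_injective_forall_mem
      (f := fun t : ℕ => ((N' + t : ℕ) : ℂ))
    · intro t t' htt
      have : (N' + t : ℕ) = (N' + t' : ℕ) := Nat.cast_injective htt
      omega
    · intro t
      exact heval (N' + t) (Nat.le_add_right N' t)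
  have : l0 ∉ s.erase l0 := fun h => (Finset.mem_erase.mp h).1 rfl
  exact (hiff' l0 this).mp hzero

end HQA

namespace HQA
open Polynomial

lemma exists_W (L : Finset ℂ) :
    ∃ W : ℕ, 1 ≤ W ∧ ∀ l ∈ L, ∀ l' ∈ L, ∀ m : ℕ, 1 ≤ m → l ^ m = l' ^ m → l ^ W = l' ^ W := by
  classical
  refine ⟨∏ z ∈ L ×ˢ L, (if IsOfFinOrder (z.1 / z.2) then orderOf (z.1 / z.2) else 1), ?_, ?_⟩
  · apply Nat.one_le_iff_ne_zero.mpr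
    apply Finset.prod_ne_zero_iff.mpr
    intro z _
    split_ifs with h
    · have := h.orderOf_pos; omega
    · exact one_ne_zero
  · intro l hl l' hl' m hm hpow
    rcases eq_or_ne l' 0 with rfl | hl'0
    · have : l = 0 := by
        have := hpow
        rw [zero_pow (by omega)] at this
        exact pow_eq_zero_iff (by omega) |>.mp this
      rw [this]
    have hdiv : (l / l') ^ m = 1 := by
      rw [div_pow, hpow, div_self (pow_ne_zero m hl'0)]
    have hfin : IsOfFinOrder (l / l') := isOfFinOrder_iff_pow_eq_one.mpr ⟨m, by omega, hdiv⟩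
    have hmem : (l, l') ∈ L ×ˢ L := Finset.mem_product.mpr ⟨hl, hl'⟩
    have hdvd : orderOf (l / l') ∣ ∏ z ∈ L ×ˢ L,
        (if IsOfFinOrder (z.1 / z.2) then orderOf (z.1 / z.2) else 1) := by
      have : (if IsOfFinOrder ((l, l').1 / (l, l').2) then orderOf ((l, l').1 / (l, l').2) else 1)
          = orderOf (l / l') := by simp [hfin]
      rw [← this]
      exact Finset.dvd_prod_of_mem _ hmem
    have hone : (l / l') ^ (∏ z ∈ L ×ˢ L,
        (if IsOfFinOrder (z.1 / z.2) then orderOf (z.1 / z.2) else 1)) = 1 :=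
      orderOf_dvd_iff_pow_eq_one.mp hdvd
    rw [div_pow] at hone
    field_simp at hone
    exact hone

theorem vanish_on_class
    (L : Finset ℂ) (h0 : (0:ℂ) ∉ L) (p : ℂ → ℂ[X]) (N : ℕ) (f : ℕ → ℂ)
    (hf : HasExpPoly f L p N)
    (W : ℕ) (hW : 1 ≤ W)
    (hWp : ∀ l ∈ L, ∀ l' ∈ L, ∀ m : ℕ, 1 ≤ m → l ^ m = l' ^ m → l ^ W = l' ^ W)
    (r M : ℕ) (hWM : W ∣ M) (hM : 1 ≤ M)
    (hvan : ∀ k : ℕ, f (r + M * k) = 0) :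
    ∀ n : ℕ, N ≤ n → n % W = r % W → f n = 0 := by
  classical
  set B : Finset ℂ := L.image (fun l => l ^ M) with hB
  set q : ℂ → ℂ[X] := fun κ =>
    ∑ l ∈ L.filter (fun l => l ^ M = κ), C (l ^ r) * ((p l).comp (C (r:ℂ) + C (M:ℂ) * X))
    with hq
  have h0B : (0:ℂ) ∉ B := by
    intro hmem
    obtain ⟨l, hl, hl0⟩ := Finset.mem_image.mp hmem
    have : l ≠ 0 := fun h => h0 (h ▸ hl)
    exact (pow_ne_zero M this) hl0
  have hqeval : ∀ (κ : ℂ) (z : ℂ), (q κ).eval z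
      = ∑ l ∈ L.filter (fun l => l ^ M = κ), l ^ r * (p l).eval ((r:ℂ) + (M:ℂ) * z) := by
    intro κ z
    rw [hq]
    rw [eval_finset_sum]
    apply Finset.sum_congr rfl
    intro l _
    rw [eval_mul, eval_C, eval_comp]
    simp
  have hvan' : ∀ t : ℕ, N ≤ t → ∑ κ ∈ B, (q κ).eval (t:ℂ) * κ ^ t = 0 := by
    intro t ht
    have hfib : ∑ κ ∈ B, (∑ l ∈ L.filter (fun l => l ^ M = κ),
        (p l).eval ((r + M * t : ℕ) : ℂ) * l ^ (r + M * t)) = 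
        ∑ l ∈ L, (p l).eval ((r + M * t : ℕ) : ℂ) * l ^ (r + M * t) := by
      apply Finset.sum_fiberwise_of_maps_to
      intro l hl
      exact Finset.mem_image_of_mem _ hl
    have hterm : ∀ κ ∈ B, (q κ).eval (t:ℂ) * κ ^ t
        = ∑ l ∈ L.filter (fun l => l ^ M = κ),
            (p l).eval ((r + M * t : ℕ) : ℂ) * l ^ (r + M * t) := by
      intro κ hκ
      rw [hqeval, Finset.sum_mul]
      apply Finset.sum_congr rfl
      intro l hlf
      have hlκ : l ^ M = κ := (Finset.mem_filter.mp hlf).2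
      have hcast : ((r + M * t : ℕ) : ℂ) = (r:ℂ) + (M:ℂ) * (t:ℂ) := by push_cast; ring
      rw [hcast, ← hlκ]
      rw [pow_add, pow_mul]
      ring
    rw [Finset.sum_congr rfl hterm, hfib]
    have : f (r + M * t) = ∑ l ∈ L, (p l).eval ((r + M * t : ℕ) : ℂ) * l ^ (r + M * t) :=
      hf (r + M * t) (le_trans ht (by nlinarith [Nat.le_mul_of_pos_left t hM]))
    rw [← this]
    exact hvan t
  have hqzero : ∀ κ ∈ B, q κ = 0 := uniq_exp B h0B q N hvan'
  -- now conclude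
  intro n hn hmod
  have hMC : (M:ℂ) ≠ 0 := Nat.cast_ne_zero.mpr (by omega)
  rw [hf n hn]
  have hfib2 : ∑ κ ∈ B, (∑ l ∈ L.filter (fun l => l ^ M = κ),
      (p l).eval (n : ℂ) * l ^ n) = ∑ l ∈ L, (p l).eval (n : ℂ) * l ^ n := by
    apply Finset.sum_fiberwise_of_maps_to
    intro l hl
    exact Finset.mem_image_of_mem _ hl
  rw [← hfib2]
  apply Finset.sum_eq_zero
  intro κ hκ
  -- the class sum vanishes
  obtain ⟨l₀, hl₀L, hl₀κ⟩ := Finset.mem_image.mp hκ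
  have hl₀f : l₀ ∈ L.filter (fun l => l ^ M = κ) := Finset.mem_filter.mpr ⟨hl₀L, hl₀κ⟩
  have hl₀0 : l₀ ≠ 0 := fun h => h0 (h ▸ hl₀L)
  -- evaluate q κ at ((n:ℂ) - r)/M
  have hqz := hqzero κ hκ
  have heval0 : ∑ l ∈ L.filter (fun l => l ^ M = κ), l ^ r * (p l).eval ((n:ℂ)) = 0 := by
    have := congrArg (fun g : ℂ[X] => g.eval (((n:ℂ) - (r:ℂ)) / (M:ℂ))) hqz
    simp only [eval_zero] at this
    rw [hqeval] at this
    have harg : (r:ℂ) + (M:ℂ) * (((n:ℂ) - (r:ℂ)) / (M:ℂ)) = (n:ℂ) := by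
      field_simp
      ring
    rw [harg] at this
    exact this
  -- exchange powers within the class
  have hswap : ∀ l ∈ L.filter (fun l => l ^ M = κ), l ^ n * l₀ ^ r = l₀ ^ n * l ^ r := by
    intro l hlf
    obtain ⟨hlL, hlκ⟩ := Finset.mem_filter.mp hlf
    have hWeq : l ^ W = l₀ ^ W := hWp l hlL l₀ hl₀L M hM (hlκ.trans hl₀κ.symm)
    have hnrep : n = W * (n / W) + n % W := (Nat.div_add_mod n W).symm
    have hrrep : r = W * (r / W) + r % W := (Nat.div_add_mod r W).symm
    calc l ^ n * l₀ ^ r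
        = ((l^W)^(n/W) * l^(n % W)) * ((l₀^W)^(r/W) * l₀^(r % W)) := by
          rw [← pow_mul, ← pow_add, ← pow_mul, ← pow_add, ← hnrep, ← hrrep]
      _ = ((l₀^W)^(n/W) * l₀^(n % W)) * ((l^W)^(r/W) * l^(r % W)) := by
          rw [hWeq, hmod]
          ring
      _ = l₀ ^ n * l ^ r := by
          rw [← pow_mul, ← pow_add, ← pow_mul, ← pow_add, ← hnrep, ← hrrep]
  -- multiply class sum by l₀ ^ r
  have hkey : (∑ l ∈ L.filter (fun l => l ^ M = κ), (p l).eval (n : ℂ) * l ^ n) * l₀ ^ r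
      = (∑ l ∈ L.filter (fun l => l ^ M = κ), l ^ r * (p l).eval ((n:ℂ))) * l₀ ^ n := by
    rw [Finset.sum_mul, Finset.sum_mul]
    apply Finset.sum_congr rfl
    intro l hlf
    have := hswap l hlf
    calc (p l).eval (n:ℂ) * l ^ n * l₀ ^ r = (p l).eval (n:ℂ) * (l ^ n * l₀ ^ r) := by ring
      _ = (p l).eval (n:ℂ) * (l₀ ^ n * l ^ r) := by rw [this]
      _ = l ^ r * (p l).eval (n:ℂ) * l₀ ^ n := by ring
  rw [heval0, zero_mul] at hkey
  have := mul_eq_zero.mp hkey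
  rcases this with h | h
  · exact h
  · exact absurd h (pow_ne_zero r hl₀0)

end HQA

namespace HQA

lemma padic_exact (p : ℕ) (hp : p.Prime) {x : ℕ} (hx : x ≠ 0) {e : ℕ}
    (h1 : p ^ e ∣ x) (h2 : ¬ p ^ (e+1) ∣ x) : padicValNat p x = e := by
  have hf := Nat.factorization_def x hp
  have hle : e ≤ x.factorization p :=
    (Nat.Prime.pow_dvd_iff_le_factorization hp hx).mp h1
  have hlt : ¬ (e + 1 ≤ x.factorization p) := fun h =>
    h2 ((Nat.Prime.pow_dvd_iff_le_factorization hp hx).mpr h)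
  omega

lemma padic_self_dvd (p : ℕ) (hp : p.Prime) {x : ℕ} (hx : x ≠ 0) :
    p ^ (padicValNat p x) ∣ x ∧ ¬ p ^ (padicValNat p x + 1) ∣ x := by
  haveI : Fact p.Prime := ⟨hp⟩
  exact ⟨pow_padicValNat_dvd, pow_succ_padicValNat_not_dvd hx⟩

lemma padic_add (p : ℕ) (hp : p.Prime) {A B e : ℕ} (hA : A ≠ 0)
    (h1 : p ^ e ∣ A) (h2 : ¬ p ^ (e+1) ∣ A) (hB : p ^ (e+1) ∣ B) :
    padicValNat p (A + B) = e := by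
  refine padic_exact p hp (by omega) ?_ ?_
  · exact dvd_add h1 (dvd_trans (pow_dvd_pow p (Nat.le_succ e)) hB)
  · intro h
    apply h2
    have := Nat.dvd_sub h hB
    rwa [Nat.add_sub_cancel] at this

lemma padic_stable (p : ℕ) (hp : p.Prime) {A B : ℕ} (hA : A ≠ 0)
    (hB : p ^ (padicValNat p A + 1) ∣ B) :
    padicValNat p (A + B) = padicValNat p A := by
  obtain ⟨h1, h2⟩ := padic_self_dvd p hp hA
  exact padic_add p hp hA h1 h2 hB

lemma padic_perturb (p : ℕ) (hp : p.Prime) (x δ : ℕ) (hδ1 : 1 ≤ δ) (hδx : δ < x)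
    (hvv : padicValNat p δ < padicValNat p x) :
    padicValNat p (x + δ) = padicValNat p δ ∧ padicValNat p (x - δ) = padicValNat p δ := by
  obtain ⟨hδ1d, hδ2d⟩ := padic_self_dvd p hp (show δ ≠ 0 by omega)
  obtain ⟨hx1d, _⟩ := padic_self_dvd p hp (show x ≠ 0 by omega)
  have hsucc : p ^ (padicValNat p δ + 1) ∣ x :=
    dvd_trans (pow_dvd_pow p (by omega)) hx1d
  constructor
  · rw [Nat.add_comm]
    exact padic_add p hp (by omega) hδ1d hδ2d hsucc
  · refine padic_exact p hp (by omega) ?_ ?_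
    · exact Nat.dvd_sub (dvd_trans (pow_dvd_pow p hvv.le) hx1d) hδ1d
    · intro h
      apply hδ2d
      have h2 := Nat.dvd_sub hsucc h
      rwa [show x - (x - δ) = δ by omega] at h2

/-- choose a good residue avoiding high divisibility at the other indices -/
lemma avoid (p : ℕ) (hp : p.Prime) (d i0 r₀ m₀ : ℕ) (hm₀ : m₀ ≠ 0) (hi0 : i0 ≤ d) :
    ∃ sp : ℕ, ∀ i ≤ d, i ≠ i0 →
      ¬ (p ^ (padicValNat p m₀ + (d+1)) ∣ (r₀ + i + sp * m₀)) := by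
  classical
  set e' := padicValNat p m₀ with he'
  set T := e' + (d+1) with hT
  obtain ⟨hd1, hd2⟩ := padic_self_dvd p hp hm₀
  obtain ⟨u, hu⟩ := hd1
  have hnd : ¬ p ∣ u := by
    intro hdvd
    apply hd2
    obtain ⟨w, hw⟩ := hdvd
    refine ⟨w, ?_⟩
    conv_lhs => rw [hu, hw]
    rw [pow_succ]
    ring
  have hpu : Nat.Coprime (p^(d+1)) u :=
    Nat.Coprime.pow_left _ ((Nat.Prime.coprime_iff_not_dvd hp).mpr hnd)
  set badF := ((Finset.range (d+1)).erase i0).biUnion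
    (fun i => (Finset.range (p^(d+1))).filter (fun s => p ^ T ∣ (r₀ + i + s * m₀))) with hbad
  have hcard1 : ∀ i, ((Finset.range (p^(d+1))).filter
      (fun s => p ^ T ∣ (r₀ + i + s * m₀))).card ≤ 1 := by
    intro i
    apply Finset.card_le_one.mpr
    intro s hs s' hs'
    obtain ⟨hsr, hsd⟩ := Finset.mem_filter.mp hs
    obtain ⟨hsr', hsd'⟩ := Finset.mem_filter.mp hs'
    have hrange := Finset.mem_range.mp hsr
    have hrange' := Finset.mem_range.mp hsr'
    have key : ∀ a b : ℕ, a < p^(d+1) → b < p^(d+1) → a ≤ b →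
        p ^ T ∣ (r₀ + i + a * m₀) → p ^ T ∣ (r₀ + i + b * m₀) → a = b := by
      intro a b ha hb hab hda hdb
      have hsub : (r₀ + i + b * m₀) - (r₀ + i + a * m₀) = (b - a) * m₀ := by
        rw [Nat.sub_mul]
        omega
      have hdvd : p ^ T ∣ (b - a) * m₀ := by
        rw [← hsub]
        exact Nat.dvd_sub hdb hda
      rw [hu] at hdvd
      have hT' : p ^ T = p ^ e' * p ^ (d+1) := by rw [hT, pow_add]
      rw [hT'] at hdvd
      have hre : (b - a) * (p ^ e' * u) = p ^ e' * ((b-a) * u) := by ring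
      rw [hre] at hdvd
      have hd3 : p ^ (d+1) ∣ (b - a) * u := by
        have hpe : 0 < p ^ e' := pow_pos hp.pos e'
        exact (Nat.mul_dvd_mul_iff_left hpe).mp hdvd
      have hd4 : p ^ (d+1) ∣ (b - a) := hpu.dvd_of_dvd_mul_right hd3
      rcases Nat.eq_zero_or_pos (b - a) with h0 | hpos
      · omega
      · have := Nat.le_of_dvd hpos hd4
        omega
    rcases le_total s s' with h | h
    · exact key s s' hrange hrange' h hsd hsd'
    · exact (key s' s hrange' hrange h hsd' hsd).symm
  have hcardbad : badF.card ≤ d := by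
    calc badF.card ≤ ∑ i ∈ (Finset.range (d+1)).erase i0,
        ((Finset.range (p^(d+1))).filter (fun s => p ^ T ∣ (r₀ + i + s * m₀))).card :=
          Finset.card_biUnion_le
      _ ≤ ∑ _i ∈ (Finset.range (d+1)).erase i0, 1 :=
          Finset.sum_le_sum (fun i _ => hcard1 i)
      _ ≤ d := by
          rw [Finset.sum_const, smul_eq_mul, mul_one]
          have hmem : i0 ∈ Finset.range (d+1) := Finset.mem_range.mpr (by omega)
          have := Finset.card_erase_of_mem hmem
          have hcr : (Finset.range (d+1)).card = d + 1 := Finset.card_range (d+1)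
          omega
  have hlt : badF.card < (Finset.range (p^(d+1))).card := by
    rw [Finset.card_range]
    have h2d : d < 2 ^ d := Nat.lt_two_pow_self
    have h2d' : (2:ℕ) ^ d ≤ 2 ^ (d+1) := Nat.pow_le_pow_right (by norm_num) (Nat.le_succ d)
    have hp2 : (2:ℕ) ^ (d+1) ≤ p ^ (d+1) := Nat.pow_le_pow_left hp.two_le (d+1)
    omega
  have hns : ¬ (Finset.range (p^(d+1)) ⊆ badF) := by
    intro hsub
    have := Finset.card_le_card hsub
    omega
  obtain ⟨s, hsr, hsb⟩ := Finset.not_subset.mp hns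
  refine ⟨s, ?_⟩
  intro i hi hne hdvd
  apply hsb
  rw [hbad]
  apply Finset.mem_biUnion.mpr
  exact ⟨i, Finset.mem_erase.mpr ⟨hne, Finset.mem_range.mpr (by omega)⟩,
    Finset.mem_filter.mpr ⟨hsr, hdvd⟩⟩

lemma avoid_transfer (p : ℕ) (hp : p.Prime) (d i r₀ m₀ sp s : ℕ) (hm₀ : m₀ ≠ 0)
    (hmod : s ≡ sp [MOD p^(d+1)])
    (hav : ¬ (p ^ (padicValNat p m₀ + (d+1)) ∣ (r₀ + i + sp * m₀))) :
    ¬ (p ^ (padicValNat p m₀ + (d+1)) ∣ (r₀ + i + s * m₀)) := by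
  set e' := padicValNat p m₀
  set T := e' + (d+1)
  obtain ⟨hd1, _⟩ := padic_self_dvd p hp hm₀
  have hmul : s * m₀ ≡ sp * m₀ [MOD p^(d+1) * m₀] := hmod.mul_right' m₀
  have hTd : (p : ℕ) ^ T ∣ p^(d+1) * m₀ := by
    have : p ^ T = p ^ (d+1) * p ^ e' := by rw [pow_add]; ring
    rw [this]
    exact Nat.mul_dvd_mul_left _ hd1
  have hmod2 : (r₀ + i + s * m₀) ≡ (r₀ + i + sp * m₀) [MOD p ^ T] :=
    ((hmul.of_dvd hTd).add_left (r₀ + i))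
  intro hdvd
  apply hav
  have h1 : (r₀ + i + s * m₀) ≡ 0 [MOD p ^ T] := (Nat.modEq_zero_iff_dvd).mpr hdvd
  exact (Nat.modEq_zero_iff_dvd).mp (hmod2.symm.trans h1)

lemma avoid_all (S : Finset ℕ) (hS : ∀ p ∈ S, Nat.Prime p) (d i0 r₀ m₀ : ℕ)
    (hm₀ : m₀ ≠ 0) (hi0 : i0 ≤ d) :
    ∃ s : ℕ, ∀ p ∈ S, ∀ i ≤ d, i ≠ i0 →
      ¬ (p ^ (padicValNat p m₀ + (d+1)) ∣ (r₀ + i + s * m₀)) := by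
  classical
  have hex : ∀ p ∈ S, ∃ sp : ℕ, ∀ i ≤ d, i ≠ i0 →
      ¬ (p ^ (padicValNat p m₀ + (d+1)) ∣ (r₀ + i + sp * m₀)) :=
    fun p hp => avoid p (hS p hp) d i0 r₀ m₀ hm₀ hi0
  choose! sp hsp using hex
  have hnz : ∀ p ∈ S, p ^ (d+1) ≠ 0 :=
    fun p hp => pow_ne_zero _ (hS p hp).pos.ne'
  have hpair : Set.Pairwise ↑S (Function.onFun Nat.Coprime fun p => p ^ (d+1)) := by
    intro p hp q hq hne
    simp only [Function.onFun]
    exact Nat.Coprime.pow _ _ ((Nat.coprime_primes (hS p hp) (hS q hq)).mpr hne)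
  obtain ⟨s, hs⟩ := Nat.chineseRemainderOfFinset sp (fun p => p^(d+1)) S hnz hpair
  refine ⟨s, ?_⟩
  intro p hpS i hi hne
  exact avoid_transfer p (hS p hpS) d i r₀ m₀ (sp p) s hm₀ (hs p hpS)
    (hsp p hpS i hi hne)

lemma gamma_finite (c : ℕ → ℂ) (ϖ : ℕ) (hϖ : 1 ≤ ϖ) (S : Finset ℕ)
    (hdep : ∀ m n : ℕ, 1 ≤ m → 1 ≤ n → m % ϖ = n % ϖ →
      (∀ p ∈ S, padicValNat p m = padicValNat p n) → c m = c n)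
    (K : ℕ → ℕ) :
    {z : ℂ | ∃ m : ℕ, 1 ≤ m ∧ (∀ p ∈ S, padicValNat p m ≤ K p) ∧ c m = z}.Finite := by
  classical
  set D := {z : ℂ | ∃ m : ℕ, 1 ≤ m ∧ (∀ p ∈ S, padicValNat p m ≤ K p) ∧ c m = z} with hD
  have hchoice : ∀ z ∈ D, ∃ m : ℕ, 1 ≤ m ∧ (∀ p ∈ S, padicValNat p m ≤ K p) ∧ c m = z :=
    fun z hz => hz
  choose! mz hmz1 hmz2 hmz3 using hchoice
  set φ : ℂ → ℕ × ({x // x ∈ S} → ℕ) :=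
    fun z => (mz z % ϖ, fun p => padicValNat p.1 (mz z)) with hφ
  apply Set.Finite.of_finite_image (f := φ)
  · apply Set.Finite.subset
      (Set.Finite.prod (Set.finite_Iio ϖ)
        (Set.Finite.pi (fun p : {x // x ∈ S} => Set.finite_Iic (K p.1))))
    rintro w ⟨z, hz, rfl⟩
    constructor
    · exact Nat.mod_lt _ (by omega)
    · intro p _
      exact hmz2 z hz p.1 p.2
  · intro z hz z' hz' hφeq
    rw [hφ] at hφeq
    simp only [Prod.mk.injEq] at hφeq
    obtain ⟨h1, h2⟩ := hφeq
    have hval : ∀ p ∈ S, padicValNat p (mz z) = padicValNat p (mz z') := by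
      intro p hp
      have := congrFun h2 ⟨p, hp⟩
      exact this
    have := hdep (mz z) (mz z') (hmz1 z hz) (hmz1 z' hz') h1 hval
    rw [hmz3 z hz, hmz3 z' hz'] at this
    exact this

end HQA

namespace HQA
open Polynomial

lemma expPoly_combo (a : ℕ → ℂ) (L : Finset ℂ) (pa : ℂ → ℂ[X]) (Na : ℕ)
    (hrep : HasExpPoly a L pa Na) (d : ℕ) (q : Fin (d+1) → ℂ[X]) (w : Fin (d+1) → ℂ) :
    HasExpPoly (fun n => ∑ i : Fin (d+1), (q i).eval (n:ℂ) * w i * a (n + (i:ℕ))) L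
      (fun l => ∑ i : Fin (d+1), (w i * l ^ (i:ℕ)) • ((q i) * ((pa l).comp (X + C ((i:ℕ):ℂ)))))
      Na := by
  intro n hn
  simp only
  have hterm : ∀ i : Fin (d+1), (q i).eval (n:ℂ) * w i * a (n + (i:ℕ))
      = ∑ l ∈ L, (q i).eval (n:ℂ) * w i * ((pa l).eval ((n + (i:ℕ) : ℕ):ℂ) * l ^ (n + (i:ℕ))) := by
    intro i
    rw [hrep (n + (i:ℕ)) (le_trans hn (Nat.le_add_right n _)), Finset.mul_sum]
  rw [Finset.sum_congr rfl (fun i _ => hterm i)]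
  rw [Finset.sum_comm]
  apply Finset.sum_congr rfl
  intro l _
  rw [eval_finset_sum, Finset.sum_mul]
  apply Finset.sum_congr rfl
  intro i _
  rw [eval_smul, eval_mul, eval_comp]
  simp only [eval_add, eval_X, eval_C, smul_eq_mul]
  rw [pow_add]
  push_cast
  ring

lemma rec_to_ann (a : ℕ → ℂ) (d : ℕ) (hd : 1 ≤ d) (β : Fin d → ℂ) (N : ℕ)
    (hrec : ∀ n : ℕ, N ≤ n → a (n + d) = ∑ i : Fin d, β i * a (n + (i:ℕ))) :
    ∃ P : ℂ[X], P ≠ 0 ∧ ∀ n, N ≤ n → appP P a n = 0 := by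
  set P : ℂ[X] := X ^ d - ∑ i : Fin d, C (β i) * X ^ (i:ℕ) with hP
  have hcoeff : P.coeff d = 1 := by
    rw [hP, coeff_sub, coeff_X_pow, if_pos rfl]
    rw [finset_sum_coeff]
    have : ∀ i : Fin d, (C (β i) * X ^ (i:ℕ)).coeff d = 0 := by
      intro i
      rw [coeff_C_mul, coeff_X_pow, if_neg (by omega : ¬ d = (i:ℕ))]
      ring
    rw [Finset.sum_congr rfl (fun i _ => this i)]
    simp
  refine ⟨P, ?_, ?_⟩
  · intro h
    rw [h, coeff_zero] at hcoeff
    exact one_ne_zero hcoeff.symm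
  · intro n hn
    rw [hP, appP_sub, appP_X_pow, appP_sum]
    have : ∀ i : Fin d, appP (C (β i) * X ^ (i:ℕ)) a n = β i * a (n + (i:ℕ)) :=
      fun i => appP_C_mul_X_pow (i:ℕ) (β i) a n
    rw [Finset.sum_congr rfl (fun i _ => this i), hrec n hn]
    ring

lemma prod_pow_val (S : Finset ℕ) (hS : ∀ p ∈ S, Nat.Prime p) (E : ℕ → ℕ)
    (p : ℕ) (hp : p ∈ S) :
    padicValNat p (∏ q ∈ S, q ^ (E q)) = E p := by
  classical
  haveI : Fact p.Prime := ⟨hS p hp⟩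
  have hsplit : (∏ q ∈ S, q ^ (E q)) = p ^ (E p) * ∏ q ∈ S.erase p, q ^ (E q) :=
    (Finset.mul_prod_erase S _ hp).symm
  have hrest_ne : (∏ q ∈ S.erase p, q ^ (E q)) ≠ 0 := by
    apply Finset.prod_ne_zero_iff.mpr
    intro q hq
    exact pow_ne_zero _ (hS q (Finset.mem_of_mem_erase hq)).pos.ne'
  have hcop : Nat.Coprime p (∏ q ∈ S.erase p, q ^ (E q)) := by
    apply Nat.Coprime.prod_right
    intro q hq
    obtain ⟨hne, hqS⟩ := Finset.mem_erase.mp hq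
    exact Nat.Coprime.pow_right _
      ((Nat.coprime_primes (hS p hp) (hS q hqS)).mpr (Ne.symm hne))
  have hnotdvd : ¬ p ∣ (∏ q ∈ S.erase p, q ^ (E q)) := by
    intro hdvd
    have hgcd : Nat.gcd p (∏ q ∈ S.erase p, q ^ (E q)) = 1 := hcop
    have : p ∣ Nat.gcd p (∏ q ∈ S.erase p, q ^ (E q)) := Nat.dvd_gcd dvd_rfl hdvd
    rw [hgcd] at this
    have := Nat.le_of_dvd one_pos this
    have := (hS p hp).one_lt
    omega
  rw [hsplit, padicValNat.mul (pow_ne_zero _ (hS p hp).pos.ne') hrest_ne]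
  rw [padicValNat.prime_pow, padicValNat.eq_zero_of_not_dvd hnotdvd]
  omega

end HQA

/-- analogue of the Hadamard quotient theorem. -/
theorem hadamard_quotient_analogue (a b c : ℕ → ℂ)
    (ha0 : ∀ n : ℕ, 1 ≤ n → a n ≠ 0)
    (hb0 : ∀ n : ℕ, 1 ≤ n → b n ≠ 0)
    (hc0 : ∀ n : ℕ, 1 ≤ n → c n ≠ 0)
    (habc : ∀ n : ℕ, 1 ≤ n → a n = b n * c n)
    (hrec : SatisfiesLinearRecurrence a)
    (hhol : Holonomic b)
    (hdep : ∃ ϖ : ℕ, 1 ≤ ϖ ∧ ∃ S : Finset ℕ, (∀ p ∈ S, Nat.Prime p) ∧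
      ∀ m n : ℕ, 1 ≤ m → 1 ≤ n → m % ϖ = n % ϖ →
        (∀ p ∈ S, padicValNat p m = padicValNat p n) → c m = c n)
    (hring : ∃ T : Finset ℂ, ∀ n : ℕ, 1 ≤ n → c n ∈ Subring.closure (T : Set ℂ)) :
    {z : ℂ | ∃ n : ℕ, 1 ≤ n ∧ c n = z}.Finite := by
  classical
  obtain ⟨ϖ, hϖ, S, hSprime, hdep'⟩ := hdep
  obtain ⟨d, q, ⟨i0, hqi0⟩, hbrec⟩ := hhol
  obtain ⟨da, hda, β, NN, hrecN⟩ := hrec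
  obtain ⟨P, hPne, hPann⟩ := HQA.rec_to_ann a da hda β NN hrecN
  obtain ⟨L, pa, Na₀, h0L, hrepa₀⟩ := HQA.rep_of_ann P.natDegree P hPne le_rfl a NN hPann
  set Na := max Na₀ 1 with hNa
  have hrepa : HQA.HasExpPoly a L pa Na := fun n hn => hrepa₀ n (le_trans (le_max_left _ _) hn)
  have hNa1 : 1 ≤ Na := le_max_right _ _
  obtain ⟨W, hW1, hWp⟩ := HQA.exists_W L
  set K : ℕ → ℕ := fun p => padicValNat p ϖ + 2*d + 2 with hK
  set Γ : Set ℂ := {z : ℂ | ∃ m : ℕ, 1 ≤ m ∧ (∀ p ∈ S, padicValNat p m ≤ K p) ∧ c m = z}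
    with hΓ
  have hΓfin : Γ.Finite := HQA.gamma_finite c ϖ hϖ S hdep' K
  set Γ' : Set ℂ := insert 1 (Inv.inv '' Γ) with hΓ'
  have hΓ'fin : Γ'.Finite := Set.Finite.insert 1 (Set.Finite.image _ hΓfin)
  set Qp : ℕ → (Fin (d+1) → ℂ) → ℂ → Prop := fun ρ v z => z ≠ 0 ∧
    ∀ n : ℕ, Na ≤ n → n % W = ρ →
      (∑ i ∈ Finset.univ.erase i0, (q i).eval (n:ℂ) * v i * a (n + (i:ℕ)))
        + (q i0).eval (n:ℂ) * z⁻¹ * a (n + (i0:ℕ)) = 0 with hQp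
  -- uniqueness of z in Qp
  have hgoodn : ∀ ρ < W, ∃ n : ℕ, Na ≤ n ∧ n % W = ρ ∧ (q i0).eval (n:ℂ) ≠ 0 := by
    intro ρ hρ
    have hroots : {x : ℂ | (q i0).IsRoot x}.Finite := Polynomial.finite_setOf_isRoot hqi0
    have hinj : Function.Injective (fun t : ℕ => ((ρ + W * t : ℕ) : ℂ)) := by
      intro t t' h
      have h1 : ((ρ + W * t : ℕ) : ℂ) = ((ρ + W * t' : ℕ) : ℂ) := h
      have h2 : ρ + W * t = ρ + W * t' := Nat.cast_injective h1
      have hW0 : W ≠ 0 := by omega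
      have : W * t = W * t' := by omega
      exact Nat.eq_of_mul_eq_mul_left (by omega) this
    have hpre : {t : ℕ | (q i0).IsRoot ((ρ + W * t : ℕ) : ℂ)}.Finite := by
      apply Set.Finite.preimage (Set.injOn_of_injective hinj) hroots
    have hbigset : {t : ℕ | Na ≤ t}.Infinite := Set.Ici_infinite Na
    obtain ⟨t, ht1, ht2⟩ := (hbigset.diff hpre).nonempty
    refine ⟨ρ + W * t, ?_, ?_, ?_⟩
    · have : t ≤ W * t := Nat.le_mul_of_pos_left t (by omega)
      have ht1' : Na ≤ t := ht1
      omega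
    · rw [Nat.add_mul_mod_self_left]
      exact Nat.mod_eq_of_lt hρ
    · exact ht2
  have hQuniq : ∀ ρ, ρ < W → ∀ v z₁ z₂, Qp ρ v z₁ → Qp ρ v z₂ → z₁ = z₂ := by
    intro ρ hρ v z₁ z₂ hQ1 hQ2
    obtain ⟨hz₁, h₁⟩ := hQ1
    obtain ⟨hz₂, h₂⟩ := hQ2
    obtain ⟨n, hnNa, hnρ, hqn⟩ := hgoodn ρ hρ
    have e₁ := h₁ n hnNa hnρ
    have e₂ := h₂ n hnNa hnρ
    have han : a (n + (i0:ℕ)) ≠ 0 := ha0 _ (by omega)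
    have h3 : z₁⁻¹ * ((q i0).eval (n:ℂ) * a (n + (i0:ℕ)))
        = z₂⁻¹ * ((q i0).eval (n:ℂ) * a (n + (i0:ℕ))) := by
      linear_combination e₁ - e₂
    have h4 : z₁⁻¹ = z₂⁻¹ := mul_right_cancel₀ (mul_ne_zero hqn han) h3
    exact inv_injective h4
  -- the extracted-value set
  set A3 : Set ℂ := {z : ℂ | ∃ ρ, ρ < W ∧ ∃ v : Fin (d+1) → ℂ, (∀ i, v i ∈ Γ') ∧ Qp ρ v z}
    with hA3
  have hA3fin : A3.Finite := by
    have hI : A3 ⊆ ⋃ x ∈ ((Finset.range W) ×ˢ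
        (Fintype.piFinset fun _ : Fin (d+1) => hΓ'fin.toFinset) :
          Finset (ℕ × (Fin (d+1) → ℂ))), {z : ℂ | Qp x.1 x.2 z} := by
      rintro z ⟨ρ, hρ, v, hv, hQ⟩
      apply Set.mem_biUnion (show ((ρ, v) : ℕ × (Fin (d+1) → ℂ)) ∈ _ from ?_) hQ
      apply Finset.mem_product.mpr
      constructor
      · exact Finset.mem_range.mpr hρ
      · apply Fintype.mem_piFinset.mpr
        intro i
        exact (Set.Finite.mem_toFinset _).mpr (hv i)
    apply Set.Finite.subset ?_ hI
    apply Set.Finite.biUnion (Finset.finite_toSet _)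
    intro x hx
    obtain ⟨hx1, _⟩ := Finset.mem_product.mp hx
    have hxW : x.1 < W := Finset.mem_range.mp hx1
    apply Set.Subsingleton.finite
    intro z₁ h₁ z₂ h₂
    exact hQuniq x.1 hxW x.2 z₁ z₂ h₁ h₂
  -- main inclusion
  have hmain : {z : ℂ | ∃ n : ℕ, 1 ≤ n ∧ c n = z} ⊆ Γ ∪ A3 := by
    rintro z ⟨n0, hn0, rfl⟩
    rcases le_or_gt n0 d with hsmall | hbig
    · left
      refine ⟨n0, hn0, ?_, rfl⟩
      intro p hpS
      have hp' := hSprime p hpS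
      have hdvd := (HQA.padic_self_dvd p hp' (by omega : n0 ≠ 0)).1
      have hle : p ^ padicValNat p n0 ≤ n0 := Nat.le_of_dvd (by omega) hdvd
      have hlt : padicValNat p n0 < p ^ padicValNat p n0 :=
        Nat.lt_pow_self hp'.one_lt
      have hKp : K p = padicValNat p ϖ + 2*d + 2 := rfl
      omega
    · -- the construction
      right
      set e : ℕ → ℕ := fun p => padicValNat p n0 with he
      set m₀ : ℕ := ϖ * ∏ p ∈ S, p ^ (e p + 1) with hm₀def
      have hprod_ne : (∏ p ∈ S, p ^ (e p + 1)) ≠ 0 :=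
        Finset.prod_ne_zero_iff.mpr (fun p hp => pow_ne_zero _ (hSprime p hp).pos.ne')
      have hm₀ : m₀ ≠ 0 := mul_ne_zero (by omega) hprod_ne
      set i0n : ℕ := (i0 : ℕ) with hi0n
      have hi0d : i0n ≤ d := by
        have := i0.isLt
        omega
      set r₀ : ℕ := n0 - i0n with hr₀def
      have hr₀ : r₀ + i0n = n0 := Nat.sub_add_cancel (by omega)
      obtain ⟨s, havoid⟩ := HQA.avoid_all S hSprime d i0n r₀ m₀ hm₀ hi0d
      set r : ℕ := r₀ + s * m₀ with hrdef
      have hr1 : 1 ≤ r := by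
        have : 1 ≤ r₀ := by omega
        omega
      set M : ℕ := W * (m₀ * ∏ p ∈ S, p ^ (d+1)) with hMdef
      have hprod2_ne : (∏ p ∈ S, p ^ (d+1)) ≠ 0 :=
        Finset.prod_ne_zero_iff.mpr (fun p hp => pow_ne_zero _ (hSprime p hp).pos.ne')
      have hM0 : M ≠ 0 := mul_ne_zero (by omega) (mul_ne_zero hm₀ hprod2_ne)
      have hM1 : 1 ≤ M := by omega
      have hWM : W ∣ M := dvd_mul_right W _
      have hϖm₀ : ϖ ∣ m₀ := dvd_mul_right ϖ _
      have hm₀M : m₀ ∣ M := (dvd_mul_right m₀ _).mul_left W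
      have hϖM : ϖ ∣ M := hϖm₀.trans hm₀M
      have hpe1m₀ : ∀ p ∈ S, p ^ (e p + 1) ∣ m₀ := fun p hp =>
        (Finset.dvd_prod_of_mem _ hp).mul_left ϖ
      have hpe1M : ∀ p ∈ S, p ^ (e p + 1) ∣ M := fun p hp => (hpe1m₀ p hp).trans hm₀M
      have hTM : ∀ p ∈ S, p ^ (padicValNat p m₀ + (d+1)) ∣ M := by
        intro p hp
        have h1 : p ^ (padicValNat p m₀) ∣ m₀ := (HQA.padic_self_dvd p (hSprime p hp) hm₀).1
        have h2 : p ^ (d+1) ∣ ∏ p ∈ S, p ^ (d+1) := Finset.dvd_prod_of_mem _ hp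
        have h3 : p ^ (padicValNat p m₀ + (d+1)) ∣ m₀ * ∏ p ∈ S, p ^ (d+1) := by
          rw [pow_add]
          exact mul_dvd_mul h1 h2
        exact h3.mul_left W
      have hval_i0 : ∀ k : ℕ, ∀ p ∈ S, padicValNat p (r + i0n + k * M) = e p := by
        intro k p hpS
        have heq : r + i0n + k * M = n0 + (s * m₀ + k * M) := by
          rw [hrdef]
          omega
        rw [heq]
        obtain ⟨h1, h2⟩ := HQA.padic_self_dvd p (hSprime p hpS) (show n0 ≠ 0 by omega)
        exact HQA.padic_add p (hSprime p hpS) (by omega) h1 h2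
          (dvd_add ((hpe1m₀ p hpS).mul_left s) ((hpe1M p hpS).mul_left k))
      have havoid' : ∀ p ∈ S, ∀ i ≤ d, i ≠ i0n →
          ¬ p ^ (padicValNat p m₀ + (d+1)) ∣ (r + i) := by
        intro p hpS i hi hne
        have heq : r + i = r₀ + i + s * m₀ := by rw [hrdef]; omega
        rw [heq]
        exact havoid p hpS i hi hne
      have hvlt : ∀ p ∈ S, ∀ i ≤ d, i ≠ i0n →
          padicValNat p (r + i) < padicValNat p m₀ + (d+1) := by
        intro p hpS i hi hne
        by_contra hge
        apply havoid' p hpS i hi hne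
        exact dvd_trans (pow_dvd_pow p (by omega))
          ((HQA.padic_self_dvd p (hSprime p hpS) (by omega : r + i ≠ 0)).1)
      have hval_i : ∀ k : ℕ, ∀ p ∈ S, ∀ i ≤ d, i ≠ i0n →
          padicValNat p (r + i + k * M) = padicValNat p (r + i) := by
        intro k p hpS i hi hne
        apply HQA.padic_stable p (hSprime p hpS) (by omega : r + i ≠ 0)
        refine Dvd.dvd.mul_left (dvd_trans (pow_dvd_pow p ?_) (hTM p hpS)) k
        have := hvlt p hpS i hi hne
        omega
      have hcap : ∀ p ∈ S, ∀ i ≤ d, i ≠ i0n → padicValNat p (r + i) ≤ K p := by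
        intro p hpS i hi hne
        have hp' := hSprime p hpS
        have hKp : K p = padicValNat p ϖ + 2*d + 2 := rfl
        rcases le_or_gt (p ^ (e p)) d with hsm | hbigp
        · haveI : Fact p.Prime := ⟨hp'⟩
          have he' : padicValNat p m₀ = padicValNat p ϖ + (e p + 1) := by
            rw [hm₀def, padicValNat.mul (by omega) hprod_ne,
              HQA.prod_pow_val S hSprime _ p hpS]
          have hed : e p ≤ d := by
            have := Nat.lt_pow_self (n := e p) hp'.one_lt
            omega
          have := hvlt p hpS i hi hne
          omega
        · have hvi0 : padicValNat p (r + i0n) = e p := by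
            have h := hval_i0 0 p hpS
            have heq : r + i0n + 0 * M = r + i0n := by omega
            rwa [heq] at h
          have hpow_dvd : p ^ (e p) ∣ (r + i0n) := by
            rw [← hvi0]
            exact (HQA.padic_self_dvd p hp' (by omega : r + i0n ≠ 0)).1
          have hxbig : d < r + i0n := by
            have h1 : p ^ (e p) ≤ r + i0n := Nat.le_of_dvd (by omega) hpow_dvd
            omega
          have hδcase : ∀ δ : ℕ, 1 ≤ δ → δ ≤ d →
              padicValNat p δ ≤ K p ∧ padicValNat p δ < padicValNat p (r + i0n)
                ∧ δ < r + i0n := by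
            intro δ h1 h2
            have hd1 : p ^ padicValNat p δ ∣ δ := (HQA.padic_self_dvd p hp' (by omega)).1
            have hd2 : p ^ padicValNat p δ ≤ δ := Nat.le_of_dvd (by omega) hd1
            have hvlt2 : padicValNat p δ < e p := by
              by_contra hge2
              have : p ^ (e p) ≤ p ^ padicValNat p δ :=
                Nat.pow_le_pow_right hp'.pos (by omega)
              omega
            have hvd : padicValNat p δ ≤ d := by
              have := Nat.lt_pow_self (n := padicValNat p δ) hp'.one_lt
              omega
            refine ⟨by omega, by rw [hvi0]; omega, by omega⟩
          rcases Nat.lt_or_ge i i0n with hlti | hgei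
          · obtain ⟨hKδ, hvv, hδx⟩ := hδcase (i0n - i) (by omega) (by omega)
            have hper := (HQA.padic_perturb p hp' (r + i0n) (i0n - i) (by omega) hδx hvv).2
            have heq : r + i0n - (i0n - i) = r + i := by omega
            rw [heq] at hper
            omega
          · have hne' : i0n < i := by omega
            obtain ⟨hKδ, hvv, hδx⟩ := hδcase (i - i0n) (by omega) (by omega)
            have hper := (HQA.padic_perturb p hp' (r + i0n) (i - i0n) (by omega) hδx hvv).1
            have heq : r + i0n + (i - i0n) = r + i := by omega
            rw [heq] at hper
            omega
      -- residues
      have hmod_i : ∀ k i : ℕ, (r + i + k * M) % ϖ = (r + i) % ϖ := by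
        intro k i
        obtain ⟨t, ht⟩ := hϖM
        rw [ht, show r + i + k * (ϖ * t) = r + i + ϖ * (k * t) by ring,
          Nat.add_mul_mod_self_left]
      have hmod_i0 : ∀ k : ℕ, (r + i0n + k * M) % ϖ = n0 % ϖ := by
        intro k
        obtain ⟨t, ht⟩ := hϖM
        obtain ⟨t', ht'⟩ := hϖm₀
        have heq : r + i0n + k * M = n0 + (s * m₀ + k * M) := by rw [hrdef]; omega
        rw [heq, ht, ht',
          show n0 + (s * (ϖ * t') + k * (ϖ * t)) = n0 + ϖ * (s * t' + k * t) by ring,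
          Nat.add_mul_mod_self_left]
      have hc_i : ∀ k : ℕ, ∀ i ≤ d, i ≠ i0n → c (r + i + k * M) = c (r + i) := by
        intro k i hi hne
        exact hdep' _ _ (by omega) (by omega) (hmod_i k i)
          (fun p hp => hval_i k p hp i hi hne)
      have hc_i0 : ∀ k : ℕ, c (r + i0n + k * M) = c n0 := by
        intro k
        exact hdep' _ _ (by omega) (by omega) (hmod_i0 k)
          (fun p hp => hval_i0 k p hp)
      set γ : Fin (d+1) → ℂ := fun i => c (r + (i:ℕ)) with hγ
      have hγidef : ∀ i : Fin (d+1), γ i = c (r + (i:ℕ)) := fun i => rfl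
      have hγ0 : ∀ i, γ i ≠ 0 := by
        intro i
        rw [hγidef]
        exact hc0 _ (by omega)
      have hγi0 : γ i0 = c n0 := by
        rw [hγidef]
        have h := hc_i0 0
        have heq : r + i0n + 0 * M = r + i0n := by omega
        rw [heq] at h
        exact h
      set w : Fin (d+1) → ℂ := fun i => (γ i)⁻¹ with hw
      have hwdef : ∀ i : Fin (d+1), w i = (γ i)⁻¹ := fun i => rfl
      have hexp := HQA.expPoly_combo a L pa Na hrepa d q w
      have hvanAP : ∀ k : ℕ,
          (∑ i : Fin (d+1), (q i).eval (((r + M * k : ℕ)):ℂ) * w i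
            * a ((r + M * k) + (i:ℕ))) = 0 := by
        intro k
        set n := r + M * k with hn
        have hn1 : 1 ≤ n := by omega
        have hcn : ∀ i : Fin (d+1), c (n + (i:ℕ)) = γ i := by
          intro i
          by_cases hii : (i:ℕ) = i0n
          · have heq : n + (i:ℕ) = r + i0n + k * M := by rw [hn, hii]; ring
            rw [heq, hc_i0 k]
            have hieq : i = i0 := Fin.ext (by rw [hii, hi0n])
            rw [hieq, hγi0]
          · have heq : n + (i:ℕ) = r + (i:ℕ) + k * M := by rw [hn]; ring
            have hid : (i:ℕ) ≤ d := by
              have := i.isLt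
              omega
            rw [heq, hc_i k (i:ℕ) hid hii, hγidef]
        have hterm : ∀ i : Fin (d+1), (q i).eval ((n:ℕ):ℂ) * w i * a (n + (i:ℕ))
            = (q i).eval ((n:ℕ):ℂ) * b (n + (i:ℕ)) := by
          intro i
          have hx1 : 1 ≤ n + (i:ℕ) := by omega
          have hb : w i * a (n + (i:ℕ)) = b (n + (i:ℕ)) := by
            rw [hwdef, ← hcn i, habc _ hx1, mul_comm (b _) (c _), ← mul_assoc,
              inv_mul_cancel₀ (hc0 _ hx1), one_mul]
          rw [← hb]
          ring
        rw [Finset.sum_congr rfl (fun i _ => hterm i)]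
        exact hbrec n hn1
      have hvcls := HQA.vanish_on_class L h0L _ Na _ hexp W hW1 hWp r M hWM hM1 hvanAP
      set v : Fin (d+1) → ℂ := Function.update w i0 1 with hv
      refine ⟨r % W, Nat.mod_lt r (by omega), v, ?_, ?_, ?_⟩
      · intro i
        by_cases hii : i = i0
        · rw [hv, hii, Function.update_self]
          exact Set.mem_insert 1 _
        · rw [hv, Function.update_of_ne hii]
          apply Set.mem_insert_of_mem
          refine ⟨γ i, ?_, rfl⟩
          refine ⟨r + (i:ℕ), by omega, ?_, (hγidef i).symm⟩
          intro p hpS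
          have hid : (i:ℕ) ≤ d := by
            have := i.isLt
            omega
          have hine : (i:ℕ) ≠ i0n := by
            intro h
            exact hii (Fin.ext (by rw [h, hi0n]))
          exact hcap p hpS (i:ℕ) hid hine
      · exact hc0 n0 (by omega)
      · intro n hnNa hnmod
        have hg : (∑ i : Fin (d+1), (q i).eval ((n:ℕ):ℂ) * w i * a (n + (i:ℕ))) = 0 :=
          hvcls n hnNa hnmod
        rw [← Finset.sum_erase_add Finset.univ _ (Finset.mem_univ i0)] at hg
        have h1 : ∀ i ∈ Finset.univ.erase i0,
            (q i).eval ((n:ℕ):ℂ) * w i * a (n + (i:ℕ))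
              = (q i).eval ((n:ℕ):ℂ) * v i * a (n + (i:ℕ)) := by
          intro i hi
          rw [hv, Function.update_of_ne (Finset.mem_erase.mp hi).1]
        have h2 : w i0 = (c n0)⁻¹ := by rw [hwdef, hγi0]
        rw [Finset.sum_congr rfl h1, h2] at hg
        exact hg
  exact Set.Finite.subset (hΓfin.union hA3fin) hmain
end HQA
end

section
/- Let (X, f) be a FAD-system with exponential entropy Λ > 1, and let L_f ⊆ ℝ denote the set of accumulation points of the sequence (N·π_f(N)/Λ^N)_{N≥1}, i.e. the set of limits of convergent subsequences of this sequence. Then L_f is a compact subset of the open interval (0, +∞). -/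
open scoped BigOperators
open Filter

namespace FADaux
open Polynomial Function Filter

/-! ### Topology of accumulation points -/

lemma accPoints_eq (g : ℕ → ℝ) : accPoints g = {x | MapClusterPt x atTop g} := by
  ext x
  constructor
  · rintro ⟨φ, hφ, hlim⟩
    exact MapClusterPt.of_comp (hφ.tendsto_atTop) (hlim.mapClusterPt)
  · intro hx
    obtain ⟨ψ, hψ, hlim⟩ := TopologicalSpace.FirstCountableTopology.tendsto_subseq hx
    exact ⟨ψ, hψ, hlim⟩

lemma accPoints_compact_subset {g : ℕ → ℝ} {m M : ℝ} {N₀ : ℕ} (hm : 0 < m)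
    (h : ∀ N, N₀ ≤ N → g N ∈ Set.Icc m M) :
    IsCompact (accPoints g) ∧ accPoints g ⊆ Set.Ioi 0 := by
  have hsub : accPoints g ⊆ Set.Icc m M := by
    rintro x ⟨φ, hφ, hlim⟩
    refine isClosed_Icc.mem_of_tendsto hlim ?_
    filter_upwards [hφ.tendsto_atTop.eventually_ge_atTop N₀] with i hi
    exact h _ hi
  have hclosed : IsClosed (accPoints g) := by
    rw [accPoints_eq]
    exact isClosed_setOf_clusterPt
  exact ⟨isCompact_Icc.of_isClosed_subset hclosed hsub,
    hsub.trans fun x hx => lt_of_lt_of_le hm hx.1⟩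

/-! ### Determinants and eigenvalues -/

variable {κ : ℕ}

lemma eval_charpoly (M : Matrix (Fin κ) (Fin κ) ℂ) (z : ℂ) :
    M.charpoly.eval z = (z • (1 : Matrix (Fin κ) (Fin κ) ℂ) - M).det := by
  rw [Matrix.charpoly, ← Polynomial.coe_evalRingHom, RingHom.map_det]
  congr 1
  ext i j
  by_cases h : i = j <;>
    simp [h, Matrix.charmatrix_apply, RingHom.mapMatrix_apply, Matrix.map_apply,
      Matrix.diagonal_apply, Matrix.one_apply, Matrix.smul_apply]

lemma det_sub_smul_one (M : Matrix (Fin κ) (Fin κ) ℂ) (z : ℂ) :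
    (M - z • 1).det = (M.charpoly.roots.map fun ξ => ξ - z).prod := by
  have hsplit : M.charpoly.Splits := IsAlgClosed.splits _
  have hcard : M.charpoly.roots.card = κ := by
    rw [(Polynomial.splits_iff_card_roots).mp hsplit, Matrix.charpoly_natDegree_eq_dim,
      Fintype.card_fin]
  have hfac := hsplit.eq_prod_roots_of_monic (Matrix.charpoly_monic M)
  have hev : M.charpoly.eval z = (M.charpoly.roots.map fun ξ => z - ξ).prod := by
    conv_lhs => rw [hfac]
    rw [Polynomial.eval_multiset_prod, Multiset.map_map]
    apply congrArg
    apply Multiset.map_congr rfl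
    intro x _; simp
  have h1 : (M - z • 1) = -(z • 1 - M) := by abel
  rw [h1, Matrix.det_neg, Fintype.card_fin, ← eval_charpoly, hev]
  have h2 : ((M.charpoly.roots.map fun ξ => ξ - z)) =
      (M.charpoly.roots.map fun ξ => z - ξ).map Neg.neg := by
    rw [Multiset.map_map]; apply Multiset.map_congr rfl; intro x _; simp
  rw [h2, Multiset.prod_map_neg, Multiset.card_map, hcard]

lemma det_pow_sub_one (M : Matrix (Fin κ) (Fin κ) ℂ) {n : ℕ} (hn : 1 ≤ n) :
    (M ^ n - 1).det = (M.charpoly.roots.map fun ξ => ξ ^ n - 1).prod := by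
  set P : Polynomial ℂ := X ^ n - 1 with hP
  have hPm : P.Monic := by
    have := Polynomial.monic_X_pow_sub_C (1 : ℂ) (Nat.one_le_iff_ne_zero.mp hn)
    simpa [hP] using this
  have hPsplit : P.Splits := IsAlgClosed.splits _
  have hPfac := hPsplit.eq_prod_roots_of_monic hPm
  set l : List ℂ := P.roots.toList with hldef
  have hl : (l : Multiset ℂ) = P.roots := Multiset.coe_toList _
  have hPfac' : P = (l.map fun a => X - C a).prod := by
    conv_lhs => rw [hPfac, ← hl]
    rfl
  have h1 : M ^ n - 1 = aeval M P := by simp [hP]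
  have h2 : aeval M P = (l.map fun z => M - z • (1:Matrix (Fin κ) (Fin κ) ℂ)).prod := by
    conv_lhs => rw [hPfac']
    rw [map_list_prod (aeval M : Polynomial ℂ →ₐ[ℂ] Matrix (Fin κ) (Fin κ) ℂ), List.map_map]
    congr 1
    apply List.map_congr_left
    intro z _
    simp [Algebra.algebraMap_eq_smul_one]
  have h3 : (M ^ n - 1).det =
      ((l.map fun z => M - z • (1:Matrix (Fin κ) (Fin κ) ℂ)).map Matrix.det).prod := by
    rw [h1, h2]
    exact map_list_prod (Matrix.detMonoidHom) _
  rw [h3, List.map_map]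
  have h4 : ∀ z ∈ l, (Matrix.det ∘ fun z => M - z • (1:Matrix (Fin κ) (Fin κ) ℂ)) z
      = (M.charpoly.roots.map fun ξ => ξ - z).prod := fun z _ => det_sub_smul_one M z
  rw [List.map_congr_left h4]
  have h5 : (l.map fun z => (M.charpoly.roots.map fun ξ => ξ - z).prod).prod
      = ((P.roots).map fun z => (M.charpoly.roots.map fun ξ => ξ - z).prod).prod := by
    rw [← hl]; rfl
  rw [h5, Multiset.prod_map_prod_map]
  apply congrArg
  apply Multiset.map_congr rfl
  intro ξ _
  have hev : P.eval ξ = (P.roots.map fun z => ξ - z).prod := by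
    conv_lhs => rw [hPfac]
    rw [Polynomial.eval_multiset_prod, Multiset.map_map]
    apply congrArg; apply Multiset.map_congr rfl; intro x _; simp
  rw [← hev]
  simp [hP]

lemma abs_det_cast (A : Matrix (Fin κ) (Fin κ) ℤ) {n : ℕ} (hn : 1 ≤ n) :
    |(((A ^ n - 1).det : ℤ) : ℝ)| =
      (((A.map (Int.cast : ℤ → ℂ)).charpoly.roots).map
        fun ξ => ‖ξ ^ n - 1‖).prod := by
  set M : Matrix (Fin κ) (Fin κ) ℂ := A.map (Int.cast : ℤ → ℂ) with hM
  have hcast : (((A ^ n - 1).det : ℤ) : ℂ) = (M ^ n - 1).det := by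
    have := RingHom.map_det (Int.castRingHom ℂ) (A ^ n - 1)
    have h2 : (Int.castRingHom ℂ).mapMatrix (A ^ n - 1) = M ^ n - 1 := by
      rw [map_sub, map_pow, map_one]; rfl
    rw [h2] at this
    exact_mod_cast this
  have h1 : |(((A ^ n - 1).det : ℤ) : ℝ)| = ‖(((A ^ n - 1).det : ℤ) : ℂ)‖ := by
    rw [Complex.norm_intCast]
  rw [h1, hcast, det_pow_sub_one M hn]
  exact (map_multiset_prod (normHom : ℂ →*₀ ℝ) _).trans (by rw [Multiset.map_map]; rfl)

/-! ### fadFactor bounds -/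

lemma padicAbs_pos {p : ℕ} (hp : p.Prime) (n : ℕ) : 0 < padicAbs p n := by
  unfold padicAbs
  have h2 : (0:ℝ) < (p:ℝ) := by exact_mod_cast hp.pos
  positivity

lemma padicAbs_le_one {p : ℕ} (hp : p.Prime) (n : ℕ) : padicAbs p n ≤ 1 := by
  unfold padicAbs
  rw [inv_le_one_iff₀]
  right
  exact one_le_pow₀ (by exact_mod_cast hp.one_lt.le)

lemma padicAbs_eq_one {p n : ℕ} (hp : p.Prime) (hnd : ¬ p ∣ n) : padicAbs p n = 1 := by
  unfold padicAbs
  rw [padicValNat.eq_zero_of_not_dvd hnd]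
  norm_num

lemma gcdSeq_bounds {x : ℕ → ℝ} {d : ℕ} (hd : 1 ≤ d)
    (hx : ∀ n, 1 ≤ n → x n = x (Nat.gcd n d)) :
    ∃ lo hi : ℝ, (∃ n₀, 1 ≤ n₀ ∧ lo = x n₀) ∧
      ∀ n, 1 ≤ n → lo ≤ x n ∧ x n ≤ hi := by
  have hne : d.divisors.Nonempty := Nat.nonempty_divisors.mpr (by omega)
  refine ⟨d.divisors.inf' hne x, d.divisors.sup' hne x, ?_, ?_⟩
  · obtain ⟨m, hm, hmeq⟩ := Finset.exists_mem_eq_inf' hne x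
    exact ⟨m, (Nat.pos_of_mem_divisors hm), hmeq⟩
  · intro n hn
    have hmem : Nat.gcd n d ∈ d.divisors :=
      Nat.mem_divisors.mpr ⟨Nat.gcd_dvd_right n d, by omega⟩
    rw [hx n hn]
    exact ⟨Finset.inf'_le x hmem, Finset.le_sup' x hmem⟩

variable {S : Finset ℕ} {r : ℕ → ℝ} {s t : ℕ → ℕ → ℝ}

lemma fadFactor_pos (hprime : ∀ p ∈ S, Nat.Prime p) (hr : ∀ n, 1 ≤ n → 0 < r n)
    {n : ℕ} (hn : 1 ≤ n) : 0 < fadFactor S r s t n := by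
  unfold fadFactor
  apply mul_pos (hr n hn)
  apply Finset.prod_pos
  intro p hp
  have hpp := hprime p hp
  have h1 : (0:ℝ) < padicAbs p n := padicAbs_pos hpp n
  have h2 : (0:ℝ) < (p:ℝ) := by exact_mod_cast hpp.pos
  positivity

lemma fadFactor_le (hprime : ∀ p ∈ S, Nat.Prime p) {hi : ℝ}
    (hrhi : ∀ n, 1 ≤ n → r n ≤ hi)
    (hs : ∀ p ∈ S, ∀ n, 1 ≤ n → 0 ≤ s p n) (ht : ∀ p ∈ S, ∀ n, 1 ≤ n → 0 ≤ t p n)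
    (hr : ∀ n, 1 ≤ n → 0 < r n)
    {n : ℕ} (hn : 1 ≤ n) : fadFactor S r s t n ≤ hi := by
  unfold fadFactor
  have hfac : (∏ p ∈ S, (padicAbs p n ^ s p n * (p : ℝ) ^ (-(t p n) * (padicAbs p n)⁻¹))) ≤ 1 := by
    apply Finset.prod_le_one
    · intro p hp
      have hpp := hprime p hp
      have h1 : (0:ℝ) < padicAbs p n := padicAbs_pos hpp n
      have h2 : (0:ℝ) < (p:ℝ) := by exact_mod_cast hpp.pos
      positivity
    · intro p hp
      have hpp := hprime p hp
      have h1 : (0:ℝ) < padicAbs p n := padicAbs_pos hpp n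
      have h1' : padicAbs p n ≤ 1 := padicAbs_le_one hpp n
      have h2 : (1:ℝ) ≤ (p:ℝ) := by exact_mod_cast hpp.one_lt.le
      have hb1 : padicAbs p n ^ s p n ≤ 1 :=
        Real.rpow_le_one h1.le h1' (hs p hp n hn)
      have hb2 : (p:ℝ) ^ (-(t p n) * (padicAbs p n)⁻¹) ≤ 1 := by
        apply Real.rpow_le_one_of_one_le_of_nonpos h2
        have := ht p hp n hn
        have : 0 ≤ (t p n) * (padicAbs p n)⁻¹ := by positivity
        linarith
      have hnn : (0:ℝ) ≤ (p:ℝ) ^ (-(t p n) * (padicAbs p n)⁻¹) :=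
        Real.rpow_nonneg (by linarith) _
      calc padicAbs p n ^ s p n * (p:ℝ) ^ (-(t p n) * (padicAbs p n)⁻¹)
          ≤ 1 * 1 := mul_le_mul hb1 hb2 hnn (by norm_num)
        _ = 1 := by norm_num
  calc r n * _ ≤ r n * 1 := by
        apply mul_le_mul_of_nonneg_left hfac (hr n hn).le
    _ = r n := by ring
    _ ≤ hi := hrhi n hn

lemma fadFactor_lower (hprime : ∀ p ∈ S, Nat.Prime p) {lo T : ℝ} (hlo : 0 < lo) (hT : 0 ≤ T)
    (hrlo : ∀ n, 1 ≤ n → lo ≤ r n)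
    (ht : ∀ p ∈ S, ∀ n, 1 ≤ n → t p n ≤ T)
    {n : ℕ} (hn : 1 ≤ n) (hcop : ∀ p ∈ S, ¬ p ∣ n) :
    lo * ∏ p ∈ S, (p:ℝ) ^ (-T) ≤ fadFactor S r s t n := by
  unfold fadFactor
  have key : ∀ p ∈ S, (p:ℝ) ^ (-T) ≤
      padicAbs p n ^ s p n * (p : ℝ) ^ (-(t p n) * (padicAbs p n)⁻¹) := by
    intro p hp
    have hpp := hprime p hp
    have h1 : padicAbs p n = 1 := padicAbs_eq_one hpp (hcop p hp)
    rw [h1]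
    rw [Real.one_rpow, one_mul, inv_one, mul_one]
    apply Real.rpow_le_rpow_of_exponent_le (by exact_mod_cast hpp.one_lt.le)
    have := ht p hp n hn
    linarith
  have hprod : (∏ p ∈ S, (p:ℝ) ^ (-T)) ≤
      ∏ p ∈ S, (padicAbs p n ^ s p n * (p : ℝ) ^ (-(t p n) * (padicAbs p n)⁻¹)) := by
    apply Finset.prod_le_prod
    · intro p hp
      exact Real.rpow_nonneg (by exact_mod_cast (hprime p hp).pos.le) _
    · exact key
  have hprod0 : (0:ℝ) ≤ ∏ p ∈ S, (p:ℝ) ^ (-T) :=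
    Finset.prod_nonneg fun p hp => Real.rpow_nonneg (by exact_mod_cast (hprime p hp).pos.le) _
  calc lo * ∏ p ∈ S, (p:ℝ) ^ (-T) ≤ r n * ∏ p ∈ S, (p:ℝ) ^ (-T) := by
        apply mul_le_mul_of_nonneg_right (hrlo n hn) hprod0
    _ ≤ r n * ∏ p ∈ S, (padicAbs p n ^ s p n * (p : ℝ) ^ (-(t p n) * (padicAbs p n)⁻¹)) := by
        apply mul_le_mul_of_nonneg_left hprod (by linarith [hrlo n hn])

lemma exists_uniform_bound {α : Type*} (S : Finset α) (g : α → ℕ → ℝ)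
    (h : ∀ p ∈ S, ∃ B : ℝ, ∀ n, 1 ≤ n → g p n ≤ B) :
    ∃ B : ℝ, 0 ≤ B ∧ ∀ p ∈ S, ∀ n, 1 ≤ n → g p n ≤ B := by
  classical
  induction S using Finset.induction with
  | empty => exact ⟨0, le_refl _, by simp⟩
  | @insert a s' hx ih =>
    obtain ⟨B1, hB1⟩ := h a (Finset.mem_insert_self a s')
    obtain ⟨B2, hB2nn, hB2⟩ := ih (fun p hp => h p (Finset.mem_insert_of_mem hp))
    refine ⟨max B1 B2, le_trans hB2nn (le_max_right _ _), ?_⟩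
    intro p hp n hn
    rcases Finset.mem_insert.mp hp with rfl | hp'
    · exact le_trans (hB1 n hn) (le_max_left _ _)
    · exact le_trans (hB2 p hp' n hn) (le_max_right _ _)

/-! ### Window lemma -/

lemma window_lemma (R : Multiset ℂ) (hnr : ∀ ξ ∈ R, ∀ m : ℕ, 1 ≤ m → ξ ^ m ≠ 1)
    {Q : ℕ} (hQ : 1 ≤ Q) :
    ∃ ε : ℝ, 0 < ε ∧ ∀ n₀ : ℕ, R.card * Q + 1 ≤ n₀ →
      ∃ j : ℕ, j ≤ R.card ∧ ∀ ξ ∈ R, ‖ξ‖ = 1 →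
        ε ≤ ‖ξ ^ (n₀ - j * Q) - 1‖ := by
  classical
  set U : Finset ℂ := R.toFinset.filter (fun ξ => ‖ξ‖ = 1) with hU
  by_cases hUe : U = ∅
  · refine ⟨1, one_pos, fun n₀ _ => ⟨0, Nat.zero_le _, fun ξ hξ habs => ?_⟩⟩
    exfalso
    have hm : ξ ∈ U := Finset.mem_filter.mpr ⟨Multiset.mem_toFinset.mpr hξ, habs⟩
    rw [hUe] at hm
    exact Finset.notMem_empty ξ hm
  · have hUne : U.Nonempty := Finset.nonempty_iff_ne_empty.mpr hUe
    have hκpos : 1 ≤ R.card := by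
      obtain ⟨ξ, hξ⟩ := hUne
      have hmem : ξ ∈ R := Multiset.mem_toFinset.mp (Finset.mem_filter.mp hξ).1
      have := Multiset.card_pos_iff_exists_mem.mpr ⟨ξ, hmem⟩
      omega
    set F : Finset (ℂ × ℕ) := U ×ˢ Finset.Icc 1 R.card with hF
    have hFne : F.Nonempty := hUne.product ⟨1, Finset.mem_Icc.mpr ⟨le_refl _, hκpos⟩⟩
    set ε : ℝ := (F.inf' hFne fun q => ‖q.1 ^ (q.2 * Q) - 1‖) / 2 with hε
    have hεpos : 0 < ε := by
      rw [hε]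
      apply div_pos _ two_pos
      rw [Finset.lt_inf'_iff]
      rintro ⟨ξ, i⟩ hq
      obtain ⟨hξU, hi⟩ := Finset.mem_product.mp hq
      have hξR : ξ ∈ R := Multiset.mem_toFinset.mp (Finset.mem_filter.mp hξU).1
      have hiQ : 1 ≤ i * Q := by
        have h1 := (Finset.mem_Icc.mp hi).1
        exact Nat.one_le_iff_ne_zero.mpr (by positivity)
      have := hnr ξ hξR (i * Q) hiQ
      simpa [norm_pos_iff, sub_ne_zero] using this
    refine ⟨ε, hεpos, fun n₀ hn₀ => ?_⟩
    by_contra hcon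
    push_neg at hcon
    have hbad : ∀ j ∈ Finset.range (R.card + 1), ∃ ξ ∈ U,
        ‖ξ ^ (n₀ - j * Q) - 1‖ < ε := by
      intro j hj
      obtain ⟨ξ, hξR, habs, hlt⟩ := hcon j (Nat.lt_succ_iff.mp (Finset.mem_range.mp hj))
      exact ⟨ξ, Finset.mem_filter.mpr ⟨Multiset.mem_toFinset.mpr hξR, habs⟩, hlt⟩
    choose! ξf hξf hξflt using hbad
    have hcard : U.card < (Finset.range (R.card + 1)).card := by
      rw [Finset.card_range]
      have h1 : U.card ≤ R.toFinset.card := Finset.card_le_card (Finset.filter_subset _ _)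
      have h2 : R.toFinset.card ≤ R.card := Multiset.toFinset_card_le R
      omega
    obtain ⟨j, hj, j', hj', hne, heq⟩ :=
      Finset.exists_ne_map_eq_of_card_lt_of_maps_to hcard hξf
    wlog hlt' : j < j' generalizing j j'
    · exact this j' hj' j hj (Ne.symm hne) heq.symm (by omega)
    set ξ := ξf j with hξdef
    have hξU : ξ ∈ U := hξf j hj
    have hξR : ξ ∈ R := Multiset.mem_toFinset.mp (Finset.mem_filter.mp hξU).1
    have habs1 : ‖ξ‖ = 1 := (Finset.mem_filter.mp hξU).2
    have hjr : j ≤ R.card := Nat.lt_succ_iff.mp (Finset.mem_range.mp hj)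
    have hj'r : j' ≤ R.card := Nat.lt_succ_iff.mp (Finset.mem_range.mp hj')
    have hbj : ‖ξ ^ (n₀ - j * Q) - 1‖ < ε := hξflt j hj
    have hbj' : ‖ξ ^ (n₀ - j' * Q) - 1‖ < ε := by
      rw [hξdef]
      rw [show ξf j = ξf j' from heq]
      exact hξflt j' hj'
    set i := j' - j with hi
    have hi1 : 1 ≤ i := by omega
    have hiκ : i ≤ R.card := by omega
    have hmul1 : i * Q = j' * Q - j * Q := by rw [hi, Nat.sub_mul]
    have hmul2 : j * Q ≤ j' * Q := Nat.mul_le_mul_right Q (le_of_lt hlt')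
    have hmul3 : j' * Q ≤ R.card * Q := Nat.mul_le_mul_right Q hj'r
    have hQle : j' * Q ≤ n₀ := by omega
    have hsplit : n₀ - j * Q = (n₀ - j' * Q) + i * Q := by omega
    have hpow : ξ ^ (n₀ - j * Q) = ξ ^ (n₀ - j' * Q) * ξ ^ (i * Q) := by
      rw [hsplit, pow_add]
    have habs_pow : ‖ξ ^ (n₀ - j' * Q)‖ = 1 := by
      rw [norm_pow, habs1, one_pow]
    have hnz : ξ ^ (n₀ - j' * Q) ≠ 0 := by
      intro h; rw [h] at habs_pow; simp at habs_pow
    have h1 : ξ ^ (i * Q) - 1 =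
        (ξ ^ (n₀ - j' * Q))⁻¹ * ((ξ ^ (n₀ - j * Q) - 1) - (ξ ^ (n₀ - j' * Q) - 1)) := by
      field_simp
      rw [hpow]; ring
    have key : ‖ξ ^ (i * Q) - 1‖ < 2 * ε := by
      rw [h1, norm_mul, norm_inv, habs_pow, inv_one, one_mul]
      calc ‖(ξ ^ (n₀ - j * Q) - 1) - (ξ ^ (n₀ - j' * Q) - 1)‖
          ≤ ‖ξ ^ (n₀ - j * Q) - 1‖ + ‖ξ ^ (n₀ - j' * Q) - 1‖ := by
            exact norm_sub_le _ _
        _ < 2 * ε := by linarith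
    have hmemF : (ξ, i) ∈ F := Finset.mem_product.mpr ⟨hξU, Finset.mem_Icc.mpr ⟨hi1, hiκ⟩⟩
    have hinf := Finset.inf'_le (fun q : ℂ × ℕ => ‖q.1 ^ (q.2 * Q) - 1‖) hmemF
    rw [hε] at key
    simp only at hinf key
    linarith

/-! ### eigenvalue product bounds -/

noncomputable def gam (ε : ℝ) (ξ : ℂ) : ℝ :=
  if 1 < ‖ξ‖ then 1 - (‖ξ‖)⁻¹
  else if ‖ξ‖ < 1 then 1 - ‖ξ‖
  else min ε 1

lemma gam_pos {ε : ℝ} (hε : 0 < ε) (ξ : ℂ) : 0 < gam ε ξ := by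
  unfold gam
  split_ifs with h1 h2
  · have : (‖ξ‖)⁻¹ < 1 := inv_lt_one_of_one_lt₀ h1
    linarith
  · linarith
  · exact lt_min hε one_pos

lemma abs_pow_sub_one_le (ξ : ℂ) (n : ℕ) :
    ‖ξ ^ n - 1‖ ≤ 2 * max 1 (‖ξ‖) ^ n := by
  have h1 : ‖ξ ^ n - 1‖ ≤ ‖ξ ^ n‖ + ‖(1:ℂ)‖ := by
    exact norm_sub_le _ _
  have h1' : ‖ξ ^ n - 1‖ ≤ ‖ξ‖ ^ n + 1 := by
    rw [norm_pow, norm_one] at h1; exact h1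
  have h2 : ‖ξ‖ ^ n ≤ max 1 (‖ξ‖) ^ n :=
    pow_le_pow_left₀ (norm_nonneg ξ) (le_max_right _ _) n
  have h3 : (1:ℝ) ≤ max 1 (‖ξ‖) ^ n :=
    one_le_pow₀ (le_max_left _ _)
  linarith

lemma gam_le_abs_pow_sub_one {ε : ℝ} (hε : 0 < ε) {ξ : ℂ} {n : ℕ} (hn : 1 ≤ n)
    (hgood : ‖ξ‖ = 1 → ε ≤ ‖ξ ^ n - 1‖) :
    gam ε ξ * max 1 (‖ξ‖) ^ n ≤ ‖ξ ^ n - 1‖ := by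
  set a := ‖ξ‖ with ha
  have ha0 : 0 ≤ a := norm_nonneg ξ
  have htri1 : a ^ n ≤ ‖ξ ^ n - 1‖ + 1 := by
    have : ‖ξ ^ n‖ ≤ ‖ξ ^ n - 1‖ + ‖(1:ℂ)‖ := by
      simpa [add_comm] using norm_le_norm_add_norm_sub' (ξ ^ n) 1
    simpa [norm_pow] using this
  have htri2 : (1:ℝ) ≤ ‖ξ ^ n - 1‖ + a ^ n := by
    have : ‖(1:ℂ)‖ ≤ ‖1 - ξ ^ n‖ + ‖ξ ^ n‖ := by
      simpa [add_comm] using norm_le_norm_add_norm_sub' 1 (ξ ^ n)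
    have habs : ‖1 - ξ ^ n‖ = ‖ξ ^ n - 1‖ := by
      rw [← norm_neg]; ring_nf
    simp only [norm_one, norm_pow] at this
    rw [habs] at this
    linarith
  unfold gam
  rw [← ha]
  split_ifs with h1 h2
  · rw [max_eq_right h1.le]
    have hinv : a * a⁻¹ = 1 := mul_inv_cancel₀ (by linarith)
    have hle : a ≤ a ^ n := le_self_pow₀ (by linarith) (by omega)
    have h2' : a⁻¹ * a ^ n ≥ 1 := by
      calc a⁻¹ * a ^ n ≥ a⁻¹ * a := by
            apply mul_le_mul_of_nonneg_left hle (by positivity)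
        _ = 1 := by rw [mul_comm]; exact hinv
    nlinarith [htri1]
  · rw [max_eq_left h2.le, one_pow, mul_one]
    have hpow : a ^ n ≤ a := by
      calc a ^ n ≤ a ^ 1 := pow_le_pow_of_le_one ha0 h2.le hn
        _ = a := pow_one a
    linarith
  · have haeq : a = 1 := le_antisymm (not_lt.mp h1) (not_lt.mp h2)
    rw [haeq]
    simp only [max_self, one_pow, mul_one]
    exact le_trans (min_le_left _ _) (hgood haeq)

lemma prod_abs_upper (R : Multiset ℂ) (n : ℕ) :
    (R.map fun ξ => ‖ξ ^ n - 1‖).prod ≤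
      2 ^ R.card * ((R.map fun ξ => max 1 (‖ξ‖)).prod) ^ n := by
  have h := Multiset.prod_map_le_prod_map₀ (s := R)
    (fun ξ => ‖ξ ^ n - 1‖) (fun ξ => 2 * max 1 (‖ξ‖) ^ n)
    (fun ξ _ => norm_nonneg _) (fun ξ _ => abs_pow_sub_one_le ξ n)
  calc (R.map fun ξ => ‖ξ ^ n - 1‖).prod
      ≤ (R.map fun ξ => 2 * max 1 (‖ξ‖) ^ n).prod := h
    _ = (R.map fun _ => (2:ℝ)).prod * (R.map fun ξ => max 1 (‖ξ‖) ^ n).prod :=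
        Multiset.prod_map_mul
    _ = 2 ^ R.card * ((R.map fun ξ => max 1 (‖ξ‖)).prod) ^ n := by
        rw [Multiset.map_const', Multiset.prod_replicate, ← Multiset.prod_map_pow]

lemma prod_abs_lower (R : Multiset ℂ) {ε : ℝ} (hε : 0 < ε) {n : ℕ} (hn : 1 ≤ n)
    (hgood : ∀ ξ ∈ R, ‖ξ‖ = 1 → ε ≤ ‖ξ ^ n - 1‖) :
    (R.map (gam ε)).prod * ((R.map fun ξ => max 1 (‖ξ‖)).prod) ^ n ≤
      (R.map fun ξ => ‖ξ ^ n - 1‖).prod := by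
  have heq : (R.map (gam ε)).prod * ((R.map fun ξ => max 1 (‖ξ‖)).prod) ^ n
      = (R.map fun ξ => gam ε ξ * max 1 (‖ξ‖) ^ n).prod := by
    rw [Multiset.prod_map_mul, ← Multiset.prod_map_pow]
  rw [heq]
  apply Multiset.prod_map_le_prod_map₀
  · intro ξ _
    have := gam_pos hε ξ
    positivity
  · intro ξ hξ
    exact gam_le_abs_pow_sub_one hε hn (hgood ξ hξ)

lemma prod_gam_pos (R : Multiset ℂ) {ε : ℝ} (hε : 0 < ε) : 0 < (R.map (gam ε)).prod :=
  Multiset.prod_pos fun x hx => by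
    obtain ⟨ξ, _, rfl⟩ := Multiset.mem_map.mp hx
    exact gam_pos hε ξ

lemma one_le_prod_max (R : Multiset ℂ) :
    1 ≤ (R.map fun ξ => max 1 (‖ξ‖)).prod :=
  Multiset.one_le_prod fun x hx => by
    obtain ⟨ξ, _, rfl⟩ := Multiset.mem_map.mp hx
    exact le_max_left _ _

/-! ### Counting -/

variable {X : Type*} (f : X → X)

noncomputable def mpCount (l : ℕ) : ℕ := Nat.card {x : X // Function.minimalPeriod f x = l}

lemma mp_subset_fix {l : ℕ} :
    {x : X | Function.minimalPeriod f x = l} ⊆ Function.fixedPoints (f^[l]) := by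
  intro x hx
  have h := Function.isPeriodicPt_minimalPeriod f x
  rw [Set.mem_setOf_eq] at hx
  rw [hx] at h
  exact h

lemma mpCount_le_fix (hfin : ∀ n : ℕ, 1 ≤ n → (Function.fixedPoints (f^[n])).Finite)
    {l : ℕ} (hl : 1 ≤ l) : mpCount f l ≤ Nat.card (Function.fixedPoints (f^[l])) := by
  have hsub := mp_subset_fix f (l := l)
  have : Finite ↥(Function.fixedPoints (f^[l])) := (hfin l hl).to_subtype
  exact Nat.card_le_card_of_injective (Set.inclusion hsub) (Set.inclusion_injective hsub)

lemma fix_card_eq_sum (hfin : ∀ n : ℕ, 1 ≤ n → (Function.fixedPoints (f^[n])).Finite)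
    {n : ℕ} (hn : 1 ≤ n) :
    Nat.card (Function.fixedPoints (f^[n])) = ∑ l ∈ n.divisors, mpCount f l := by
  classical
  set F : Finset X := (hfin n hn).toFinset with hF
  have h1 : Nat.card (Function.fixedPoints (f^[n])) = F.card := by
    rw [hF, Nat.card_coe_set_eq, Set.ncard_eq_toFinset_card _ (hfin n hn)]
  have hmaps : ∀ x ∈ F, Function.minimalPeriod f x ∈ n.divisors := by
    intro x hx
    rw [hF, Set.Finite.mem_toFinset] at hx
    have hper : Function.IsPeriodicPt f n x := hx
    exact Nat.mem_divisors.mpr ⟨hper.minimalPeriod_dvd, by omega⟩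
  rw [h1, Finset.card_eq_sum_card_fiberwise hmaps]
  apply Finset.sum_congr rfl
  intro l hl
  obtain ⟨hdvd, hn0⟩ := Nat.mem_divisors.mp hl
  have hseteq : ((F.filter fun x => Function.minimalPeriod f x = l : Finset X) : Set X)
      = {x : X | Function.minimalPeriod f x = l} := by
    ext x
    simp only [Finset.coe_filter, Set.mem_setOf_eq, hF, Set.Finite.mem_toFinset]
    constructor
    · rintro ⟨_, h⟩; exact h
    · intro h
      refine ⟨?_, h⟩
      have hper := Function.isPeriodicPt_minimalPeriod f x
      rw [h] at hper
      exact hper.trans_dvd hdvd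
  have : mpCount f l = ((F.filter fun x => Function.minimalPeriod f x = l : Finset X) : Set X).ncard := by
    rw [hseteq, mpCount, ← Nat.card_coe_set_eq]
    rfl
  rw [this, Set.ncard_coe_finset]

lemma mul_orbitCount_le {l : ℕ} : l * orbitCount f l ≤ mpCount f l := by
  rw [orbitCount, mul_comm]
  exact Nat.div_mul_le_self _ _

lemma mpCount_le_mul_orbitCount {l : ℕ} (hl : 1 ≤ l) :
    mpCount f l ≤ l * orbitCount f l + l := by
  have h2 : mpCount f l % l < l := Nat.mod_lt _ (by omega)
  have h3 : mpCount f l = l * (mpCount f l / l) + mpCount f l % l := (Nat.div_add_mod _ _).symm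
  show mpCount f l ≤ l * (mpCount f l / l) + l
  omega

lemma fix_le_orbit_bound (hfin : ∀ n : ℕ, 1 ≤ n → (Function.fixedPoints (f^[n])).Finite)
    {n : ℕ} (hn : 1 ≤ n) :
    Nat.card (Function.fixedPoints (f^[n])) ≤
      n * orbitCount f n + n + ∑ l ∈ Finset.Icc 1 (n / 2), Nat.card (Function.fixedPoints (f^[l])) := by
  rw [fix_card_eq_sum f hfin hn, ← Nat.cons_self_properDivisors (by omega : n ≠ 0),
    Finset.sum_cons]
  have h1 : mpCount f n ≤ n * orbitCount f n + n := mpCount_le_mul_orbitCount f hn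
  have h2 : ∑ l ∈ n.properDivisors, mpCount f l ≤
      ∑ l ∈ Finset.Icc 1 (n / 2), Nat.card (Function.fixedPoints (f^[l])) := by
    have hsub : n.properDivisors ⊆ Finset.Icc 1 (n / 2) := by
      intro l hl
      obtain ⟨hdvd, hlt⟩ := Nat.mem_properDivisors.mp hl
      have hl1 : 1 ≤ l := Nat.pos_of_dvd_of_pos hdvd (by omega)
      obtain ⟨k, hk⟩ := hdvd
      have hk2 : 2 ≤ k := by
        rcases Nat.lt_or_ge k 2 with h | h
        · interval_cases k <;> omega
        · exact h
      refine Finset.mem_Icc.mpr ⟨hl1, ?_⟩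
      rw [Nat.le_div_iff_mul_le (by norm_num)]
      nlinarith
    calc ∑ l ∈ n.properDivisors, mpCount f l
        ≤ ∑ l ∈ n.properDivisors, Nat.card (Function.fixedPoints (f^[l])) := by
          apply Finset.sum_le_sum
          intro l hl
          exact mpCount_le_fix f hfin (Nat.pos_of_mem_properDivisors hl)
      _ ≤ _ := Finset.sum_le_sum_of_subset hsub
  omega

/-! ### Geometric sums -/

lemma partial_sum_geom {Λ : ℝ} (hΛ : 1 < Λ) :
    ∃ K : ℝ, 0 < K ∧ ∀ N : ℕ, 1 ≤ N →
      ∑ l ∈ Finset.Icc 1 N, ((N : ℝ) / l) * Λ ^ l ≤ K * Λ ^ N := by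
  set x : ℝ := Λ⁻¹ with hx
  have hx0 : 0 ≤ x := by positivity
  have hx1 : x < 1 := inv_lt_one_of_one_lt₀ hΛ
  have hs1 : HasSum (fun i : ℕ => (i : ℝ) * x ^ i) (x / (1 - x) ^ 2) :=
    hasSum_coe_mul_geometric_of_norm_lt_one (by rw [Real.norm_eq_abs, abs_of_nonneg hx0]; exact hx1)
  have hs2 : HasSum (fun i : ℕ => x ^ i) (1 - x)⁻¹ := hasSum_geometric_of_lt_one hx0 hx1
  set K : ℝ := x / (1 - x) ^ 2 + (1 - x)⁻¹ with hK
  have hs : HasSum (fun i : ℕ => ((i : ℝ) + 1) * x ^ i) K := by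
    have := hs1.add hs2
    convert this using 2 with i
    ring
  have hx1' : 0 < 1 - x := by linarith
  have hKpos : 0 < K := by
    have h1 : 0 < (1 - x)⁻¹ := by positivity
    have h2 : 0 ≤ x / (1 - x) ^ 2 := by positivity
    rw [hK]; linarith
  refine ⟨K, hKpos, fun N hN => ?_⟩
  have hΛ0 : (0:ℝ) < Λ := by linarith
  have hre : ∑ l ∈ Finset.Icc 1 N, ((N : ℝ) / l) * Λ ^ l
      = ∑ i ∈ Finset.range N, ((N : ℝ) / (N - i : ℕ)) * Λ ^ (N - i : ℕ) := by
    have h0 : Finset.Icc 1 N = Finset.Ico 1 (N + 1) := by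
      rw [Finset.Ico_add_one_right_eq_Icc]
    rw [h0, Finset.sum_Ico_eq_sum_range]
    simp only [Nat.add_sub_cancel]
    rw [← Finset.sum_range_reflect]
    apply Finset.sum_congr rfl
    intro i hi
    have hiN : i < N := Finset.mem_range.mp hi
    have hidx : 1 + (N - 1 - i) = N - i := by omega
    rw [hidx]
  rw [hre]
  have hbound : ∀ i ∈ Finset.range N,
      ((N : ℝ) / (N - i : ℕ)) * Λ ^ (N - i : ℕ) ≤ (((i:ℝ) + 1) * x ^ i) * Λ ^ N := by
    intro i hi
    have hiN : i < N := Finset.mem_range.mp hi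
    have hj1 : 1 ≤ N - i := by omega
    have hcast : ((N - i : ℕ) : ℝ) = (N : ℝ) - i := by
      push_cast [Nat.cast_sub hiN.le]; ring
    have hpow : Λ ^ (N - i : ℕ) = Λ ^ N * x ^ i := by
      have hsplit : Λ ^ N = Λ ^ (N - i) * Λ ^ i := by
        rw [← pow_add]
        congr 1
        omega
      rw [hsplit, hx]
      field_simp
      rw [one_div, inv_pow, mul_inv_cancel₀ (pow_ne_zero _ hΛ0.ne')]
    have hNi : (0:ℝ) < (N:ℝ) - i := by
      have : (i:ℝ) < N := by exact_mod_cast hiN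
      linarith
    have hdiv : (N : ℝ) / (N - i : ℕ) ≤ (i : ℝ) + 1 := by
      rw [hcast, div_le_iff₀ hNi]
      have h1 : (1:ℝ) ≤ (N:ℝ) - i := by
        have h2 : (1:ℝ) ≤ ((N - i : ℕ) : ℝ) := by exact_mod_cast hj1
        linarith [hcast]
      nlinarith [Nat.cast_nonneg (α := ℝ) i]
    calc ((N : ℝ) / (N - i : ℕ)) * Λ ^ (N - i : ℕ)
        ≤ ((i:ℝ) + 1) * Λ ^ (N - i : ℕ) := by
          apply mul_le_mul_of_nonneg_right hdiv (by positivity)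
      _ = (((i:ℝ) + 1) * x ^ i) * Λ ^ N := by rw [hpow]; ring
  calc ∑ i ∈ Finset.range N, ((N : ℝ) / (N - i : ℕ)) * Λ ^ (N - i : ℕ)
      ≤ ∑ i ∈ Finset.range N, (((i:ℝ) + 1) * x ^ i) * Λ ^ N := Finset.sum_le_sum hbound
    _ = (∑ i ∈ Finset.range N, ((i:ℝ) + 1) * x ^ i) * Λ ^ N := by
        rw [Finset.sum_mul]
    _ ≤ K * Λ ^ N := by
        apply mul_le_mul_of_nonneg_right _ (by positivity)
        apply Summable.sum_le_tsum _ (fun i _ => by positivity) hs.summable |>.trans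
        rw [hs.tsum_eq]

end FADaux


/-- the set of accumulation points of `N·π_f(N)/Λ^N` is a compact
subset of `(0, +∞)`. -/
theorem fad_accumulation_compact {X : Type*} (f : X → X)
    (hfin : ∀ n : ℕ, 1 ≤ n → (Function.fixedPoints (f^[n])).Finite)
    {k : ℕ} (A : Matrix (Fin k) (Fin k) ℤ) (S : Finset ℕ) (c : ℝ)
    (r : ℕ → ℝ) (s t : ℕ → ℕ → ℝ)
    (hFAD : IsFADWith (fixCount f) A S c r s t)
    (hΛ : 1 < expEntropy A c) :
    IsCompact (accPoints fun N : ℕ =>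
      (N : ℝ) * (orbitCountBelow f N : ℝ) / expEntropy A c ^ N) ∧
    (accPoints fun N : ℕ =>
      (N : ℝ) * (orbitCountBelow f N : ℝ) / expEntropy A c ^ N) ⊆ Set.Ioi (0 : ℝ) := by
  classical
  obtain ⟨hnr, hprime, hc, hgcd_r, hrpos, hs, ht, heqa⟩ := hFAD
  obtain ⟨dr, hdr1, hdr⟩ := hgcd_r
  set M : Matrix (Fin k) (Fin k) ℂ := A.map (Int.cast : ℤ → ℂ) with hM
  set R : Multiset ℂ := M.charpoly.roots with hR
  set P : ℝ := (R.map fun ξ => max 1 (‖ξ‖)).prod with hP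
  have hP1 : (1:ℝ) ≤ P := FADaux.one_le_prod_max R
  set Λ : ℝ := expEntropy A c with hΛdef
  have hΛeq : Λ = c * P := by rw [hΛdef, expEntropy]
  have hΛpos : (0:ℝ) < Λ := lt_trans one_pos hΛ
  set aN : ℕ → ℕ := fun n => Nat.card (Function.fixedPoints (f^[n])) with haN
  have ha : ∀ n, 1 ≤ n → (aN n : ℝ)
      = (R.map fun ξ => ‖ξ ^ n - 1‖).prod * c ^ n * fadFactor S r s t n := by
    intro n hn
    have h1 := heqa n hn
    rw [fixCount] at h1
    rw [← FADaux.abs_det_cast A hn]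
    exact_mod_cast h1
  -- fadFactor bounds
  obtain ⟨rlo, rhi, ⟨n₀r, hn₀r1, hrloeq⟩, hrbnd⟩ := FADaux.gcdSeq_bounds hdr1 hdr
  have hrlo_pos : 0 < rlo := by rw [hrloeq]; exact hrpos _ hn₀r1
  have hFhi : ∀ n, 1 ≤ n → fadFactor S r s t n ≤ rhi := fun n hn =>
    FADaux.fadFactor_le hprime (fun m hm => (hrbnd m hm).2)
      (fun p hp => (hs p hp).2) (fun p hp => (ht p hp).2) hrpos hn
  have hrhi_pos : 0 < rhi :=
    lt_of_lt_of_le (FADaux.fadFactor_pos (s := s) (t := t) hprime hrpos (le_refl 1)) (hFhi 1 (le_refl 1))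
  have hTex : ∀ p ∈ S, ∃ B : ℝ, ∀ n, 1 ≤ n → t p n ≤ B := by
    intro p hp
    obtain ⟨⟨dp, hdp1, _, hdp⟩, _⟩ := ht p hp
    obtain ⟨lo', hi', _, hb⟩ := FADaux.gcdSeq_bounds hdp1 hdp
    exact ⟨hi', fun n hn => (hb n hn).2⟩
  obtain ⟨T, hT0, hTbnd⟩ := FADaux.exists_uniform_bound S t hTex
  set Flo : ℝ := rlo * ∏ p ∈ S, (p:ℝ) ^ (-T) with hFloDef
  have hFlo_pos : 0 < Flo := mul_pos hrlo_pos (Finset.prod_pos fun p hp =>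
    Real.rpow_pos_of_pos (by exact_mod_cast (hprime p hp).pos) _)
  have hFlo_le : ∀ n, 1 ≤ n → (∀ p ∈ S, ¬ p ∣ n) → Flo ≤ fadFactor S r s t n :=
    fun n hn hcop => FADaux.fadFactor_lower hprime hrlo_pos hT0
      (fun m hm => (hrbnd m hm).1) hTbnd hn hcop
  -- upper bound for aN
  set C : ℝ := 2 ^ R.card * rhi with hCdef
  have hCpos : 0 < C := by positivity
  have haUp : ∀ n, 1 ≤ n → (aN n : ℝ) ≤ C * Λ ^ n := by
    intro n hn
    rw [ha n hn]
    have hD := FADaux.prod_abs_upper R n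
    rw [← hP] at hD
    have hDnn : (0:ℝ) ≤ (R.map fun ξ => ‖ξ ^ n - 1‖).prod :=
      Multiset.prod_nonneg fun x hx => by
        obtain ⟨ξ, _, rfl⟩ := Multiset.mem_map.mp hx
        exact norm_nonneg _
    have hFn := hFhi n hn
    have hFpos := FADaux.fadFactor_pos (s := s) (t := t) hprime hrpos hn
    have hcn : (0:ℝ) < c ^ n := pow_pos hc n
    have hPn : (0:ℝ) < P ^ n := by positivity
    calc (R.map fun ξ => ‖ξ ^ n - 1‖).prod * c ^ n * fadFactor S r s t n
        ≤ (2 ^ R.card * P ^ n) * c ^ n * rhi := by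
          apply mul_le_mul _ hFn hFpos.le (by positivity)
          exact mul_le_mul hD le_rfl hcn.le (by positivity)
      _ = C * Λ ^ n := by rw [hCdef, hΛeq, mul_pow]; ring
  -- window / lower bound
  set Q : ℕ := ∏ p ∈ S, p with hQdef
  have hQpos : 0 < Q := Finset.prod_pos fun p hp => (hprime p hp).pos
  have hQ1 : 1 ≤ Q := hQpos
  have hnr' : ∀ ξ ∈ R, ∀ m : ℕ, 1 ≤ m → ξ ^ m ≠ 1 := by
    intro ξ hξ
    apply hnr ξ
    rw [hR, hM] at hξ
    exact Polynomial.isRoot_of_mem_roots hξ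
  obtain ⟨ε, hεpos, hwin⟩ := FADaux.window_lemma R hnr' hQ1
  set δ : ℝ := (R.map (FADaux.gam ε)).prod with hδdef
  have hδpos : 0 < δ := FADaux.prod_gam_pos R hεpos
  set J : ℕ := R.card * Q + Q with hJdef
  have hwindow : ∀ N : ℕ, 2 * J + 2 ≤ N → ∃ n : ℕ, 1 ≤ n ∧ n ≤ N ∧ N < n + J ∧
      δ * Flo * Λ ^ n ≤ (aN n : ℝ) := by
    intro N hN
    set m : ℕ := (N - 1) % Q with hm
    have hmQ : m < Q := Nat.mod_lt _ (by omega)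
    set n₀ : ℕ := N - m with hn₀
    have hdm : Q * ((N - 1) / Q) + m = N - 1 := Nat.div_add_mod _ _
    have hwn₀ : R.card * Q + 1 ≤ n₀ := by omega
    obtain ⟨j, hjle, hgood⟩ := hwin n₀ hwn₀
    set n : ℕ := n₀ - j * Q with hn
    have hjQ : j * Q ≤ R.card * Q := Nat.mul_le_mul_right Q hjle
    have hn1 : 1 ≤ n := by omega
    have hnN : n ≤ N := by omega
    have hNnJ : N < n + J := by omega
    have hdvd : Q ∣ n - 1 := by
      have hcomm : Q * j = j * Q := mul_comm _ _
      have h1 : n - 1 = Q * ((N - 1) / Q) - Q * j := by omega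
      rw [h1]
      exact Nat.dvd_sub (Dvd.intro _ rfl) (Dvd.intro _ rfl)
    have hcop : ∀ p ∈ S, ¬ p ∣ n := by
      intro p hp hpn
      have hpQ : p ∣ Q := by rw [hQdef]; exact Finset.dvd_prod_of_mem _ hp
      have hp1 : p ∣ n - (n - 1) := Nat.dvd_sub hpn (hpQ.trans hdvd)
      have hone : n - (n - 1) = 1 := by omega
      rw [hone] at hp1
      exact Nat.Prime.one_lt (hprime p hp) |>.ne' (Nat.eq_one_of_dvd_one hp1)
    refine ⟨n, hn1, hnN, hNnJ, ?_⟩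
    rw [ha n hn1]
    have hDlow := FADaux.prod_abs_lower R hεpos hn1 hgood
    rw [← hδdef, ← hP] at hDlow
    have hFl := hFlo_le n hn1 hcop
    have hcn : (0:ℝ) < c ^ n := pow_pos hc n
    have hDcn_nn : (0:ℝ) ≤ (R.map fun ξ => ‖ξ ^ n - 1‖).prod * c ^ n := by
      apply mul_nonneg _ hcn.le
      exact Multiset.prod_nonneg fun x hx => by
        obtain ⟨ξ, _, rfl⟩ := Multiset.mem_map.mp hx
        exact norm_nonneg _
    calc δ * Flo * Λ ^ n = ((δ * P ^ n) * c ^ n) * Flo := by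
          rw [hΛeq, mul_pow]; ring
      _ ≤ ((R.map fun ξ => ‖ξ ^ n - 1‖).prod * c ^ n) * fadFactor S r s t n := by
          apply mul_le_mul _ hFl hFlo_pos.le hDcn_nn
          exact mul_le_mul_of_nonneg_right hDlow hcn.le
      _ = _ := rfl
  -- counting upper
  obtain ⟨K, hKpos, hKbnd⟩ := FADaux.partial_sum_geom hΛ
  have hUpper : ∀ N : ℕ, 1 ≤ N → (N:ℝ) * (orbitCountBelow f N : ℝ) ≤ (C * K) * Λ ^ N := by
    intro N hN
    rw [orbitCountBelow]
    push_cast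
    rw [Finset.mul_sum]
    have hterm : ∀ l ∈ Finset.Icc 1 N,
        (N:ℝ) * (orbitCount f l : ℝ) ≤ C * (((N:ℝ) / l) * Λ ^ l) := by
      intro l hl
      obtain ⟨hl1, hlN⟩ := Finset.mem_Icc.mp hl
      have hlpos : (0:ℝ) < (l:ℝ) := by exact_mod_cast hl1
      have h1 : (l:ℝ) * (orbitCount f l : ℝ) ≤ (aN l : ℝ) := by
        have hnat := le_trans (FADaux.mul_orbitCount_le f (l := l))
          (FADaux.mpCount_le_fix f hfin hl1)
        exact_mod_cast hnat
      have h2 : (aN l : ℝ) ≤ C * Λ ^ l := haUp l hl1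
      have h3 : (N:ℝ) * (orbitCount f l : ℝ) = ((N:ℝ) / l) * ((l:ℝ) * (orbitCount f l : ℝ)) := by
        field_simp
      rw [h3]
      calc ((N:ℝ) / l) * ((l:ℝ) * (orbitCount f l : ℝ))
          ≤ ((N:ℝ) / l) * (C * Λ ^ l) := by
            apply mul_le_mul_of_nonneg_left (h1.trans h2) (by positivity)
        _ = C * (((N:ℝ) / l) * Λ ^ l) := by ring
    calc ∑ l ∈ Finset.Icc 1 N, (N:ℝ) * (orbitCount f l : ℝ)
        ≤ ∑ l ∈ Finset.Icc 1 N, C * (((N:ℝ) / l) * Λ ^ l) := Finset.sum_le_sum hterm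
      _ = C * ∑ l ∈ Finset.Icc 1 N, ((N:ℝ) / l) * Λ ^ l := by rw [← Finset.mul_sum]
      _ ≤ C * (K * Λ ^ N) := mul_le_mul_of_nonneg_left (hKbnd N hN) hCpos.le
      _ = (C * K) * Λ ^ N := by ring
  -- counting lower
  set c₀ : ℝ := δ * Flo / Λ ^ J with hc₀def
  have hc₀pos : 0 < c₀ := by positivity
  have hLower : ∀ N : ℕ, 2 * J + 2 ≤ N →
      c₀ * Λ ^ N - ((N:ℝ) + C * N * Λ ^ (N / 2)) ≤ (N:ℝ) * (orbitCountBelow f N : ℝ) := by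
    intro N hN
    obtain ⟨n, hn1, hnN, hNnJ, hlow⟩ := hwindow N hN
    -- nat inequality: aN n ≤ N * orbitCountBelow f N + N + ∑_{l ≤ n/2} aN l
    have hnat : aN n ≤ N * orbitCountBelow f N + N + ∑ l ∈ Finset.Icc 1 (n / 2), aN l := by
      have h1 := FADaux.fix_le_orbit_bound f hfin hn1
      have h2 : orbitCount f n ≤ orbitCountBelow f N := by
        rw [orbitCountBelow]
        apply Finset.single_le_sum (fun l _ => Nat.zero_le _)
        exact Finset.mem_Icc.mpr ⟨hn1, hnN⟩
      have h3 : n * orbitCount f n ≤ N * orbitCountBelow f N := Nat.mul_le_mul hnN h2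
      calc aN n ≤ n * orbitCount f n + n + ∑ l ∈ Finset.Icc 1 (n / 2), aN l := h1
        _ ≤ N * orbitCountBelow f N + N + ∑ l ∈ Finset.Icc 1 (n / 2), aN l := by omega
    -- sum bound
    have hsum : (∑ l ∈ Finset.Icc 1 (n / 2), (aN l : ℝ)) ≤ C * N * Λ ^ (N / 2) := by
      have hterm : ∀ l ∈ Finset.Icc 1 (n / 2), (aN l : ℝ) ≤ C * Λ ^ (N / 2) := by
        intro l hl
        obtain ⟨hl1, hl2⟩ := Finset.mem_Icc.mp hl
        have hle : l ≤ N / 2 := le_trans hl2 (Nat.div_le_div_right hnN)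
        calc (aN l : ℝ) ≤ C * Λ ^ l := haUp l hl1
          _ ≤ C * Λ ^ (N / 2) :=
            mul_le_mul_of_nonneg_left (pow_le_pow_right₀ hΛ.le hle) hCpos.le
      calc (∑ l ∈ Finset.Icc 1 (n / 2), (aN l : ℝ))
          ≤ (Finset.Icc 1 (n / 2)).card • (C * Λ ^ (N / 2)) :=
            Finset.sum_le_card_nsmul _ _ _ hterm
        _ = ((n / 2 : ℕ) : ℝ) * (C * Λ ^ (N / 2)) := by
            rw [Nat.card_Icc, nsmul_eq_mul]
            norm_num
        _ ≤ (N:ℝ) * (C * Λ ^ (N / 2)) := by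
            apply mul_le_mul_of_nonneg_right _ (by positivity)
            exact_mod_cast le_trans (Nat.div_le_self n 2) hnN
        _ = C * N * Λ ^ (N / 2) := by ring
    -- lower bound for aN n in terms of Λ^N
    have hΛn : c₀ * Λ ^ N ≤ δ * Flo * Λ ^ n := by
      rw [hc₀def]
      rw [div_mul_eq_mul_div, div_le_iff₀ (by positivity)]
      calc δ * Flo * Λ ^ N ≤ δ * Flo * (Λ ^ n * Λ ^ J) := by
            apply mul_le_mul_of_nonneg_left _ (by positivity)
            rw [← pow_add]
            exact pow_le_pow_right₀ hΛ.le (by omega)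
        _ = δ * Flo * Λ ^ n * Λ ^ J := by ring
    -- combine
    have hreal : (aN n : ℝ) ≤ (N:ℝ) * (orbitCountBelow f N : ℝ) + N +
        ∑ l ∈ Finset.Icc 1 (n / 2), (aN l : ℝ) := by
      have := hnat
      push_cast
      exact_mod_cast Nat.cast_le.mpr this |>.trans (by push_cast; linarith [le_refl (0:ℝ)])
    have h5 : c₀ * Λ ^ N ≤ (aN n : ℝ) := le_trans hΛn hlow
    linarith [hsum, hreal, h5]
  -- error term tends to zero
  have hxlt : Λ⁻¹ < 1 := inv_lt_one_of_one_lt₀ hΛ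
  have hx0 : (0:ℝ) ≤ Λ⁻¹ := by positivity
  have hw : Filter.Tendsto (fun m : ℕ => (m:ℝ) * Λ⁻¹ ^ m) Filter.atTop (nhds 0) := by
    have hsum : Summable (fun m : ℕ => (m:ℝ) * Λ⁻¹ ^ m) :=
      (hasSum_coe_mul_geometric_of_norm_lt_one
        (by rw [Real.norm_eq_abs, abs_of_nonneg hx0]; exact hxlt)).summable
    exact hsum.tendsto_atTop_zero
  have hmN : Filter.Tendsto (fun N : ℕ => N - N / 2) Filter.atTop Filter.atTop := by
    apply Filter.tendsto_atTop.mpr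
    intro b
    exact Filter.eventually_atTop.mpr ⟨2 * b, fun N hN => by omega⟩
  have hw2 : Filter.Tendsto (fun N : ℕ => ((N - N / 2 : ℕ):ℝ) * Λ⁻¹ ^ (N - N / 2))
      Filter.atTop (nhds 0) := hw.comp hmN
  set errf : ℕ → ℝ := fun N => ((N:ℝ) + C * N * Λ ^ (N / 2)) / Λ ^ N with herrf
  have herr : Filter.Tendsto errf Filter.atTop (nhds 0) := by
    have hbound : ∀ N : ℕ, errf N ≤
        (2 * (1 + C)) * (((N - N / 2 : ℕ):ℝ) * Λ⁻¹ ^ (N - N / 2)) := by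
      intro N
      set mm : ℕ := N - N / 2 with hmm
      have hsplit : Λ ^ N = Λ ^ (N / 2) * Λ ^ mm := by
        rw [← pow_add]; congr 1; omega
      have hxmnn : (0:ℝ) ≤ Λ⁻¹ ^ mm := by positivity
      have h1 : errf N = (N:ℝ) * (Λ⁻¹) ^ N + C * N * (Λ⁻¹) ^ mm := by
        rw [herrf]
        simp only
        rw [add_div]
        congr 1
        · rw [inv_pow, div_eq_mul_inv]
        · rw [hsplit]
          field_simp
          ring_nf
          rw [mul_assoc, ← mul_pow, mul_inv_cancel₀ hΛpos.ne', one_pow, mul_one]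
      have h2 : (Λ⁻¹ : ℝ) ^ N ≤ Λ⁻¹ ^ mm :=
        pow_le_pow_of_le_one hx0 hxlt.le (by omega)
      have h3 : (N:ℝ) ≤ 2 * ((mm : ℕ):ℝ) := by
        have : N ≤ 2 * mm := by omega
        exact_mod_cast this
      have hNnn : (0:ℝ) ≤ (N:ℝ) := Nat.cast_nonneg N
      rw [h1]
      have e1 : (N:ℝ) * (Λ⁻¹) ^ N ≤ (N:ℝ) * (Λ⁻¹) ^ mm :=
        mul_le_mul_of_nonneg_left h2 hNnn
      have e2 : (N:ℝ) * (Λ⁻¹) ^ mm ≤ 2 * ((mm:ℕ):ℝ) * (Λ⁻¹) ^ mm :=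
        mul_le_mul_of_nonneg_right h3 hxmnn
      have e3 : C * N * (Λ⁻¹) ^ mm ≤ C * (2 * ((mm:ℕ):ℝ)) * (Λ⁻¹) ^ mm := by
        apply mul_le_mul_of_nonneg_right _ hxmnn
        exact mul_le_mul_of_nonneg_left h3 hCpos.le
      calc (N:ℝ) * (Λ⁻¹) ^ N + C * N * (Λ⁻¹) ^ mm
          ≤ 2 * ((mm:ℕ):ℝ) * (Λ⁻¹) ^ mm + C * (2 * ((mm:ℕ):ℝ)) * (Λ⁻¹) ^ mm := by
            linarith [e1.trans e2, e3]
        _ = (2 * (1 + C)) * (((mm:ℕ):ℝ) * Λ⁻¹ ^ mm) := by ring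
    have hlim : Filter.Tendsto
        (fun N : ℕ => (2 * (1 + C)) * (((N - N / 2 : ℕ):ℝ) * Λ⁻¹ ^ (N - N / 2)))
        Filter.atTop (nhds 0) := by
      have := hw2.const_mul (2 * (1 + C))
      simpa using this
    apply squeeze_zero (fun N => by positivity) hbound hlim
  -- conclude
  have hhalf : (0:ℝ) < c₀ / 2 := by positivity
  have hev : ∀ᶠ N in Filter.atTop, errf N < c₀ / 2 :=
    herr.eventually (gt_mem_nhds hhalf)
  obtain ⟨N₁, hN₁⟩ := Filter.eventually_atTop.mp hev
  set N₀ : ℕ := max (2 * J + 2) (max N₁ 1) with hN₀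
  have hbnd : ∀ N, N₀ ≤ N →
      ((N:ℝ) * (orbitCountBelow f N : ℝ) / Λ ^ N) ∈ Set.Icc (c₀ / 2) (C * K) := by
    intro N hN
    have hN1 : 1 ≤ N := le_trans (le_max_of_le_right (le_max_right _ _)) hN
    have hNJ : 2 * J + 2 ≤ N := le_trans (le_max_left _ _) hN
    have hNN₁ : N₁ ≤ N := le_trans (le_max_of_le_right (le_max_left _ _)) hN
    have hΛN : (0:ℝ) < Λ ^ N := by positivity
    constructor
    · rw [le_div_iff₀ hΛN]
      have h1 := hLower N hNJ
      have h2 : errf N < c₀ / 2 := hN₁ N hNN₁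
      have h3 : ((N:ℝ) + C * N * Λ ^ (N / 2)) = errf N * Λ ^ N := by
        rw [herrf]; field_simp
      nlinarith [hΛN, h1, h2, h3]
    · rw [div_le_iff₀ hΛN]
      exact hUpper N hN1
  exact FADaux.accPoints_compact_subset hhalf hbnd
end

section
/- Let (X, f) be a FAD-system with fixed point count f_n = #Fix(f^n) and exponential entropy Λ. Then the radius of convergence of the complex power series ζ_f(z) = exp(∑_{n≥1} f_n z^n / n) is equal to 1/Λ. -/
open scoped BigOperators
open Filter

namespace FadZeta
open Polynomial


noncomputable def zr (b : ℕ → ℝ) : ℕ → ℝ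
  | 0 => 1
  | n + 1 =>
    ((n : ℝ) + 1)⁻¹ * ∑ k ∈ Finset.range (n + 1), b (k + 1) * zr b (n - k)
  termination_by n => n
  decreasing_by omega

lemma zetaCoeff_eq_zr (b : ℕ → ℝ) (n : ℕ) :
    zetaCoeff (fun m => (b m : ℂ)) n = ((zr b n : ℝ) : ℂ) := by
  induction n using Nat.strong_induction_on with
  | _ n ih =>
    match n with
    | 0 => simp [zetaCoeff, zr]
    | n + 1 =>
      rw [zetaCoeff, zr]
      push_cast
      congr 1
      refine Finset.sum_congr rfl fun k hk => ?_
      rw [ih (n - k) (by omega)]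

lemma zr_nonneg (b : ℕ → ℝ) (hb : ∀ m, 1 ≤ m → 0 ≤ b m) (n : ℕ) : 0 ≤ zr b n := by
  induction n using Nat.strong_induction_on with
  | _ n ih =>
    match n with
    | 0 => simp [zr]
    | n + 1 =>
      rw [zr]
      refine mul_nonneg (by positivity) (Finset.sum_nonneg fun k hk => ?_)
      exact mul_nonneg (hb (k + 1) (by omega)) (ih (n - k) (by omega))

lemma zr_ge (b : ℕ → ℝ) (hb : ∀ m, 1 ≤ m → 0 ≤ b m) (n : ℕ) (hn : 1 ≤ n) :
    b n / n ≤ zr b n := by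
  obtain ⟨m, rfl⟩ : ∃ m, n = m + 1 := ⟨n - 1, by omega⟩
  rw [zr, div_eq_inv_mul]
  push_cast
  refine mul_le_mul_of_nonneg_left ?_ (by positivity)
  have : b (m + 1) = b (m + 1) * zr b (m - m) := by
    simp [zr, Nat.sub_self]
  rw [this]
  exact Finset.single_le_sum (f := fun k => b (k + 1) * zr b (m - k))
    (fun k hk => mul_nonneg (hb (k + 1) (by omega)) (zr_nonneg b hb _))
    (Finset.self_mem_range_succ m)

noncomputable def Qprod (C₀ : ℝ) (n : ℕ) : ℝ := ∏ j ∈ Finset.range n, (1 + C₀ / (j + 1))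

noncomputable def eseq (C₀ : ℝ) : ℕ → ℝ
  | 0 => 1
  | n + 1 => C₀ * Qprod C₀ n / (n + 1)

lemma one_le_Qprod {C₀ : ℝ} (hC : 0 ≤ C₀) (n : ℕ) : 1 ≤ Qprod C₀ n := by
  induction n with
  | zero => simp [Qprod]
  | succ n ih =>
    have h2 : 0 ≤ C₀ / ((n : ℝ) + 1) := by positivity
    have : Qprod C₀ (n + 1) = Qprod C₀ n * (1 + C₀ / ((n : ℝ) + 1)) :=
      Finset.prod_range_succ _ n
    rw [this]
    nlinarith

lemma eseq_nonneg {C₀ : ℝ} (hC : 0 ≤ C₀) (n : ℕ) : 0 ≤ eseq C₀ n := by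
  match n with
  | 0 => norm_num [eseq]
  | n + 1 =>
    have := one_le_Qprod hC n
    rw [eseq]
    positivity

lemma sum_eseq {C₀ : ℝ} (hC : 0 ≤ C₀) (n : ℕ) :
    ∑ m ∈ Finset.range (n + 1), eseq C₀ m = Qprod C₀ n := by
  induction n with
  | zero => simp [eseq, Qprod]
  | succ n ih =>
    rw [Finset.sum_range_succ, ih, eseq,
      show Qprod C₀ (n + 1) = Qprod C₀ n * (1 + C₀ / ((n : ℝ) + 1)) from Finset.prod_range_succ _ n]
    have h1 : ((n : ℝ) + 1) ≠ 0 := by positivity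
    field_simp

lemma eseq_le_Qprod {C₀ : ℝ} (hC : 0 ≤ C₀) (n : ℕ) : eseq C₀ n ≤ Qprod C₀ n := by
  rw [← sum_eseq hC]
  exact Finset.single_le_sum (fun m _ => eseq_nonneg hC m) (Finset.self_mem_range_succ n)

lemma zr_le (b : ℕ → ℝ) (hb0 : ∀ m, 1 ≤ m → 0 ≤ b m) {C₀ Λ : ℝ} (hC : 0 ≤ C₀) (hΛ : 0 < Λ)
    (hb : ∀ m, 1 ≤ m → b m ≤ C₀ * Λ ^ m) (n : ℕ) : zr b n ≤ Λ ^ n * eseq C₀ n := by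
  induction n using Nat.strong_induction_on with
  | _ n ih =>
    match n with
    | 0 => simp [zr, eseq]
    | n + 1 =>
      rw [zr]
      have step : ∀ k ∈ Finset.range (n + 1),
          b (k + 1) * zr b (n - k) ≤ C₀ * Λ ^ (n + 1) * eseq C₀ (n - k) := by
        intro k hk
        have hk' : k ≤ n := Nat.lt_succ_iff.mp (Finset.mem_range.mp hk)
        calc b (k + 1) * zr b (n - k)
            ≤ (C₀ * Λ ^ (k + 1)) * (Λ ^ (n - k) * eseq C₀ (n - k)) :=
              mul_le_mul (hb (k + 1) (by omega)) (ih (n - k) (by omega))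
                (zr_nonneg b hb0 _) (by positivity)
          _ = C₀ * Λ ^ (n + 1) * eseq C₀ (n - k) := by
              rw [show C₀ * Λ ^ (k + 1) * (Λ ^ (n - k) * eseq C₀ (n - k))
                = C₀ * (Λ ^ (k + 1) * Λ ^ (n - k)) * eseq C₀ (n - k) by ring, ← pow_add,
                show k + 1 + (n - k) = n + 1 from by omega]
      calc ((n : ℝ) + 1)⁻¹ * ∑ k ∈ Finset.range (n + 1), b (k + 1) * zr b (n - k)
          ≤ ((n : ℝ) + 1)⁻¹ * ∑ k ∈ Finset.range (n + 1), C₀ * Λ ^ (n + 1) * eseq C₀ (n - k) := by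
            refine mul_le_mul_of_nonneg_left (Finset.sum_le_sum step) (by positivity)
        _ = Λ ^ (n + 1) * eseq C₀ (n + 1) := by
            rw [← Finset.mul_sum,
              show (∑ k ∈ Finset.range (n + 1), eseq C₀ (n - k))
                = ∑ k ∈ Finset.range (n + 1), eseq C₀ (n + 1 - 1 - k) from
                Finset.sum_congr rfl fun k hk => by congr 1 <;> omega,
              Finset.sum_range_reflect, sum_eseq hC, eseq]
            have h1 : ((n : ℝ) + 1) ≠ 0 := by positivity
            field_simp

lemma zr_le' (b : ℕ → ℝ) (hb0 : ∀ m, 1 ≤ m → 0 ≤ b m) {C₀ Λ : ℝ} (hC : 0 ≤ C₀) (hΛ : 0 < Λ)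
    (hb : ∀ m, 1 ≤ m → b m ≤ C₀ * Λ ^ m) (n : ℕ) : zr b n ≤ Λ ^ n * Qprod C₀ n :=
  le_trans (zr_le b hb0 hC hΛ hb n)
    (mul_le_mul_of_nonneg_left (eseq_le_Qprod hC n) (by positivity))



lemma multiset_prod_nonneg (m : Multiset ℂ) (f : ℂ → ℝ) (h : ∀ x ∈ m, 0 ≤ f x) :
    0 ≤ (m.map f).prod := by
  induction m using Multiset.induction_on with
  | empty => simp
  | cons a m ih =>
    simp only [Multiset.map_cons, Multiset.prod_cons]
    exact mul_nonneg (h a (Multiset.mem_cons_self a m))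
      (ih fun x hx => h x (Multiset.mem_cons_of_mem hx))

lemma multiset_prod_pos (m : Multiset ℂ) (f : ℂ → ℝ) (h : ∀ x ∈ m, 0 < f x) :
    0 < (m.map f).prod := by
  induction m using Multiset.induction_on with
  | empty => simp
  | cons a m ih =>
    simp only [Multiset.map_cons, Multiset.prod_cons]
    exact mul_pos (h a (Multiset.mem_cons_self a m))
      (ih fun x hx => h x (Multiset.mem_cons_of_mem hx))

lemma multiset_prod_le (m : Multiset ℂ) (f g : ℂ → ℝ) (h : ∀ x ∈ m, 0 ≤ f x)
    (h2 : ∀ x ∈ m, f x ≤ g x) : (m.map f).prod ≤ (m.map g).prod := by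
  induction m using Multiset.induction_on with
  | empty => simp
  | cons a m ih =>
    simp only [Multiset.map_cons, Multiset.prod_cons]
    have hfa := h a (Multiset.mem_cons_self a m)
    have hga := h2 a (Multiset.mem_cons_self a m)
    exact mul_le_mul hga (ih (fun x hx => h x (Multiset.mem_cons_of_mem hx))
        (fun x hx => h2 x (Multiset.mem_cons_of_mem hx)))
      (multiset_prod_nonneg m f fun x hx => h x (Multiset.mem_cons_of_mem hx))
      (le_trans hfa hga)

lemma multiset_one_le_prod (m : Multiset ℂ) (f : ℂ → ℝ) (h : ∀ x ∈ m, 1 ≤ f x) :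
    1 ≤ (m.map f).prod := by
  have := multiset_prod_le m (fun _ => 1) f (by intro x _; norm_num) h
  simpa using this

lemma finset_multiset_swap (F : Finset ℂ) (m : Multiset ℂ) (g : ℂ → ℂ → ℂ) :
    ∏ i ∈ F, (m.map (g i)).prod = (m.map fun x => ∏ i ∈ F, g i x).prod := by
  induction m using Multiset.induction_on with
  | empty => simp
  | cons a m ih =>
    simp only [Multiset.map_cons, Multiset.prod_cons, Finset.prod_mul_distrib, ih]

lemma eval_charpoly' {k : ℕ} (B : Matrix (Fin k) (Fin k) ℂ) (μ : ℂ) :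
    B.charpoly.eval μ = (μ • (1 : Matrix (Fin k) (Fin k) ℂ) - B).det := by
  rw [Matrix.charpoly]
  rw [show Polynomial.eval μ (Matrix.charmatrix B).det
      = ((Matrix.charmatrix B).map (Polynomial.evalRingHom μ)).det from
    RingHom.map_det (Polynomial.evalRingHom μ) (Matrix.charmatrix B)]
  congr 1
  ext i j
  by_cases hij : i = j
  · subst hij
    simp [Matrix.charmatrix_apply_eq, Matrix.one_apply, Matrix.smul_apply]
  · simp [Matrix.charmatrix_apply_ne _ _ _ hij, Matrix.one_apply, hij, Matrix.smul_apply]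

lemma eval_charpoly_prod {k : ℕ} (B : Matrix (Fin k) (Fin k) ℂ) (μ : ℂ) :
    B.charpoly.eval μ = (B.charpoly.roots.map fun ξ => μ - ξ).prod := by
  conv_lhs => rw [Polynomial.Splits.eq_prod_roots_of_monic (IsAlgClosed.splits _)
    (Matrix.charpoly_monic B)]
  rw [Polynomial.eval_multiset_prod, Multiset.map_map]
  congr 1
  ext ξ
  simp

lemma det_aeval_prod {k : ℕ} (B : Matrix (Fin k) (Fin k) ℂ) (F : Finset ℂ) :
    (Polynomial.aeval B (∏ ω ∈ F, (X - C ω))).det = ∏ ω ∈ F, (B - ω • 1).det := by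
  classical
  induction F using Finset.induction_on with
  | empty => simp
  | insert ω F hω ih =>
    rw [Finset.prod_insert hω, Finset.prod_insert hω, map_mul, Matrix.det_mul, ih]
    congr 1
    rw [map_sub, Polynomial.aeval_X, Polynomial.aeval_C, Algebra.algebraMap_eq_smul_one]

lemma det_pow_sub_one {k : ℕ} (B : Matrix (Fin k) (Fin k) ℂ) (n : ℕ) (hn : 1 ≤ n) :
    (B ^ n - 1).det = (B.charpoly.roots.map fun ξ => ξ ^ n - 1).prod := by
  classical
  have hnpos : 0 < n := hn
  obtain ⟨ζ, hζ⟩ : ∃ ζ : ℂ, IsPrimitiveRoot ζ n := ⟨_, Complex.isPrimitiveRoot_exp n hnpos.ne'⟩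
  have hfac : (X : ℂ[X]) ^ n - 1 = ∏ ω ∈ nthRootsFinset n (1 : ℂ), (X - C ω) :=
    X_pow_sub_one_eq_prod hnpos hζ
  have hcard : (nthRootsFinset n (1 : ℂ)).card = n := hζ.card_nthRootsFinset
  have hBn : B ^ n - 1 = Polynomial.aeval B ((X : ℂ[X]) ^ n - 1) := by
    simp [map_sub, map_pow]
  rw [hBn, hfac, det_aeval_prod]
  have hdet : ∀ ω : ℂ, (B - ω • 1).det
      = (-1 : ℂ) ^ k * (B.charpoly.roots.map fun ξ => ω - ξ).prod := by
    intro ω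
    rw [← eval_charpoly_prod, eval_charpoly']
    rw [show (B - ω • 1) = -(ω • 1 - B) from (neg_sub _ _).symm]
    rw [Matrix.det_neg, Fintype.card_fin]
  simp_rw [hdet]
  rw [Finset.prod_mul_distrib, Finset.prod_const, hcard]
  rw [finset_multiset_swap]
  have hroot : ∀ ξ : ℂ, ∏ ω ∈ nthRootsFinset n (1 : ℂ), (ω - ξ) = (-1 : ℂ) ^ n * (ξ ^ n - 1) := by
    intro ξ
    have := congrArg (Polynomial.eval ξ) hfac
    rw [Polynomial.eval_prod] at this
    simp only [Polynomial.eval_sub, Polynomial.eval_pow, Polynomial.eval_X, Polynomial.eval_C,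
      Polynomial.eval_one] at this
    calc ∏ ω ∈ nthRootsFinset n (1 : ℂ), (ω - ξ) = ∏ ω ∈ nthRootsFinset n (1 : ℂ), (-1 : ℂ) * (ξ - ω) := by
          apply Finset.prod_congr rfl; intro ω _; ring
      _ = (-1 : ℂ) ^ n * (ξ ^ n - 1) := by
          rw [Finset.prod_mul_distrib, Finset.prod_const, hcard, ← this]
  simp_rw [hroot]
  have hcardroots : Multiset.card B.charpoly.roots = k := by
    have hsp : B.charpoly.Splits := IsAlgClosed.splits _
    rw [(Polynomial.splits_iff_card_roots).mp hsp, Matrix.charpoly_natDegree_eq_dim,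
      Fintype.card_fin]
  have hmm : (B.charpoly.roots.map fun ξ => (-1 : ℂ) ^ n * (ξ ^ n - 1)).prod
      = ((-1 : ℂ) ^ n) ^ k * (B.charpoly.roots.map fun ξ => ξ ^ n - 1).prod := by
    rw [show (fun ξ : ℂ => (-1 : ℂ) ^ n * (ξ ^ n - 1))
        = fun ξ : ℂ => ((fun _ => ((-1 : ℂ)) ^ n) ξ) * ((fun ξ : ℂ => ξ ^ n - 1) ξ) from rfl]
    rw [Multiset.prod_map_mul, Multiset.map_const', Multiset.prod_replicate, hcardroots]
  rw [hmm, ← mul_assoc, ← pow_mul, ← pow_mul, mul_comm n k, ← pow_add, ← two_mul, pow_mul]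
  norm_num

lemma padic_factor_pos (p : ℕ) (hp : p.Prime) (sv tv : ℝ) (n : ℕ) :
    0 < padicAbs p n ^ sv * (p : ℝ) ^ (-tv * (padicAbs p n)⁻¹) := by
  have hp1 : (1 : ℝ) < p := by exact_mod_cast hp.one_lt
  have h0 : (0 : ℝ) < padicAbs p n := by
    rw [padicAbs]
    positivity
  positivity

lemma padicAbs_le_one (p : ℕ) (hp : p.Prime) (n : ℕ) : padicAbs p n ≤ 1 := by
  rw [padicAbs, inv_le_one_iff₀]
  right
  have hp1 : (1 : ℝ) ≤ p := by exact_mod_cast hp.one_lt.le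
  exact one_le_pow₀ hp1

lemma padic_factor_le_one (p : ℕ) (hp : p.Prime) (sv tv : ℝ) (hs : 0 ≤ sv) (ht : 0 ≤ tv)
    (n : ℕ) : padicAbs p n ^ sv * (p : ℝ) ^ (-tv * (padicAbs p n)⁻¹) ≤ 1 := by
  have hp1 : (1 : ℝ) ≤ p := by exact_mod_cast hp.one_lt.le
  have h0 : (0 : ℝ) < padicAbs p n := by rw [padicAbs]; positivity
  have h1 : padicAbs p n ^ sv ≤ 1 := Real.rpow_le_one h0.le (padicAbs_le_one p hp n) hs
  have h2 : (p : ℝ) ^ (-tv * (padicAbs p n)⁻¹) ≤ 1 := by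
    apply Real.rpow_le_one_of_one_le_of_nonpos hp1
    exact mul_nonpos_of_nonpos_of_nonneg (by linarith) (by positivity)
  have h3 : 0 ≤ (p : ℝ) ^ (-tv * (padicAbs p n)⁻¹) := by positivity
  calc padicAbs p n ^ sv * (p : ℝ) ^ (-tv * (padicAbs p n)⁻¹) ≤ 1 * 1 :=
        mul_le_mul h1 h2 h3 (by linarith)
    _ = 1 := by ring

lemma exists_good_n (s : Finset ℂ) (hs : ∀ ξ ∈ s, ‖ξ‖ = 1) (δ : ℝ) (hδ : 0 < δ)
    (hδ2 : ∀ ξ ∈ s, 2 * δ ≤ ‖ξ - 1‖) (Q : ℕ) (hQ : 1 ≤ Q) (M : ℕ) :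
    ∃ n : ℕ, M ≤ n ∧ n % Q = 1 % Q ∧ ∀ ξ ∈ s, δ ≤ ‖ξ ^ n - 1‖ := by
  classical
  set u : ℕ → (s → ℂ) := fun m ξ => (ξ : ℂ) ^ (Q * m) with hu
  have hmem : ∀ m, u m ∈ Set.univ.pi (fun _ : s => Metric.closedBall (0 : ℂ) 1) := by
    intro m ξ _
    simp only [Metric.mem_closedBall, dist_zero_right, hu, norm_pow]
    rw [hs ξ ξ.2, one_pow]
  have hcomp : IsCompact (Set.univ.pi fun _ : s => Metric.closedBall (0 : ℂ) 1) :=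
    isCompact_univ_pi fun _ => isCompact_closedBall _ _
  obtain ⟨x, -, φ, hφ, hconv⟩ := hcomp.tendsto_subseq hmem
  have hcauchy : CauchySeq (u ∘ φ) := hconv.cauchySeq
  rw [Metric.cauchySeq_iff'] at hcauchy
  obtain ⟨N, hN⟩ := hcauchy δ hδ
  have hφadd : ∀ a b : ℕ, φ a + b ≤ φ (a + b) := by
    intro a b
    induction b with
    | zero => simp
    | succ b ih =>
      have h1 : φ (a + b) < φ (a + b + 1) := hφ (Nat.lt_succ_self (a + b))
      have h2 : a + (b + 1) = a + b + 1 := by omega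
      rw [h2]
      omega
  set j := N + (M + 1) with hj
  have hjN : N ≤ j := by omega
  have hd := hN j hjN
  have hφle : φ N ≤ φ j := hφ.monotone hjN
  set D := φ j - φ N with hD
  have hDadd : φ N + D = φ j := by omega
  have hDM : M + 1 ≤ D := by
    have h5 : φ N + (M + 1) ≤ φ j := by rw [hj]; exact hφadd N (M + 1)
    omega
  refine ⟨Q * D + 1, ?_, ?_, ?_⟩
  · calc M ≤ D := by omega
      _ ≤ Q * D := Nat.le_mul_of_pos_left D hQ
      _ ≤ Q * D + 1 := by omega
  · rw [add_comm]
    exact Nat.add_mul_mod_self_left 1 Q D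
  · intro ξ hξ
    have habs : ‖ξ‖ = 1 := hs ξ hξ
    have hcoord : dist (u (φ j) ⟨ξ, hξ⟩) (u (φ N) ⟨ξ, hξ⟩) < δ :=
      lt_of_le_of_lt (dist_le_pi_dist (u (φ j)) (u (φ N)) ⟨ξ, hξ⟩) hd
    have hsplit : (ξ : ℂ) ^ (Q * φ j) = ξ ^ (Q * φ N) * ξ ^ (Q * D) := by
      rw [← pow_add]
      congr 1
      rw [← Nat.mul_add, hDadd]
    have hsmall : ‖ξ ^ (Q * D) - 1‖ < δ := by
      have h1 : ‖ξ ^ (Q * D) - 1‖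
          = ‖(ξ : ℂ) ^ (Q * φ N) * (ξ ^ (Q * D) - 1)‖ := by
        rw [norm_mul, norm_pow, habs, one_pow, one_mul]
      rw [h1, mul_sub, mul_one, ← hsplit]
      simpa [hu, Complex.dist_eq] using hcoord
    have key : (ξ : ℂ) ^ (Q * D + 1) - 1 = (ξ - 1) + ξ * (ξ ^ (Q * D) - 1) := by
      ring
    rw [key]
    have h2 : ‖ξ * (ξ ^ (Q * D) - 1)‖ < δ := by
      rw [norm_mul, habs, one_mul]
      exact hsmall
    have h3 := hδ2 ξ hξ
    calc δ = 2 * δ - δ := by ring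
      _ ≤ ‖ξ - 1‖ - ‖ξ * (ξ ^ (Q * D) - 1)‖ := by linarith [h2.le]
      _ ≤ ‖(ξ - 1) + ξ * (ξ ^ (Q * D) - 1)‖ := by
          have := norm_sub_norm_le (ξ - 1 : ℂ) (-(ξ * (ξ ^ (Q * D) - 1)))
          simpa [sub_neg_eq_add] using this

lemma fad_bounds {k : ℕ} (A : Matrix (Fin k) (Fin k) ℤ) (S : Finset ℕ) (c : ℝ)
    (r : ℕ → ℝ) (s t : ℕ → ℕ → ℝ) (b : ℕ → ℝ)
    (hnru : NoRootOfUnityEigenvalue A)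
    (hSprime : ∀ p ∈ S, Nat.Prime p)
    (hc : 0 < c)
    (hrgcd : IsGcdSeq r) (hrpos : ∀ n, 1 ≤ n → 0 < r n)
    (hsgcd : ∀ p ∈ S, IsGcdSeqCoprime (s p) p ∧ ∀ n, 1 ≤ n → 0 ≤ s p n)
    (htgcd : ∀ p ∈ S, IsGcdSeqCoprime (t p) p ∧ ∀ n, 1 ≤ n → 0 ≤ t p n)
    (hform : ∀ n, 1 ≤ n → b n = |((A ^ n - 1).det : ℝ)| * c ^ n * fadFactor S r s t n) :
    0 < expEntropy A c ∧
    ∃ C₀ : ℝ, 0 < C₀ ∧ (∀ n, 1 ≤ n → b n ≤ C₀ * (expEntropy A c) ^ n) ∧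
      ∃ δ : ℝ, 0 < δ ∧ ∀ M : ℕ, ∃ n : ℕ, M ≤ n ∧ 1 ≤ n ∧
        δ * (expEntropy A c) ^ n ≤ b n := by
  classical
  set B : Matrix (Fin k) (Fin k) ℂ := A.map (Int.cast : ℤ → ℂ) with hB
  set roots : Multiset ℂ := B.charpoly.roots with hroots
  set Λ1 : ℝ := (roots.map fun ξ => max 1 (‖ξ‖)).prod with hΛ1def
  have hΛ1 : 1 ≤ Λ1 := multiset_one_le_prod _ _ (fun ξ _ => le_max_left _ _)
  have hEE : expEntropy A c = c * Λ1 := rfl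
  have hΛpos : 0 < c * Λ1 := mul_pos hc (lt_of_lt_of_le one_pos hΛ1)
  -- determinant identity
  have hdetabs : ∀ n, 1 ≤ n → |((A ^ n - 1).det : ℝ)|
      = (roots.map fun ξ => ‖ξ ^ n - 1‖).prod := by
    intro n hn
    have h3 : (A ^ n - 1).map (Int.cast : ℤ → ℂ) = B ^ n - 1 := by
      have h4 : (Int.castRingHom ℂ).mapMatrix (A ^ n - 1)
          = ((Int.castRingHom ℂ).mapMatrix A) ^ n - 1 := by
        rw [map_sub, map_pow, map_one]
      simpa [RingHom.mapMatrix_apply] using h4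
    have h1 : (((A ^ n - 1).det : ℤ) : ℂ) = (B ^ n - 1).det := by
      rw [show (((A ^ n - 1).det : ℤ) : ℂ) = (Int.castRingHom ℂ) (A ^ n - 1).det from rfl,
        RingHom.map_det]
      congr 1
    calc |((A ^ n - 1).det : ℝ)| = ‖(((A ^ n - 1).det : ℤ) : ℂ)‖ :=
          (Complex.norm_intCast _).symm
      _ = ‖(B ^ n - 1).det‖ := by rw [h1]
      _ = (roots.map fun ξ => ‖ξ ^ n - 1‖).prod := by
          rw [det_pow_sub_one B n hn]
          exact (map_multiset_prod (normHom : ℂ →*₀ ℝ) _).trans (by rw [Multiset.map_map]; rfl)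
  -- r bounds
  obtain ⟨dr, hdr1, hdr⟩ := hrgcd
  have hdrne : dr.divisors.Nonempty := Nat.nonempty_divisors.mpr (by omega)
  set rmax := dr.divisors.sup' hdrne r with hrmaxdef
  set rmin := dr.divisors.inf' hdrne r with hrmindef
  have hgcdmem : ∀ n, 1 ≤ n → Nat.gcd n dr ∈ dr.divisors := fun n hn =>
    Nat.mem_divisors.mpr ⟨Nat.gcd_dvd_right _ _, by omega⟩
  have hrle : ∀ n, 1 ≤ n → r n ≤ rmax := by
    intro n hn
    rw [hdr n hn]
    exact Finset.le_sup' r (hgcdmem n hn)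
  have hrge : ∀ n, 1 ≤ n → rmin ≤ r n := by
    intro n hn
    rw [hdr n hn]
    exact Finset.inf'_le r (hgcdmem n hn)
  have hrminpos : 0 < rmin := by
    obtain ⟨j, hj, hjeq⟩ := Finset.exists_mem_eq_inf' hdrne r
    rw [hrmindef, hjeq]
    exact hrpos j (Nat.pos_of_mem_divisors hj)
  have hrmaxpos : 0 < rmax := by
    obtain ⟨j, hj, hjeq⟩ := Finset.exists_mem_eq_sup' hdrne r
    rw [hrmaxdef, hjeq]
    exact hrpos j (Nat.pos_of_mem_divisors hj)
  -- fadFactor bounds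
  have hfadub : ∀ n, 1 ≤ n → fadFactor S r s t n ≤ rmax := by
    intro n hn
    rw [fadFactor]
    have hprod_le : (∏ p ∈ S, (padicAbs p n ^ s p n
        * (p : ℝ) ^ (-(t p n) * (padicAbs p n)⁻¹))) ≤ 1 :=
      Finset.prod_le_one
        (fun p hp => (padic_factor_pos p (hSprime p hp) _ _ n).le)
        (fun p hp => padic_factor_le_one p (hSprime p hp) _ _
          ((hsgcd p hp).2 n hn) ((htgcd p hp).2 n hn) n)
    have hprod_nonneg : 0 ≤ ∏ p ∈ S, (padicAbs p n ^ s p n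
        * (p : ℝ) ^ (-(t p n) * (padicAbs p n)⁻¹)) :=
      Finset.prod_nonneg fun p hp => (padic_factor_pos p (hSprime p hp) _ _ n).le
    calc r n * ∏ p ∈ S, (padicAbs p n ^ s p n
          * (p : ℝ) ^ (-(t p n) * (padicAbs p n)⁻¹)) ≤ rmax * 1 :=
          mul_le_mul (hrle n hn) hprod_le hprod_nonneg hrmaxpos.le
      _ = rmax := mul_one _
  have hfadpos : ∀ n, 1 ≤ n → 0 < fadFactor S r s t n := by
    intro n hn
    exact mul_pos (hrpos n hn)
      (Finset.prod_pos fun p hp => padic_factor_pos p (hSprime p hp) _ _ n)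
  -- upper bound
  set K := Multiset.card roots with hK
  set C₀ := 2 ^ K * rmax with hC₀def
  have hC₀ : 0 < C₀ := by positivity
  have hub : ∀ n, 1 ≤ n → b n ≤ C₀ * (c * Λ1) ^ n := by
    intro n hn
    rw [hform n hn, hdetabs n hn]
    have hdetle : (roots.map fun ξ => ‖ξ ^ n - 1‖).prod ≤ 2 ^ K * Λ1 ^ n := by
      have hle := multiset_prod_le roots (fun ξ => ‖ξ ^ n - 1‖)
        (fun ξ => 2 * max 1 (‖ξ‖) ^ n)
        (fun ξ _ => norm_nonneg _)
        (fun ξ _ => by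
          show ‖ξ ^ n - 1‖ ≤ 2 * max 1 (‖ξ‖) ^ n
          have h1 : ‖ξ ^ n - 1‖ ≤ ‖ξ ^ n‖ + ‖(1 : ℂ)‖ := by
            have := norm_sub_le (ξ ^ n) (1 : ℂ)
            exact this
          have h2 : ‖ξ‖ ≤ max 1 (‖ξ‖) := le_max_right _ _
          have h3 : ‖ξ‖ ^ n ≤ max 1 (‖ξ‖) ^ n :=
            pow_le_pow_left₀ (norm_nonneg _) h2 n
          have h4 : (1 : ℝ) ≤ max 1 (‖ξ‖) ^ n :=
            one_le_pow₀ (le_max_left _ _)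
          rw [norm_pow] at h1
          simp only [norm_one] at h1
          linarith)
      calc (roots.map fun ξ => ‖ξ ^ n - 1‖).prod
          ≤ (roots.map fun ξ => 2 * max 1 (‖ξ‖) ^ n).prod := hle
        _ = 2 ^ K * Λ1 ^ n := by
            rw [show (fun ξ : ℂ => 2 * max 1 (‖ξ‖) ^ n)
              = fun ξ : ℂ => ((fun _ => (2 : ℝ)) ξ)
                * ((fun ξ : ℂ => max 1 (‖ξ‖) ^ n) ξ) from rfl]
            rw [Multiset.prod_map_mul, Multiset.map_const', Multiset.prod_replicate,
              Multiset.prod_map_pow]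
    have hdetnn : 0 ≤ (roots.map fun ξ => ‖ξ ^ n - 1‖).prod :=
      multiset_prod_nonneg _ _ fun ξ _ => norm_nonneg _
    calc (roots.map fun ξ => ‖ξ ^ n - 1‖).prod * c ^ n * fadFactor S r s t n
        ≤ (2 ^ K * Λ1 ^ n) * c ^ n * rmax := by
          apply mul_le_mul _ (hfadub n hn) (hfadpos n hn).le (by positivity)
          exact mul_le_mul hdetle le_rfl (pow_pos hc n).le (by positivity)
      _ = C₀ * (c * Λ1) ^ n := by rw [hC₀def, mul_pow]; ring
  -- unit roots
  set sU : Finset ℂ := roots.toFinset.filter (fun ξ => ‖ξ‖ = 1) with hsUdef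
  have hsU1 : ∀ ξ ∈ sU, ‖ξ‖ = 1 := fun ξ hξ => (Finset.mem_filter.mp hξ).2
  have hsUne1 : ∀ ξ ∈ sU, ξ ≠ 1 := by
    intro ξ hξ h1
    have hmem : ξ ∈ roots := Multiset.mem_toFinset.mp (Finset.mem_filter.mp hξ).1
    have hroot : B.charpoly.IsRoot ξ := (Polynomial.mem_roots'.mp hmem).2
    exact hnru ξ hroot 1 le_rfl (by rw [pow_one, h1])
  set δ : ℝ := if h : sU.Nonempty then sU.inf' h (fun ξ => ‖ξ - 1‖ / 4) else 1
    with hδdef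
  have hδpos : 0 < δ := by
    rw [hδdef]
    split_ifs with h
    · obtain ⟨j, hj, hjeq⟩ := Finset.exists_mem_eq_inf' h (fun ξ => ‖ξ - 1‖ / 4)
      rw [hjeq]
      have hne : j - 1 ≠ 0 := sub_ne_zero.mpr (hsUne1 j hj)
      have : (0 : ℝ) < ‖j - 1‖ := norm_pos_iff.mpr hne
      linarith
    · norm_num
  have hδ2 : ∀ ξ ∈ sU, 2 * δ ≤ ‖ξ - 1‖ := by
    intro ξ hξ
    have h : sU.Nonempty := ⟨ξ, hξ⟩
    rw [hδdef, dif_pos h]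
    have h1 := Finset.inf'_le (fun ξ => ‖ξ - 1‖ / 4) hξ
    have hne : ξ - 1 ≠ 0 := sub_ne_zero.mpr (hsUne1 ξ hξ)
    have h2 : (0 : ℝ) < ‖ξ - 1‖ := norm_pos_iff.mpr hne
    linarith
  -- N_big
  obtain ⟨Nbig, hNbig⟩ : ∃ N : ℕ, ∀ n, N ≤ n → ∀ ξ ∈ roots.toFinset,
      1 < ‖ξ‖ → 2 ≤ ‖ξ‖ ^ n := by
    have hev : ∀ᶠ n : ℕ in atTop, ∀ ξ ∈ (↑(roots.toFinset.filter
        fun ξ => 1 < ‖ξ‖) : Set ℂ), 2 ≤ ‖ξ‖ ^ n := by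
      rw [eventually_all_finite (roots.toFinset.filter
        fun ξ => 1 < ‖ξ‖).finite_toSet]
      intro ξ hξ
      have h1 : 1 < ‖ξ‖ := (Finset.mem_filter.mp hξ).2
      exact (tendsto_pow_atTop_atTop_of_one_lt h1).eventually_ge_atTop 2
    obtain ⟨N, hN⟩ := eventually_atTop.mp hev
    refine ⟨N, fun n hn ξ hξ h1 => hN n hn ξ ?_⟩
    exact Finset.mem_coe.mpr (Finset.mem_filter.mpr ⟨hξ, h1⟩)
  -- lower-bound factors
  set lb : ℂ → ℝ := fun ξ => if 1 < ‖ξ‖ then 1 / 2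
    else if ‖ξ‖ = 1 then δ else 1 - ‖ξ‖ with hlbdef
  have hlbpos : ∀ ξ ∈ roots, 0 < lb ξ := by
    intro ξ _
    simp only [hlbdef]
    split_ifs with h1 h2
    · norm_num
    · exact hδpos
    · have : ‖ξ‖ < 1 := lt_of_le_of_ne (not_lt.mp h1) h2
      linarith
  set δ0 : ℝ := (roots.map lb).prod with hδ0def
  have hδ0 : 0 < δ0 := multiset_prod_pos _ _ hlbpos
  -- p-adic lower bound
  have hpfac : ∀ p ∈ S, ∃ ε : ℝ, 0 < ε ∧ ∀ n, 1 ≤ n → ¬ (p ∣ n) →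
      ε ≤ padicAbs p n ^ s p n * (p : ℝ) ^ (-(t p n) * (padicAbs p n)⁻¹) := by
    intro p hp
    have hpprime := hSprime p hp
    have hp1 : (1 : ℝ) ≤ p := by exact_mod_cast hpprime.one_lt.le
    obtain ⟨dp, hdp1, _, hdp⟩ := (htgcd p hp).1
    have hdpne : dp.divisors.Nonempty := Nat.nonempty_divisors.mpr (by omega)
    refine ⟨(p : ℝ) ^ (-(dp.divisors.sup' hdpne (t p))), ?_, ?_⟩
    · apply Real.rpow_pos_of_pos
      linarith
    · intro n hn hnd
      have hv : padicValNat p n = 0 := padicValNat.eq_zero_of_not_dvd hnd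
      have hpa : padicAbs p n = 1 := by rw [padicAbs, hv, pow_zero, inv_one]
      rw [hpa, Real.one_rpow, inv_one, mul_one, one_mul]
      apply Real.rpow_le_rpow_of_exponent_le hp1
      apply neg_le_neg
      rw [hdp n hn]
      exact Finset.le_sup' (t p)
        (Nat.mem_divisors.mpr ⟨Nat.gcd_dvd_right _ _, by omega⟩)
  choose! g hg1 hg2 using hpfac
  set ε1 : ℝ := ∏ p ∈ S, g p with hε1def
  have hε1 : 0 < ε1 := Finset.prod_pos fun p hp => hg1 p hp
  have hfadlb : ∀ n, 1 ≤ n → (∀ p ∈ S, ¬ p ∣ n) → rmin * ε1 ≤ fadFactor S r s t n := by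
    intro n hn hcop
    rw [fadFactor]
    exact mul_le_mul (hrge n hn)
      (Finset.prod_le_prod (fun p hp => (hg1 p hp).le)
        (fun p hp => hg2 p hp n hn (hcop p hp)))
      hε1.le (lt_of_lt_of_le hrminpos (hrge n hn)).le
  -- coprimality from mod condition
  set Qn : ℕ := ∏ p ∈ S, p with hQndef
  have hQn1 : 1 ≤ Qn := Finset.prod_pos fun p hp => (hSprime p hp).pos
  have hcopof : ∀ n, n % Qn = 1 % Qn → ∀ p ∈ S, ¬ p ∣ n := by
    intro n hmod p hp hdvd
    have hpprime := hSprime p hp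
    have hpd : p ∣ Qn := Finset.dvd_prod_of_mem _ hp
    have h2 : n % p = 1 % p := Nat.ModEq.of_dvd hpd hmod
    have h3 : n % p = 0 := Nat.mod_eq_zero_of_dvd hdvd
    have h4 : 1 % p = 1 := Nat.mod_eq_of_lt hpprime.one_lt
    omega
  -- conclusion
  refine ⟨by rw [hEE]; exact hΛpos, C₀, hC₀, fun n hn => by rw [hEE]; exact hub n hn,
    δ0 * (rmin * ε1), by positivity, ?_⟩
  intro M
  obtain ⟨n, hnM, hnmod, hnunit⟩ :=
    exists_good_n sU hsU1 δ hδpos hδ2 Qn hQn1 (max M (max Nbig 1))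
  have hn1 : 1 ≤ n := le_trans (le_trans (le_max_right _ _) (le_max_right M _)) hnM
  have hnNbig : Nbig ≤ n := le_trans (le_trans (le_max_left _ _) (le_max_right M _)) hnM
  refine ⟨n, le_trans (le_max_left _ _) hnM, hn1, ?_⟩
  rw [hEE, hform n hn1, hdetabs n hn1]
  have hptnn : ∀ ξ ∈ roots, 0 ≤ lb ξ * max 1 (‖ξ‖) ^ n := by
    intro ξ hξ
    have := hlbpos ξ hξ
    positivity
  have hptwise : ∀ ξ ∈ roots,
      lb ξ * max 1 (‖ξ‖) ^ n ≤ ‖ξ ^ n - 1‖ := by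
    intro ξ hξ
    by_cases h1 : 1 < ‖ξ‖
    · have hmax : max 1 (‖ξ‖) = ‖ξ‖ := max_eq_right h1.le
      have h2 : 2 ≤ ‖ξ‖ ^ n := hNbig n hnNbig ξ (Multiset.mem_toFinset.mpr hξ) h1
      have h3 : ‖ξ‖ ^ n - 1 ≤ ‖ξ ^ n - 1‖ := by
        have := norm_sub_norm_le (ξ ^ n) (1 : ℂ)
        simpa [norm_pow] using this
      simp only [hlbdef, if_pos h1]
      rw [hmax]
      linarith
    · by_cases h2 : ‖ξ‖ = 1
      · have hmem : ξ ∈ sU :=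
          Finset.mem_filter.mpr ⟨Multiset.mem_toFinset.mpr hξ, h2⟩
        have h3 := hnunit ξ hmem
        simp only [hlbdef, if_neg h1, if_pos h2]
        rw [h2, max_self, one_pow, mul_one]
        exact h3
      · have hlt : ‖ξ‖ < 1 := lt_of_le_of_ne (not_lt.mp h1) h2
        have hmax : max 1 (‖ξ‖) = 1 := max_eq_left hlt.le
        have h3 : 1 - ‖ξ‖ ^ n ≤ ‖ξ ^ n - 1‖ := by
          have h5 := norm_sub_norm_le (1 : ℂ) (ξ ^ n)
          have h6 : ‖1 - ξ ^ n‖ = ‖ξ ^ n - 1‖ :=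
            norm_sub_rev _ _
          simp only [norm_one, norm_pow] at h5
          linarith [h5, le_of_eq h6]
        have h4 : ‖ξ‖ ^ n ≤ ‖ξ‖ :=
          pow_le_of_le_one (norm_nonneg _) hlt.le (by omega)
        simp only [hlbdef, if_neg h1, if_neg h2]
        rw [hmax, one_pow, mul_one]
        linarith
  have hdetge : δ0 * Λ1 ^ n ≤ (roots.map fun ξ => ‖ξ ^ n - 1‖).prod := by
    have hle := multiset_prod_le roots (fun ξ => lb ξ * max 1 (‖ξ‖) ^ n)
      (fun ξ => ‖ξ ^ n - 1‖) hptnn hptwise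
    calc δ0 * Λ1 ^ n
        = (roots.map fun ξ => lb ξ * max 1 (‖ξ‖) ^ n).prod := by
          rw [show (fun ξ : ℂ => lb ξ * max 1 (‖ξ‖) ^ n)
            = fun ξ : ℂ => lb ξ * ((fun ξ : ℂ => max 1 (‖ξ‖) ^ n) ξ) from rfl,
            Multiset.prod_map_mul, Multiset.prod_map_pow]
      _ ≤ _ := hle
  have hdetnn : 0 ≤ (roots.map fun ξ => ‖ξ ^ n - 1‖).prod :=
    multiset_prod_nonneg _ _ fun ξ _ => norm_nonneg _
  have hfadge := hfadlb n hn1 (hcopof n hnmod)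
  calc δ0 * (rmin * ε1) * (c * Λ1) ^ n
      = (δ0 * Λ1 ^ n) * c ^ n * (rmin * ε1) := by rw [mul_pow]; ring
    _ ≤ (roots.map fun ξ => ‖ξ ^ n - 1‖).prod * c ^ n * fadFactor S r s t n := by
        apply mul_le_mul _ hfadge (by positivity) (by positivity)
        exact mul_le_mul hdetge le_rfl (pow_pos hc n).le hdetnn


end FadZeta

set_option maxHeartbeats 1000000 in
/-- the radius of convergence of the dynamical zeta function of a
FAD-system equals `1/Λ`: the series converges absolutely on `|z| < 1/Λ` and is not
summable for `|z| > 1/Λ`. -/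
theorem fad_zeta_radius {X : Type*} (f : X → X)
    (hfin : ∀ n : ℕ, 1 ≤ n → (Function.fixedPoints (f^[n])).Finite)
    {k : ℕ} (A : Matrix (Fin k) (Fin k) ℤ) (S : Finset ℕ) (c : ℝ)
    (r : ℕ → ℝ) (s t : ℕ → ℕ → ℝ)
    (hFAD : IsFADWith (fixCount f) A S c r s t) :
    (∀ z : ℂ, ‖z‖ < (expEntropy A c)⁻¹ →
      Summable fun n : ℕ =>
        ‖zetaCoeff (fun m => (fixCount f m : ℂ)) n‖ * ‖z‖ ^ n) ∧
    (∀ z : ℂ, (expEntropy A c)⁻¹ < ‖z‖ →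
      ¬ Summable fun n : ℕ =>
        ‖zetaCoeff (fun m => (fixCount f m : ℂ)) n‖ * ‖z‖ ^ n) := by
  classical
  obtain ⟨hnru, hSprime, hc, hrgcd, hrpos, hsgcd, htgcd, hformula⟩ := hFAD
  set b : ℕ → ℝ := fun m => ((fixCount f m : ℤ) : ℝ) with hbdef
  have hb0 : ∀ m, 1 ≤ m → 0 ≤ b m := by
    intro m _
    simp only [hbdef, fixCount]
    push_cast
    exact Nat.cast_nonneg _
  obtain ⟨hΛpos, C₀, hC₀, hub, δ, hδ, hlow⟩ :=
    FadZeta.fad_bounds A S c r s t b hnru hSprime hc hrgcd hrpos hsgcd htgcd hformula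
  set Λ : ℝ := expEntropy A c with hΛdef
  have hcast : (fun m => ((fixCount f m : ℂ))) = fun m => ((b m : ℝ) : ℂ) := by
    funext m
    simp [hbdef]
  have habs : ∀ n, ‖zetaCoeff (fun m => (fixCount f m : ℂ)) n‖
      = FadZeta.zr b n := by
    intro n
    rw [hcast, FadZeta.zetaCoeff_eq_zr, Complex.norm_real, Real.norm_eq_abs,
      abs_of_nonneg (FadZeta.zr_nonneg b hb0 n)]
  constructor
  · intro z hz
    have hx : Λ * ‖z‖ < 1 := by
      have h := mul_lt_mul_of_pos_left hz hΛpos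
      rwa [mul_inv_cancel₀ hΛpos.ne'] at h
    have hx0 : 0 ≤ Λ * ‖z‖ := by positivity
    set x : ℝ := Λ * ‖z‖ with hxdef
    have hmaj : Summable (fun n => FadZeta.Qprod C₀ n * x ^ n) := by
      rcases eq_or_lt_of_le hx0 with h0 | h0
    
      · apply summable_of_ne_finset_zero (s := ({0} : Finset ℕ))
        intro n hn
        have hn0 : n ≠ 0 := by simpa using hn
        rw [← h0, zero_pow hn0, mul_zero]
      · apply summable_of_ratio_test_tendsto_lt_one hx ?_ ?_
        · filter_upwards with n
          have h1 := FadZeta.one_le_Qprod hC₀.le n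
          have h2 : (0:ℝ) < x ^ n := pow_pos h0 n
          positivity
        · have hfn : ∀ n : ℕ,
              ‖FadZeta.Qprod C₀ (n + 1) * x ^ (n + 1)‖ / ‖FadZeta.Qprod C₀ n * x ^ n‖
              = (1 + C₀ / ((n : ℝ) + 1)) * x := by
            intro n
            have hq : (1:ℝ) ≤ FadZeta.Qprod C₀ n := FadZeta.one_le_Qprod hC₀.le n
            have hq1 : (1:ℝ) ≤ FadZeta.Qprod C₀ (n + 1) := FadZeta.one_le_Qprod hC₀.le (n + 1)
            have hxp : (0:ℝ) < x ^ n := pow_pos h0 n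
            have hxp1 : (0:ℝ) < x ^ (n + 1) := pow_pos h0 (n + 1)
            rw [Real.norm_eq_abs, Real.norm_eq_abs, abs_of_pos (by positivity),
              abs_of_pos (by positivity),
              show FadZeta.Qprod C₀ (n + 1) = FadZeta.Qprod C₀ n * (1 + C₀ / ((n : ℝ) + 1))
                from Finset.prod_range_succ _ n, pow_succ]
            have hqne : FadZeta.Qprod C₀ n ≠ 0 := by linarith
            have hxne : x ^ n ≠ 0 := hxp.ne'
            field_simp
          rw [show (fun n : ℕ =>
              ‖FadZeta.Qprod C₀ (n + 1) * x ^ (n + 1)‖ / ‖FadZeta.Qprod C₀ n * x ^ n‖)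
            = fun n : ℕ => (1 + C₀ / ((n : ℝ) + 1)) * x from funext hfn]
          have h2 : Filter.Tendsto (fun n : ℕ => C₀ / ((n : ℝ) + 1)) Filter.atTop (nhds 0) :=
            Filter.Tendsto.const_div_atTop
              (tendsto_atTop_add_const_right _ 1 tendsto_natCast_atTop_atTop) C₀
          have h1c : Filter.Tendsto (fun _ : ℕ => (1 : ℝ)) Filter.atTop (nhds 1) :=
            tendsto_const_nhds
          have h3 := (h1c.add h2).mul_const x
          simpa using h3
    apply Summable.of_nonneg_of_le ?_ ?_ hmaj
    · intro n
      rw [habs n]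
      exact mul_nonneg (FadZeta.zr_nonneg b hb0 n)
        (pow_nonneg (norm_nonneg _) n)
    · intro n
      rw [habs n]
      calc FadZeta.zr b n * ‖z‖ ^ n
          ≤ (Λ ^ n * FadZeta.Qprod C₀ n) * ‖z‖ ^ n :=
            mul_le_mul_of_nonneg_right (FadZeta.zr_le' b hb0 hC₀.le hΛpos hub n)
              (by positivity)
        _ = FadZeta.Qprod C₀ n * x ^ n := by rw [hxdef, mul_pow]; ring
  · intro z hz hsum
    have hx : 1 < Λ * ‖z‖ := by
      have h := mul_lt_mul_of_pos_left hz hΛpos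
      rwa [mul_inv_cancel₀ hΛpos.ne'] at h
    set x : ℝ := Λ * ‖z‖ with hxdef
    have hxpos : (0:ℝ) < x := by linarith
    have htend := hsum.tendsto_atTop_zero
    have hev1 : ∀ᶠ n : ℕ in Filter.atTop,
        ‖zetaCoeff (fun m => (fixCount f m : ℂ)) n‖ * ‖z‖ ^ n < 1 :=
      htend.eventually_lt_const one_pos
    have hev2 : ∀ᶠ n : ℕ in Filter.atTop, (n : ℝ) ^ 1 / x ^ n < δ :=
      (tendsto_pow_const_div_const_pow_of_one_lt 1 hx).eventually_lt_const hδ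
    obtain ⟨N1, hN1⟩ := Filter.eventually_atTop.mp hev1
    obtain ⟨N2, hN2⟩ := Filter.eventually_atTop.mp hev2
    obtain ⟨n, hnM, hn1, hnlow⟩ := hlow (max N1 N2)
    have hN1n : N1 ≤ n := le_trans (le_max_left _ _) hnM
    have hN2n : N2 ≤ n := le_trans (le_max_right _ _) hnM
    have hlt := hN1 n hN1n
    have hnpos : (0:ℝ) < (n : ℝ) := by exact_mod_cast hn1
    have hzn : (0:ℝ) ≤ ‖z‖ ^ n := pow_nonneg (norm_nonneg _) n
    have step2 : δ * x ^ n / n ≤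
        ‖zetaCoeff (fun m => (fixCount f m : ℂ)) n‖ * ‖z‖ ^ n := by
      rw [habs n]
      calc δ * x ^ n / n = (δ * Λ ^ n / n) * ‖z‖ ^ n := by
            rw [hxdef, mul_pow]; ring
        _ ≤ (b n / n) * ‖z‖ ^ n := by
            apply mul_le_mul_of_nonneg_right _ hzn
            gcongr
        _ ≤ FadZeta.zr b n * ‖z‖ ^ n :=
            mul_le_mul_of_nonneg_right (FadZeta.zr_ge b hb0 n hn1) hzn
    have step3 : 1 < δ * x ^ n / n := by
      have h6 := hN2 n hN2n
      rw [pow_one] at h6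
      have hxn : (0:ℝ) < x ^ n := pow_pos hxpos n
      rw [div_lt_iff₀ hxn] at h6
      rw [lt_div_iff₀ hnpos]
      linarith
    linarith
end
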